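/- arXiv:1007.3517 — 8 statements merged into one kernel-verified Lean document; each statement's English description precedes it below -/
import Mathlib

section
/- For every field k and every n ≥ 1, choose for each permutation w ∈ S_n a reduced word w' of w. Then the set {σ_{w'} : w ∈ S_n} is a basis of the algebra H_n^- as a k-vector space; in particular dim_k H_n^- = n!. -/
/-!
STATEMENT 0. Let `k` be a field and `n ≥ 1`; we write `n = m + 1`.  The
Lipshitz–Ozsváth–Thurston algebra `H_n^-` is the unital associative `k`-algebra with
generators `σ_1, …, σ_{n-1}` (indexed here by `Fin m`) and relations
`σ_i² = 0`, `σ_i σ_j + σ_j σ_i = 0` for `|i - j| > 1`, and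
`σ_i σ_{i+1} σ_i = σ_{i+1} σ_i σ_{i+1}`.  For every choice of a reduced word `c w`
for each permutation `w ∈ S_n`, the family `w ↦ σ_{c w}` is a basis of `H_n^-` as a
`k`-vector space; in particular `dim_k H_n^- = n!`.
-/

/-- The defining relations of the Lipshitz–Ozsváth–Thurston algebra `H_{m+1}^-`. -/
inductive LOTRel (k : Type) [Field k] (m : ℕ) :
    FreeAlgebra k (Fin m) → FreeAlgebra k (Fin m) → Prop
  | sq (i : Fin m) :
      LOTRel k m (FreeAlgebra.ι k i * FreeAlgebra.ι k i) 0
  | anticomm (i j : Fin m) (h : (i : ℕ) + 1 < j ∨ (j : ℕ) + 1 < i) :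
      LOTRel k m (FreeAlgebra.ι k i * FreeAlgebra.ι k j + FreeAlgebra.ι k j * FreeAlgebra.ι k i) 0
  | braid (i j : Fin m) (h : (j : ℕ) = (i : ℕ) + 1) :
      LOTRel k m (FreeAlgebra.ι k i * FreeAlgebra.ι k j * FreeAlgebra.ι k i)
                 (FreeAlgebra.ι k j * FreeAlgebra.ι k i * FreeAlgebra.ι k j)

/-- The Lipshitz–Ozsváth–Thurston algebra `H_{m+1}^-`. -/
abbrev LOT (k : Type) [Field k] (m : ℕ) := RingQuot (LOTRel k m)

/-- The generator `σ_i` of `H_{m+1}^-`. -/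
noncomputable def lotSigma (k : Type) [Field k] (m : ℕ) (i : Fin m) : LOT k m :=
  RingQuot.mkAlgHom k (LOTRel k m) (FreeAlgebra.ι k i)

/-- `σ_{w'} = σ_{i_1} ⋯ σ_{i_r}` for a word `w' = (i_1, …, i_r)`. -/
noncomputable def sigmaWord (k : Type) [Field k] (m : ℕ) (l : List (Fin m)) : LOT k m :=
  (l.map (lotSigma k m)).prod

/-- The simple transposition `s_i = (i, i+1) ∈ S_{m+1}`. -/
def sTrans (m : ℕ) (i : Fin m) : Equiv.Perm (Fin (m + 1)) :=
  Equiv.swap i.castSucc i.succ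

/-- The permutation `s_{i_1} ⋯ s_{i_r}` associated to a word `(i_1, …, i_r)`. -/
def permOfWord (m : ℕ) (l : List (Fin m)) : Equiv.Perm (Fin (m + 1)) :=
  (l.map (sTrans m)).prod

/-- `l` is a reduced word of `w`: its product is `w` and it has minimal length. -/
def IsReducedWord (m : ℕ) (w : Equiv.Perm (Fin (m + 1))) (l : List (Fin m)) : Prop :=
  permOfWord m l = w ∧ ∀ l' : List (Fin m), permOfWord m l' = w → l.length ≤ l'.length

namespace LOTaux
open Finset

variable {n : ℕ}

/-- number of `a` with `a < t` and `q a > x`. -/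
def cntv (q : Equiv.Perm (Fin n)) (t : ℕ) (x : Fin n) : ℕ :=
  (Finset.univ.filter (fun a : Fin n => (a : ℕ) < t ∧ x < q a)).card

def cnt (q : Equiv.Perm (Fin n)) (b : Fin n) : ℕ := cntv q (b : ℕ) (q b)

def Ii (q : Equiv.Perm (Fin n)) (t : ℕ) : ℕ :=
  ∑ b ∈ Finset.univ.filter (fun b : Fin n => (b : ℕ) < t), cnt q b

def linv (q : Equiv.Perm (Fin n)) : ℕ := ∑ b, cnt q b

lemma cntv_mul_fix {q τ : Equiv.Perm (Fin n)} {t : ℕ}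
    (h : ∀ a : Fin n, (a : ℕ) < t → τ a = a) (x : Fin n) :
    cntv (q * τ) t x = cntv q t x := by
  unfold cntv
  congr 1
  apply Finset.filter_congr
  intro a _
  by_cases ha : (a : ℕ) < t
  · simp [ha, Equiv.Perm.mul_apply, h a ha]
  · simp [ha]

lemma swap_val_lt {u v a : Fin n} {t : ℕ} (hu : (u : ℕ) < t) (hv : (v : ℕ) < t)
    (ha : (a : ℕ) < t) : ((Equiv.swap u v a : Fin n) : ℕ) < t := by
  rcases eq_or_ne a u with rfl | h1
  · rwa [Equiv.swap_apply_left]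
  rcases eq_or_ne a v with rfl | h2
  · rwa [Equiv.swap_apply_right]
  · rwa [Equiv.swap_apply_of_ne_of_ne h1 h2]

lemma cntv_mul_swap {q : Equiv.Perm (Fin n)} {t : ℕ} {u v : Fin n}
    (hu : (u : ℕ) < t) (hv : (v : ℕ) < t) (x : Fin n) :
    cntv (q * Equiv.swap u v) t x = cntv q t x := by
  unfold cntv
  apply Finset.card_bij' (fun a _ => Equiv.swap u v a) (fun a _ => Equiv.swap u v a)
  · intro a ha
    have ha' := (Finset.mem_filter.1 ha).2
    exact Finset.mem_filter.2 ⟨Finset.mem_univ _, swap_val_lt hu hv ha'.1, ha'.2⟩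
  · intro a ha
    have ha' := (Finset.mem_filter.1 ha).2
    exact Finset.mem_filter.2 ⟨Finset.mem_univ _, swap_val_lt hu hv ha'.1,
      by simpa [Equiv.Perm.mul_apply, Equiv.swap_apply_self] using ha'.2⟩
  · intro a _; exact Equiv.swap_apply_self _ _ _
  · intro a _; exact Equiv.swap_apply_self _ _ _

lemma cnt_mul_fix {q τ : Equiv.Perm (Fin n)} {b : Fin n}
    (h : ∀ a : Fin n, (a : ℕ) ≤ (b : ℕ) → τ a = a) :
    cnt (q * τ) b = cnt q b := by
  unfold cnt
  rw [show (q * τ) b = q b by rw [Equiv.Perm.mul_apply, h b le_rfl]]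
  exact cntv_mul_fix (fun a ha => h a ha.le) _

lemma cnt_mul_swap {q : Equiv.Perm (Fin n)} {u v b : Fin n}
    (hu : (u : ℕ) < (b : ℕ)) (hv : (v : ℕ) < (b : ℕ)) :
    cnt (q * Equiv.swap u v) b = cnt q b := by
  unfold cnt
  rw [show (q * Equiv.swap u v) b = q b by
    rw [Equiv.Perm.mul_apply, Equiv.swap_apply_of_ne_of_ne
      (Fin.ne_of_val_ne hu.ne') (Fin.ne_of_val_ne hv.ne')]]
  exact cntv_mul_swap hu hv _

lemma cntv_val_succ (q : Equiv.Perm (Fin n)) (b : Fin n) (x : Fin n) :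
    cntv q ((b : ℕ) + 1) x = cntv q (b : ℕ) x + (if x < q b then 1 else 0) := by
  unfold cntv
  have hsplit : (Finset.univ.filter fun a : Fin n => (a : ℕ) < (b : ℕ) + 1 ∧ x < q a)
      = (Finset.univ.filter fun a : Fin n => (a : ℕ) < (b : ℕ) ∧ x < q a)
        ∪ (Finset.univ.filter fun a : Fin n => a = b ∧ x < q a) := by
    ext a
    simp only [Finset.mem_filter, Finset.mem_union, Finset.mem_univ, true_and]
    constructor
    · rintro ⟨h1, h2⟩
      rcases Nat.lt_or_ge (a : ℕ) (b : ℕ) with h | h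
      · exact Or.inl ⟨h, h2⟩
      · exact Or.inr ⟨Fin.ext (by omega), h2⟩
    · rintro (⟨h1, h2⟩ | ⟨rfl, h2⟩)
      · exact ⟨by omega, h2⟩
      · exact ⟨by omega, h2⟩
  rw [hsplit, Finset.card_union_of_disjoint]
  · congr 1
    by_cases h : x < q b
    · rw [if_pos h]
      rw [show (Finset.univ.filter fun a : Fin n => a = b ∧ x < q a) = {b} by
        ext a; simp only [Finset.mem_filter, Finset.mem_univ, true_and, Finset.mem_singleton]
        constructor
        · rintro ⟨rfl, _⟩; rfl
        · rintro rfl; exact ⟨rfl, h⟩]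
      simp
    · rw [if_neg h]
      rw [show (Finset.univ.filter fun a : Fin n => a = b ∧ x < q a) = ∅ by
        ext a; simp only [Finset.mem_filter, Finset.mem_univ, true_and, Finset.notMem_empty,
          iff_false, not_and]
        rintro rfl; exact h]
      simp
  · rw [Finset.disjoint_left]
    intro a ha hb
    simp only [Finset.mem_filter, Finset.mem_univ, true_and] at ha hb
    obtain ⟨rfl, _⟩ := hb
    omega

lemma Ii_mul_fix {q τ : Equiv.Perm (Fin n)} {t : ℕ}
    (h : ∀ a : Fin n, (a : ℕ) < t → τ a = a) : Ii (q * τ) t = Ii q t := by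
  apply Finset.sum_congr rfl
  intro b hb
  have hbt := (Finset.mem_filter.1 hb).2
  exact cnt_mul_fix (fun a ha => h a (lt_of_le_of_lt (by omega) hbt))

lemma Ii_val_succ (q : Equiv.Perm (Fin n)) (b : Fin n) :
    Ii q ((b : ℕ) + 1) = Ii q (b : ℕ) + cnt q b := by
  unfold Ii
  have hsplit : (Finset.univ.filter fun a : Fin n => (a : ℕ) < (b : ℕ) + 1)
      = insert b (Finset.univ.filter fun a : Fin n => (a : ℕ) < (b : ℕ)) := by
    ext a
    simp only [Finset.mem_filter, Finset.mem_insert, Finset.mem_univ, true_and]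
    constructor
    · intro h
      rcases Nat.lt_or_ge (a : ℕ) (b : ℕ) with h' | h'
      · exact Or.inr h'
      · exact Or.inl (Fin.ext (by omega))
    · rintro (rfl | h) <;> omega
  rw [hsplit, Finset.sum_insert (by simp)]
  omega

lemma sum_split_two {α : Type*} [DecidableEq α] {s : Finset α} {f g : α → ℕ} {x y : α} {d : ℕ}
    (hx : x ∈ s) (hy : y ∈ s) (hxy : x ≠ y)
    (hoff : ∀ z ∈ s, z ≠ x → z ≠ y → f z = g z)
    (hpair : f x + f y = g x + g y + d) :
    ∑ z ∈ s, f z = (∑ z ∈ s, g z) + d := by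
  have hy' : y ∈ s.erase x := Finset.mem_erase.2 ⟨hxy.symm, hy⟩
  have hsum : ∀ h : α → ℕ, ∑ z ∈ s, h z = h x + (h y + ∑ z ∈ (s.erase x).erase y, h z) := by
    intro h
    rw [← Finset.add_sum_erase _ h hx, ← Finset.add_sum_erase _ h hy']
  have hcongr : ∑ z ∈ (s.erase x).erase y, f z = ∑ z ∈ (s.erase x).erase y, g z := by
    apply Finset.sum_congr rfl
    intro z hz
    have hz1 := Finset.mem_erase.1 hz
    have hz2 := Finset.mem_erase.1 hz1.2
    exact hoff z hz2.2 hz2.1 hz1.1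
  rw [hsum f, hsum g, hcongr]
  omega

end LOTaux
namespace LOTaux
open Finset

variable {m : ℕ}

lemma sTrans_cs (i : Fin m) : sTrans m i i.castSucc = i.succ := Equiv.swap_apply_left _ _
lemma sTrans_s (i : Fin m) : sTrans m i i.succ = i.castSucc := Equiv.swap_apply_right _ _

lemma sTrans_fix {i : Fin m} {a : Fin (m + 1)} (h1 : (a : ℕ) ≠ (i : ℕ))
    (h2 : (a : ℕ) ≠ (i : ℕ) + 1) : sTrans m i a = a :=
  Equiv.swap_apply_of_ne_of_ne (Fin.ne_of_val_ne (by simpa using h1))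
    (Fin.ne_of_val_ne (by simpa using h2))

lemma sTrans_mul_self (i : Fin m) : sTrans m i * sTrans m i = 1 := Equiv.swap_mul_self _ _

lemma cs_ne_s (i : Fin m) : i.castSucc ≠ i.succ := by
  simp [Fin.ext_iff]

lemma cnt_cs (q : Equiv.Perm (Fin (m + 1))) (i : Fin m) :
    cnt q i.castSucc = cntv q (i : ℕ) (q i.castSucc) := by
  simp [cnt]

lemma cnt_s (q : Equiv.Perm (Fin (m + 1))) (i : Fin m) :
    cnt q i.succ = cntv q (i : ℕ) (q i.succ) + (if q i.succ < q i.castSucc then 1 else 0) := by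
  have h := cntv_val_succ q i.castSucc (q i.succ)
  simp only [Fin.coe_castSucc] at h
  rw [cnt, Fin.val_succ, h]

lemma cntv_mul_sTrans_fix {q : Equiv.Perm (Fin (m + 1))} {i : Fin m} (x : Fin (m + 1)) :
    cntv (q * sTrans m i) (i : ℕ) x = cntv q (i : ℕ) x :=
  cntv_mul_fix (fun a ha => sTrans_fix (by omega) (by omega)) x

lemma linv_mul_sTrans {q : Equiv.Perm (Fin (m + 1))} {i : Fin m}
    (h : q i.castSucc < q i.succ) :
    linv (q * sTrans m i) = linv q + 1 := by
  unfold linv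
  apply sum_split_two (Finset.mem_univ i.castSucc) (Finset.mem_univ i.succ) (cs_ne_s i)
  · intro z _ hz0 hz1
    have hz0' : (z : ℕ) ≠ (i : ℕ) := fun hh => hz0 (Fin.ext (by simpa using hh))
    have hz1' : (z : ℕ) ≠ (i : ℕ) + 1 := fun hh => hz1 (Fin.ext (by simpa using hh))
    rcases Nat.lt_or_ge (z : ℕ) (i : ℕ) with hlt | hge
    · exact cnt_mul_fix (fun a ha => sTrans_fix (by omega) (by omega))
    · have : (i : ℕ) + 1 < (z : ℕ) := by omega
      exact cnt_mul_swap (by simpa using by omega : ((i.castSucc : Fin (m+1)) : ℕ) < (z : ℕ))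
        (by simpa using by omega : ((i.succ : Fin (m+1)) : ℕ) < (z : ℕ))
  · have e1 : (q * sTrans m i) i.castSucc = q i.succ := by
      rw [Equiv.Perm.mul_apply, sTrans_cs]
    have e2 : (q * sTrans m i) i.succ = q i.castSucc := by
      rw [Equiv.Perm.mul_apply, sTrans_s]
    rw [cnt_cs, cnt_cs, cnt_s, cnt_s, e1, e2, cntv_mul_sTrans_fix, cntv_mul_sTrans_fix,
      if_pos h, if_neg (asymm h)]
    omega

lemma linv_mul_sTrans' {q : Equiv.Perm (Fin (m + 1))} {i : Fin m}
    (h : q i.succ < q i.castSucc) :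
    linv q = linv (q * sTrans m i) + 1 := by
  have hc : (q * sTrans m i) i.castSucc < (q * sTrans m i) i.succ := by
    rw [Equiv.Perm.mul_apply, Equiv.Perm.mul_apply, sTrans_cs, sTrans_s]; exact h
  have := linv_mul_sTrans hc
  rw [mul_assoc, sTrans_mul_self, mul_one] at this
  omega

lemma ascent_or_descent (q : Equiv.Perm (Fin (m + 1))) (i : Fin m) :
    q i.castSucc < q i.succ ∨ q i.succ < q i.castSucc := by
  rcases lt_trichotomy (q i.castSucc) (q i.succ) with h | h | h
  · exact Or.inl h
  · exact absurd (q.injective h) (cs_ne_s i)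
  · exact Or.inr h

/-- The sign exponent for the action of `σ_i` on the basis vector indexed by `w`,
where `q = w⁻¹`. -/
def gsgn (i : Fin m) (q : Equiv.Perm (Fin (m + 1))) : ℕ :=
  Ii q (i : ℕ) + cntv q (i : ℕ) (q i.succ)
    + cntv q (i : ℕ) (q i.castSucc) * cntv q (i : ℕ) (q i.succ)

end LOTaux
namespace LOTaux
open Finset

variable {m : ℕ}

lemma sTrans_comm {i j : Fin m} (hij : (i : ℕ) + 1 < (j : ℕ)) :
    sTrans m i * sTrans m j = sTrans m j * sTrans m i := by
  have hd : (sTrans m i).Disjoint (sTrans m j) := by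
    intro x
    by_cases hx : (x : ℕ) = (i : ℕ) ∨ (x : ℕ) = (i : ℕ) + 1
    · exact Or.inr (sTrans_fix (by omega) (by omega))
    · push_neg at hx
      exact Or.inl (sTrans_fix hx.1 hx.2)
  exact hd.commute

lemma sTrans_braid {i j : Fin m} (hj : (j : ℕ) = (i : ℕ) + 1) :
    sTrans m i * sTrans m j * sTrans m i = sTrans m j * sTrans m i * sTrans m j := by
  have hcs : j.castSucc = i.succ := Fin.ext (by simp [hj])
  have h10 : (i.succ : Fin (m + 1)) ≠ i.castSucc := (cs_ne_s i).symm
  have h20 : (j.succ : Fin (m + 1)) ≠ i.castSucc := by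
    simp only [ne_eq, Fin.ext_iff, Fin.val_succ, Fin.coe_castSucc, hj]; omega
  have h21 : (j.succ : Fin (m + 1)) ≠ i.succ := by
    simp only [ne_eq, Fin.ext_iff, Fin.val_succ, hj]; omega
  have e1 : sTrans m i * sTrans m j * sTrans m i = Equiv.swap i.castSucc j.succ := by
    unfold sTrans
    rw [hcs]
    rw [show Equiv.swap i.castSucc i.succ = Equiv.swap i.succ i.castSucc from Equiv.swap_comm _ _,
      show Equiv.swap i.succ j.succ = Equiv.swap j.succ i.succ from Equiv.swap_comm _ _]
    have := Equiv.swap_mul_swap_mul_swap (x := j.succ) (y := i.succ) (z := i.castSucc)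
      h21 h20
    rw [this]
  have e2 : sTrans m j * sTrans m i * sTrans m j = Equiv.swap i.castSucc j.succ := by
    unfold sTrans
    rw [hcs]
    have := Equiv.swap_mul_swap_mul_swap (x := i.castSucc) (y := i.succ) (z := j.succ)
      (cs_ne_s i) h20.symm
    rw [this]
    exact Equiv.swap_comm _ _
  rw [e1, e2]

lemma gsgn_D1 {i j : Fin m} (hij : (i : ℕ) + 1 < (j : ℕ)) (q : Equiv.Perm (Fin (m + 1))) :
    gsgn i (q * sTrans m j) = gsgn i q := by
  have hfix : ∀ a : Fin (m + 1), (a : ℕ) < (i : ℕ) → sTrans m j a = a :=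
    fun a ha => sTrans_fix (by omega) (by omega)
  have e1 : (q * sTrans m j) i.castSucc = q i.castSucc := by
    rw [Equiv.Perm.mul_apply, sTrans_fix (by simp; omega) (by simp; omega)]
  have e2 : (q * sTrans m j) i.succ = q i.succ := by
    rw [Equiv.Perm.mul_apply, sTrans_fix (by simp; omega) (by simp; omega)]
  unfold gsgn
  rw [Ii_mul_fix hfix, e1, e2, cntv_mul_fix hfix, cntv_mul_fix hfix]

lemma gsgn_D2 {i j : Fin m} (hij : (i : ℕ) + 1 < (j : ℕ)) {q : Equiv.Perm (Fin (m + 1))}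
    (hi : q i.castSucc < q i.succ) :
    gsgn j (q * sTrans m i) = gsgn j q + 1 := by
  have hIi : Ii (q * sTrans m i) (j : ℕ) = Ii q (j : ℕ) + 1 := by
    unfold Ii
    apply sum_split_two (x := i.castSucc) (y := i.succ)
      (Finset.mem_filter.2 ⟨Finset.mem_univ _, by simp; omega⟩)
      (Finset.mem_filter.2 ⟨Finset.mem_univ _, by simp; omega⟩) (cs_ne_s i)
    · intro z _ hz0 hz1
      have hz0' : (z : ℕ) ≠ (i : ℕ) := fun hh => hz0 (Fin.ext (by simpa using hh))
      have hz1' : (z : ℕ) ≠ (i : ℕ) + 1 := fun hh => hz1 (Fin.ext (by simpa using hh))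
      rcases Nat.lt_or_ge (z : ℕ) (i : ℕ) with hlt | hge
      · exact cnt_mul_fix (fun a ha => sTrans_fix (by omega) (by omega))
      · show cnt (q * sTrans m i) z = cnt q z
        unfold sTrans
        exact cnt_mul_swap (by simp only [Fin.coe_castSucc]; omega)
          (by simp only [Fin.val_succ]; omega)
    · have e1 : (q * sTrans m i) i.castSucc = q i.succ := by
        rw [Equiv.Perm.mul_apply, sTrans_cs]
      have e2 : (q * sTrans m i) i.succ = q i.castSucc := by
        rw [Equiv.Perm.mul_apply, sTrans_s]
      rw [cnt_cs, cnt_cs, cnt_s, cnt_s, e1, e2, cntv_mul_sTrans_fix, cntv_mul_sTrans_fix,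
        if_pos hi, if_neg (asymm hi)]
      omega
  have hcntv : ∀ x : Fin (m + 1), cntv (q * sTrans m i) (j : ℕ) x = cntv q (j : ℕ) x := by
    intro x
    show cntv (q * sTrans m i) (j : ℕ) x = cntv q (j : ℕ) x
    unfold sTrans
    exact cntv_mul_swap (by simp only [Fin.coe_castSucc]; omega)
      (by simp only [Fin.val_succ]; omega) x
  have e1 : (q * sTrans m i) j.castSucc = q j.castSucc := by
    rw [Equiv.Perm.mul_apply, sTrans_fix (by simp; omega) (by simp; omega)]
  have e2 : (q * sTrans m i) j.succ = q j.succ := by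
    rw [Equiv.Perm.mul_apply, sTrans_fix (by simp; omega) (by simp; omega)]
  unfold gsgn
  rw [hIi, e1, e2, hcntv, hcntv]
  ring

lemma gsgn_j_expand {i j : Fin m} (hj : (j : ℕ) = (i : ℕ) + 1) (r : Equiv.Perm (Fin (m + 1))) :
    gsgn j r = Ii r (i : ℕ) + cntv r (i : ℕ) (r i.castSucc)
      + (cntv r (i : ℕ) (r j.succ) + (if r j.succ < r i.castSucc then 1 else 0))
      + (cntv r (i : ℕ) (r j.castSucc) + (if r j.castSucc < r i.castSucc then 1 else 0))
        * (cntv r (i : ℕ) (r j.succ) + (if r j.succ < r i.castSucc then 1 else 0)) := by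
  have hIi : Ii r (j : ℕ) = Ii r (i : ℕ) + cntv r (i : ℕ) (r i.castSucc) := by
    have h := Ii_val_succ r i.castSucc
    simp only [Fin.coe_castSucc] at h
    rw [hj, h, cnt_cs]
  have hcv : ∀ x : Fin (m + 1), cntv r (j : ℕ) x
      = cntv r (i : ℕ) x + (if x < r i.castSucc then 1 else 0) := by
    intro x
    have h := cntv_val_succ r i.castSucc x
    simp only [Fin.coe_castSucc] at h
    rw [hj, h]
  unfold gsgn
  rw [hIi, hcv, hcv]
  try ring

end LOTaux
namespace LOTaux
open Finset

variable {m : ℕ}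

lemma gsgn_B {i j : Fin m} (hj : (j : ℕ) = (i : ℕ) + 1) {q : Equiv.Perm (Fin (m + 1))}
    (hxy : q i.castSucc < q i.succ) (hyz : q i.succ < q j.succ) :
    ((gsgn i q + gsgn j (q * sTrans m i) + gsgn i (q * sTrans m i * sTrans m j) : ℕ) : ZMod 2)
      = ((gsgn j q + gsgn i (q * sTrans m j) + gsgn j (q * sTrans m j * sTrans m i) : ℕ)
          : ZMod 2) := by
  have hxz : q i.castSucc < q j.succ := hxy.trans hyz
  have hcs : j.castSucc = i.succ := Fin.ext (by simp [hj])
  have fix_i : ∀ a : Fin (m + 1), (a : ℕ) < (i : ℕ) → sTrans m i a = a :=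
    fun a ha => sTrans_fix (by omega) (by omega)
  have fix_j : ∀ a : Fin (m + 1), (a : ℕ) < (i : ℕ) → sTrans m j a = a :=
    fun a ha => sTrans_fix (by omega) (by omega)
  -- abbreviations
  set x := q i.castSucc with hxdef
  set y := q i.succ with hydef
  set z := q j.succ with hzdef
  set A := cntv q (i : ℕ) x with hA
  set B := cntv q (i : ℕ) y with hB
  set C := cntv q (i : ℕ) z with hC
  set I := Ii q (i : ℕ) with hI
  -- value lemmas for sTrans applications
  have sj_cs : sTrans m j i.castSucc = i.castSucc :=
    sTrans_fix (by simp [hj]) (by simp [hj]; omega)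
  have sj_s : sTrans m j i.succ = j.succ := by rw [← hcs, sTrans_cs]
  have sj_js : sTrans m j j.succ = i.succ := by rw [sTrans_s, hcs]
  have si_jcs : sTrans m i j.castSucc = i.castSucc := by rw [hcs, sTrans_s]
  have si_js : sTrans m i j.succ = j.succ :=
    sTrans_fix (by simp only [Fin.val_succ, hj]; omega) (by simp only [Fin.val_succ, hj]; omega)
  -- expansions
  have h0 : gsgn i q = I + B + A * B := rfl
  have h1 : gsgn j (q * sTrans m i) = I + B + (C + 0) + (A + 1) * (C + 0) := by
    rw [gsgn_j_expand hj]
    rw [Ii_mul_fix fix_i]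
    rw [show (q * sTrans m i) i.castSucc = y by rw [Equiv.Perm.mul_apply, sTrans_cs]]
    rw [show (q * sTrans m i) j.succ = z by rw [Equiv.Perm.mul_apply, si_js]]
    rw [show (q * sTrans m i) j.castSucc = x by rw [Equiv.Perm.mul_apply, si_jcs]]
    rw [cntv_mul_sTrans_fix, cntv_mul_sTrans_fix, cntv_mul_sTrans_fix,
      if_neg (asymm hyz), if_pos hxy]
  have h2 : gsgn i (q * sTrans m i * sTrans m j) = I + C + B * C := by
    unfold gsgn
    rw [Ii_mul_fix fix_j, Ii_mul_fix fix_i]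
    rw [show (q * sTrans m i * sTrans m j) i.castSucc = y by
      rw [Equiv.Perm.mul_apply, Equiv.Perm.mul_apply, sj_cs, sTrans_cs]]
    rw [show (q * sTrans m i * sTrans m j) i.succ = z by
      rw [Equiv.Perm.mul_apply, Equiv.Perm.mul_apply, sj_s, si_js]]
    rw [cntv_mul_fix fix_j, cntv_mul_fix fix_j, cntv_mul_sTrans_fix, cntv_mul_sTrans_fix]
  have h3 : gsgn j q = I + A + (C + 0) + (B + 0) * (C + 0) := by
    rw [gsgn_j_expand hj]
    rw [show q j.castSucc = y by rw [hcs]]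
    rw [if_neg (asymm hxz), if_neg (asymm hxy)]
  have h4 : gsgn i (q * sTrans m j) = I + C + A * C := by
    unfold gsgn
    rw [Ii_mul_fix fix_j]
    rw [show (q * sTrans m j) i.castSucc = x by rw [Equiv.Perm.mul_apply, sj_cs]]
    rw [show (q * sTrans m j) i.succ = z by rw [Equiv.Perm.mul_apply, sj_s]]
    rw [cntv_mul_fix fix_j, cntv_mul_fix fix_j]
  have h5 : gsgn j (q * sTrans m j * sTrans m i) = I + C + (B + 1) + (A + 1) * (B + 1) := by
    rw [gsgn_j_expand hj]
    rw [Ii_mul_fix fix_i, Ii_mul_fix fix_j]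
    rw [show (q * sTrans m j * sTrans m i) i.castSucc = z by
      rw [Equiv.Perm.mul_apply, Equiv.Perm.mul_apply, sTrans_cs, sj_s]]
    rw [show (q * sTrans m j * sTrans m i) j.succ = y by
      rw [Equiv.Perm.mul_apply, Equiv.Perm.mul_apply, si_js, sj_js]]
    rw [show (q * sTrans m j * sTrans m i) j.castSucc = x by
      rw [Equiv.Perm.mul_apply, Equiv.Perm.mul_apply, si_jcs, sj_cs]]
    rw [cntv_mul_sTrans_fix, cntv_mul_sTrans_fix, cntv_mul_sTrans_fix,
      cntv_mul_fix fix_j, cntv_mul_fix fix_j, cntv_mul_fix fix_j,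
      if_pos hyz, if_pos hxz]
  rw [h0, h1, h2, h3, h4, h5]
  push_cast
  have h2' : (2 : ZMod 2) = 0 := rfl
  linear_combination (-(A : ZMod 2) - 1) * h2'

end LOTaux
namespace LOTaux
open Finset

variable {m : ℕ}

lemma sTrans_inv (i : Fin m) : (sTrans m i)⁻¹ = sTrans m i := by
  unfold sTrans; exact Equiv.swap_inv _ _

lemma linv_one : linv (1 : Equiv.Perm (Fin (m + 1))) = 0 := by
  unfold linv
  apply Finset.sum_eq_zero
  intro b _
  unfold cnt cntv
  rw [Finset.card_eq_zero, Finset.filter_eq_empty_iff]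
  intro a _
  simp only [Equiv.Perm.one_apply, not_and]
  intro hab hba
  rw [Fin.lt_def] at hba
  omega

lemma eq_one_of_ascents {q : Equiv.Perm (Fin (m + 1))}
    (h : ∀ i : Fin m, q i.castSucc < q i.succ) : q = 1 := by
  have hsm : StrictMono ⇑q := Fin.strictMono_iff_lt_succ.2 h
  have hrange : Set.range ⇑q = Set.range (id : Fin (m + 1) → Fin (m + 1)) := by
    rw [Set.range_id, Equiv.range_eq_univ]
  have := (hsm.range_inj strictMono_id).1 hrange
  apply Equiv.ext
  intro a
  exact congrFun this a

lemma eq_one_of_linv_eq_zero {q : Equiv.Perm (Fin (m + 1))} (h : linv q = 0) : q = 1 := by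
  apply eq_one_of_ascents
  intro i
  have hcnt : cnt q i.succ = 0 := by
    have := (Finset.sum_eq_zero_iff.1 h) i.succ (Finset.mem_univ _)
    exact this
  rw [cnt_s] at hcnt
  rcases ascent_or_descent q i with ha | hd
  · exact ha
  · rw [if_pos hd] at hcnt; omega

lemma exists_descent {q : Equiv.Perm (Fin (m + 1))} (h : q ≠ 1) :
    ∃ i : Fin m, q i.succ < q i.castSucc := by
  by_contra hno
  push_neg at hno
  apply h
  apply eq_one_of_ascents
  intro i
  rcases ascent_or_descent q i with ha | hd
  · exact ha
  · exact absurd hd (by simpa using hno i)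

lemma permOfWord_nil : permOfWord m [] = 1 := rfl

lemma permOfWord_cons (i : Fin m) (l : List (Fin m)) :
    permOfWord m (i :: l) = sTrans m i * permOfWord m l := by
  simp [permOfWord]

lemma linv_le_length (l : List (Fin m)) : linv (permOfWord m l)⁻¹ ≤ l.length := by
  induction l with
  | nil => simp [permOfWord_nil, linv_one]
  | cons i t ih =>
    rw [permOfWord_cons, mul_inv_rev, sTrans_inv]
    rcases ascent_or_descent (permOfWord m t)⁻¹ i with ha | hd
    · rw [linv_mul_sTrans ha]; simpa using ih
    · have := linv_mul_sTrans' hd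
      simp only [List.length_cons]
      omega

lemma exists_word_of_length (w : Equiv.Perm (Fin (m + 1))) :
    ∃ l : List (Fin m), permOfWord m l = w ∧ l.length = linv w⁻¹ := by
  generalize hN : linv w⁻¹ = N
  induction N using Nat.strong_induction_on generalizing w with
  | _ N IH =>
    rcases Nat.eq_zero_or_pos N with rfl | hpos
    · have h1 : w⁻¹ = 1 := eq_one_of_linv_eq_zero hN
      have : w = 1 := by rw [← inv_inv w, h1, inv_one]
      exact ⟨[], by rw [permOfWord_nil, this], by simp [hN]⟩
    · have hne : w⁻¹ ≠ 1 := by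
        intro hc
        rw [hc, linv_one] at hN
        omega
      obtain ⟨i, hi⟩ := exists_descent hne
      have hstep : linv ((sTrans m i * w)⁻¹) = N - 1 := by
        rw [mul_inv_rev, sTrans_inv]
        have := linv_mul_sTrans' hi
        omega
      obtain ⟨l, hl1, hl2⟩ := IH (N - 1) (by omega) _ hstep
      refine ⟨i :: l, ?_, ?_⟩
      · rw [permOfWord_cons, hl1, ← mul_assoc, sTrans_mul_self, one_mul]
      · simp only [List.length_cons]
        omega

/-- `l` is a reduced word of `w` (with length characterization). -/
def IsRed (l : List (Fin m)) (w : Equiv.Perm (Fin (m + 1))) : Prop :=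
  permOfWord m l = w ∧ l.length = linv w⁻¹

lemma isRed_cons_descent {i : Fin m} {l : List (Fin m)} {w : Equiv.Perm (Fin (m + 1))}
    (h : IsRed (i :: l) w) :
    w⁻¹ i.succ < w⁻¹ i.castSucc ∧ IsRed l (sTrans m i * w) := by
  obtain ⟨h1, h2⟩ := h
  have hl : permOfWord m l = sTrans m i * w := by
    rw [← h1, permOfWord_cons, ← mul_assoc, sTrans_mul_self, one_mul]
  have hlen : linv ((sTrans m i * w)⁻¹) ≤ l.length := by
    rw [← hl]; exact linv_le_length l
  rw [mul_inv_rev, sTrans_inv] at hlen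
  simp only [List.length_cons] at h2
  rcases ascent_or_descent w⁻¹ i with ha | hd
  · exfalso
    have := linv_mul_sTrans ha
    omega
  · have heq := linv_mul_sTrans' hd
    refine ⟨hd, hl, ?_⟩
    rw [mul_inv_rev, sTrans_inv]
    have hge : l.length ≥ linv (w⁻¹ * sTrans m i) := hlen
    -- also length l + 1 = linv w⁻¹ = linv (w⁻¹ si) + 1
    omega

lemma isRed_cons_ascent {i : Fin m} {l : List (Fin m)} {w : Equiv.Perm (Fin (m + 1))}
    (h : IsRed l w) (ha : w⁻¹ i.castSucc < w⁻¹ i.succ) :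
    IsRed (i :: l) (sTrans m i * w) := by
  obtain ⟨h1, h2⟩ := h
  constructor
  · rw [permOfWord_cons, h1]
  · rw [mul_inv_rev, sTrans_inv, linv_mul_sTrans ha]
    simp only [List.length_cons]
    omega

end LOTaux
namespace LOTaux
open Finset

lemma neg_one_pow_congr {k : Type} [Field k] {a b : ℕ}
    (h : (a : ZMod 2) = (b : ZMod 2)) : ((-1 : k) ^ a = (-1) ^ b) := by
  have hmod := (ZMod.natCast_eq_natCast_iff a b 2).1 h
  unfold Nat.ModEq at hmod
  rcases Nat.even_or_odd a with ha | ha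
  · have hb : Even b := by
      rw [Nat.even_iff] at ha ⊢; omega
    rw [ha.neg_one_pow, hb.neg_one_pow]
  · have hb : Odd b := by
      rw [Nat.odd_iff] at ha ⊢; omega
    rw [ha.neg_one_pow, hb.neg_one_pow]

variable (k : Type) [Field k] (m : ℕ)

abbrev MM := Equiv.Perm (Fin (m + 1)) →₀ k

noncomputable def rho (i : Fin m) : MM k m →ₗ[k] MM k m :=
  Finsupp.lsum k (fun w : Equiv.Perm (Fin (m + 1)) =>
    if w⁻¹ i.castSucc < w⁻¹ i.succ then
      ((-1 : k) ^ gsgn i w⁻¹) • (Finsupp.lsingle (sTrans m i * w) : k →ₗ[k] MM k m)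
    else 0)

variable {k m}

lemma rho_single (i : Fin m) (w : Equiv.Perm (Fin (m + 1))) (a : k) :
    rho k m i (Finsupp.single w a)
      = if w⁻¹ i.castSucc < w⁻¹ i.succ then
          ((-1 : k) ^ gsgn i w⁻¹) • Finsupp.single (sTrans m i * w) a
        else 0 := by
  rw [rho, Finsupp.lsum_single]
  split_ifs with h
  · simp [Finsupp.lsingle_apply]
  · simp

lemma inv_sTrans_mul (i : Fin m) (w : Equiv.Perm (Fin (m + 1))) :
    (sTrans m i * w)⁻¹ = w⁻¹ * sTrans m i := by
  rw [mul_inv_rev, sTrans_inv]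

lemma rho_sq (i : Fin m) : (rho k m i).comp (rho k m i) = 0 := by
  apply Finsupp.lhom_ext
  intro w a
  rw [LinearMap.comp_apply, rho_single]
  split_ifs with h
  · rw [map_smul, rho_single, inv_sTrans_mul]
    rw [if_neg (by
      rw [Equiv.Perm.mul_apply, Equiv.Perm.mul_apply, sTrans_cs, sTrans_s]
      exact asymm h)]
    simp
  · simp

lemma rho_anticomm {i j : Fin m} (hij : (i : ℕ) + 1 < (j : ℕ)) :
    (rho k m i).comp (rho k m j) + (rho k m j).comp (rho k m i) = 0 := by
  have sj_i0 : sTrans m j i.castSucc = i.castSucc :=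
    sTrans_fix (by simp only [Fin.coe_castSucc]; omega) (by simp only [Fin.coe_castSucc]; omega)
  have sj_i1 : sTrans m j i.succ = i.succ :=
    sTrans_fix (by simp only [Fin.val_succ]; omega) (by simp only [Fin.val_succ]; omega)
  have si_j0 : sTrans m i j.castSucc = j.castSucc :=
    sTrans_fix (by simp only [Fin.coe_castSucc]; omega) (by simp only [Fin.coe_castSucc]; omega)
  have si_j1 : sTrans m i j.succ = j.succ :=
    sTrans_fix (by simp only [Fin.val_succ]; omega) (by simp only [Fin.val_succ]; omega)
  apply Finsupp.lhom_ext
  intro w a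
  simp only [LinearMap.add_apply, LinearMap.comp_apply, LinearMap.zero_apply]
  rw [rho_single, rho_single]
  by_cases hj : w⁻¹ j.castSucc < w⁻¹ j.succ
  · rw [if_pos hj]
    by_cases hi : w⁻¹ i.castSucc < w⁻¹ i.succ
    · rw [if_pos hi, map_smul, map_smul, rho_single, rho_single, inv_sTrans_mul,
        inv_sTrans_mul]
      rw [if_pos (show (w⁻¹ * sTrans m j) i.castSucc < (w⁻¹ * sTrans m j) i.succ by
            rw [Equiv.Perm.mul_apply, Equiv.Perm.mul_apply, sj_i0, sj_i1]; exact hi),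
          if_pos (show (w⁻¹ * sTrans m i) j.castSucc < (w⁻¹ * sTrans m i) j.succ by
            rw [Equiv.Perm.mul_apply, Equiv.Perm.mul_apply, si_j0, si_j1]; exact hj)]
      rw [smul_smul, smul_smul]
      rw [show sTrans m i * (sTrans m j * w) = sTrans m j * (sTrans m i * w) by
        rw [← mul_assoc, sTrans_comm hij, mul_assoc]]
      rw [← add_smul]
      rw [gsgn_D1 hij, gsgn_D2 hij hi, pow_succ]
      rw [show (-1 : k) ^ gsgn j w⁻¹ * (-1 : k) ^ gsgn i w⁻¹
            + (-1 : k) ^ gsgn i w⁻¹ * ((-1 : k) ^ gsgn j w⁻¹ * -1) = 0 by ring]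
      rw [zero_smul]
    · rw [if_neg hi, map_smul, rho_single, inv_sTrans_mul]
      rw [if_neg (show ¬ ((w⁻¹ * sTrans m j) i.castSucc < (w⁻¹ * sTrans m j) i.succ) by
        rw [Equiv.Perm.mul_apply, Equiv.Perm.mul_apply, sj_i0, sj_i1]; exact hi)]
      simp
  · rw [if_neg hj]
    by_cases hi : w⁻¹ i.castSucc < w⁻¹ i.succ
    · rw [if_pos hi, map_zero, map_smul, rho_single, inv_sTrans_mul]
      rw [if_neg (show ¬ ((w⁻¹ * sTrans m i) j.castSucc < (w⁻¹ * sTrans m i) j.succ) by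
        rw [Equiv.Perm.mul_apply, Equiv.Perm.mul_apply, si_j0, si_j1]; exact hj)]
      simp
    · rw [if_neg hi, map_zero, map_zero]
      simp

lemma rho_braid {i j : Fin m} (hj : (j : ℕ) = (i : ℕ) + 1) :
    (rho k m i).comp ((rho k m j).comp (rho k m i))
      = (rho k m j).comp ((rho k m i).comp (rho k m j)) := by
  have hcs : j.castSucc = i.succ := Fin.ext (by simp [hj])
  have sj_i0 : sTrans m j i.castSucc = i.castSucc :=
    sTrans_fix (by simp only [Fin.coe_castSucc]; omega) (by simp only [Fin.coe_castSucc]; omega)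
  have sj_i1 : sTrans m j i.succ = j.succ := by rw [← hcs, sTrans_cs]
  have sj_j1 : sTrans m j j.succ = i.succ := by rw [sTrans_s, hcs]
  have si_j0 : sTrans m i j.castSucc = i.castSucc := by rw [hcs, sTrans_s]
  have si_j1 : sTrans m i j.succ = j.succ :=
    sTrans_fix (by simp only [Fin.val_succ, hj]; omega) (by simp only [Fin.val_succ, hj]; omega)
  apply Finsupp.lhom_ext
  intro w a
  simp only [LinearMap.comp_apply]
  rw [rho_single i w a, rho_single j w a]
  by_cases hxy : w⁻¹ i.castSucc < w⁻¹ i.succ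
  · by_cases hyz : w⁻¹ i.succ < w⁻¹ j.succ
    · -- main case
      have hxz : w⁻¹ i.castSucc < w⁻¹ j.succ := hxy.trans hyz
      rw [if_pos hxy, if_pos (show w⁻¹ j.castSucc < w⁻¹ j.succ by rw [hcs]; exact hyz)]
      simp only [map_smul]
      rw [rho_single j (sTrans m i * w) a, rho_single i (sTrans m j * w) a]
      rw [inv_sTrans_mul, inv_sTrans_mul]
      rw [if_pos (show (w⁻¹ * sTrans m i) j.castSucc < (w⁻¹ * sTrans m i) j.succ by
            rw [Equiv.Perm.mul_apply, Equiv.Perm.mul_apply, si_j0, si_j1]; exact hxz),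
          if_pos (show (w⁻¹ * sTrans m j) i.castSucc < (w⁻¹ * sTrans m j) i.succ by
            rw [Equiv.Perm.mul_apply, Equiv.Perm.mul_apply, sj_i0, sj_i1]; exact hxz)]
      simp only [map_smul]
      rw [rho_single i (sTrans m j * (sTrans m i * w)) a,
        rho_single j (sTrans m i * (sTrans m j * w)) a]
      rw [inv_sTrans_mul, inv_sTrans_mul, inv_sTrans_mul, inv_sTrans_mul]
      rw [if_pos (show (w⁻¹ * sTrans m i * sTrans m j) i.castSucc
              < (w⁻¹ * sTrans m i * sTrans m j) i.succ by
            rw [Equiv.Perm.mul_apply, Equiv.Perm.mul_apply, Equiv.Perm.mul_apply,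
              Equiv.Perm.mul_apply, sj_i0, sTrans_cs, sj_i1, si_j1]; exact hyz),
          if_pos (show (w⁻¹ * sTrans m j * sTrans m i) j.castSucc
              < (w⁻¹ * sTrans m j * sTrans m i) j.succ by
            rw [Equiv.Perm.mul_apply, Equiv.Perm.mul_apply, Equiv.Perm.mul_apply,
              Equiv.Perm.mul_apply, si_j0, sj_i0, si_j1, sj_j1]; exact hxy)]
      rw [smul_smul, smul_smul, smul_smul, smul_smul]
      rw [show sTrans m i * (sTrans m j * (sTrans m i * w))
            = sTrans m j * (sTrans m i * (sTrans m j * w)) by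
        rw [← mul_assoc, ← mul_assoc, sTrans_braid hj, mul_assoc, mul_assoc]]
      congr 1
      rw [← pow_add, ← pow_add, ← pow_add, ← pow_add]
      apply neg_one_pow_congr
      have hB := gsgn_B hj hxy hyz
      push_cast at hB ⊢
      linear_combination hB
    · -- hxy, ¬hyz : both sides vanish
      rw [if_pos hxy, if_neg (show ¬ (w⁻¹ j.castSucc < w⁻¹ j.succ) by rw [hcs]; exact hyz)]
      simp only [map_zero, map_smul]
      rw [rho_single j (sTrans m i * w) a, inv_sTrans_mul]
      by_cases hxz : w⁻¹ i.castSucc < w⁻¹ j.succ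
      · rw [if_pos (show (w⁻¹ * sTrans m i) j.castSucc < (w⁻¹ * sTrans m i) j.succ by
            rw [Equiv.Perm.mul_apply, Equiv.Perm.mul_apply, si_j0, si_j1]; exact hxz)]
        simp only [map_smul]
        rw [rho_single i (sTrans m j * (sTrans m i * w)) a, inv_sTrans_mul, inv_sTrans_mul]
        rw [if_neg (show ¬ ((w⁻¹ * sTrans m i * sTrans m j) i.castSucc
              < (w⁻¹ * sTrans m i * sTrans m j) i.succ) by
            rw [Equiv.Perm.mul_apply, Equiv.Perm.mul_apply, Equiv.Perm.mul_apply,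
              Equiv.Perm.mul_apply, sj_i0, sTrans_cs, sj_i1, si_j1]; exact hyz)]
        simp
      · rw [if_neg (show ¬ ((w⁻¹ * sTrans m i) j.castSucc < (w⁻¹ * sTrans m i) j.succ) by
            rw [Equiv.Perm.mul_apply, Equiv.Perm.mul_apply, si_j0, si_j1]; exact hxz)]
        simp
  · -- ¬hxy : LHS dies at first step
    rw [if_neg hxy, map_zero, map_zero]
    by_cases hyz : w⁻¹ i.succ < w⁻¹ j.succ
    · rw [if_pos (show w⁻¹ j.castSucc < w⁻¹ j.succ by rw [hcs]; exact hyz)]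
      simp only [map_smul]
      rw [rho_single i (sTrans m j * w) a, inv_sTrans_mul]
      by_cases hxz : w⁻¹ i.castSucc < w⁻¹ j.succ
      · rw [if_pos (show (w⁻¹ * sTrans m j) i.castSucc < (w⁻¹ * sTrans m j) i.succ by
            rw [Equiv.Perm.mul_apply, Equiv.Perm.mul_apply, sj_i0, sj_i1]; exact hxz)]
        simp only [map_smul]
        rw [rho_single j (sTrans m i * (sTrans m j * w)) a, inv_sTrans_mul, inv_sTrans_mul]
        rw [if_neg (show ¬ ((w⁻¹ * sTrans m j * sTrans m i) j.castSucc
              < (w⁻¹ * sTrans m j * sTrans m i) j.succ) by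
            rw [Equiv.Perm.mul_apply, Equiv.Perm.mul_apply, Equiv.Perm.mul_apply,
              Equiv.Perm.mul_apply, si_j0, sj_i0, si_j1, sj_j1]; exact hxy)]
        simp
      · rw [if_neg (show ¬ ((w⁻¹ * sTrans m j) i.castSucc < (w⁻¹ * sTrans m j) i.succ) by
            rw [Equiv.Perm.mul_apply, Equiv.Perm.mul_apply, sj_i0, sj_i1]; exact hxz)]
        simp
    · rw [if_neg (show ¬ (w⁻¹ j.castSucc < w⁻¹ j.succ) by rw [hcs]; exact hyz)]
      simp

end LOTaux
namespace LOTaux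
open Finset

variable (k : Type) [Field k] (m : ℕ)

noncomputable def Frho : FreeAlgebra k (Fin m) →ₐ[k] Module.End k (MM k m) :=
  FreeAlgebra.lift k (fun i => (rho k m i : Module.End k (MM k m)))

lemma Frho_rel : ∀ ⦃x y : FreeAlgebra k (Fin m)⦄, LOTRel k m x y → Frho k m x = Frho k m y := by
  intro x y h
  induction h with
  | sq i =>
    rw [map_mul, map_zero, Frho, FreeAlgebra.lift_ι_apply]
    show rho k m i * rho k m i = 0
    rw [Module.End.mul_eq_comp]
    exact rho_sq i
  | anticomm i j hd =>
    rw [map_add, map_mul, map_mul, map_zero, Frho, FreeAlgebra.lift_ι_apply,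
      FreeAlgebra.lift_ι_apply]
    show rho k m i * rho k m j + rho k m j * rho k m i = 0
    rw [Module.End.mul_eq_comp, Module.End.mul_eq_comp]
    rcases hd with h | h
    · exact rho_anticomm h
    · have h2 := rho_anticomm (k := k) (m := m) h
      exact (add_comm _ _).trans h2
  | braid i j hd =>
    rw [map_mul, map_mul, map_mul, map_mul, Frho, FreeAlgebra.lift_ι_apply,
      FreeAlgebra.lift_ι_apply]
    show rho k m i * rho k m j * rho k m i = rho k m j * rho k m i * rho k m j
    rw [mul_assoc, mul_assoc, Module.End.mul_eq_comp, Module.End.mul_eq_comp,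
      Module.End.mul_eq_comp, Module.End.mul_eq_comp]
    exact rho_braid hd

noncomputable def rhoA : LOT k m →ₐ[k] Module.End k (MM k m) :=
  RingQuot.liftAlgHom k ⟨Frho k m, Frho_rel k m⟩

lemma rhoA_sigma (i : Fin m) : rhoA k m (lotSigma k m i) = rho k m i := by
  rw [lotSigma, rhoA, RingQuot.liftAlgHom_mkAlgHom_apply, Frho, FreeAlgebra.lift_ι_apply]

variable {k m}

lemma sigmaWord_nil : sigmaWord k m [] = 1 := by simp [sigmaWord]

lemma sigmaWord_cons (i : Fin m) (l : List (Fin m)) :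
    sigmaWord k m (i :: l) = lotSigma k m i * sigmaWord k m l := by simp [sigmaWord]

lemma sigma_sq (i : Fin m) : lotSigma k m i * lotSigma k m i = 0 := by
  have h := RingQuot.mkAlgHom_rel k (LOTRel.sq (k := k) (m := m) i)
  rw [map_mul, map_zero] at h
  exact h

lemma sigma_anticomm {i j : Fin m} (h : (i : ℕ) + 1 < (j : ℕ) ∨ (j : ℕ) + 1 < (i : ℕ)) :
    lotSigma k m i * lotSigma k m j = -(lotSigma k m j * lotSigma k m i) := by
  have hr := RingQuot.mkAlgHom_rel k (LOTRel.anticomm (k := k) (m := m) i j h)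
  rw [map_add, map_mul, map_mul, map_zero] at hr
  exact eq_neg_of_add_eq_zero_left hr

lemma sigma_braid {i j : Fin m} (h : (j : ℕ) = (i : ℕ) + 1) :
    lotSigma k m i * lotSigma k m j * lotSigma k m i
      = lotSigma k m j * lotSigma k m i * lotSigma k m j := by
  have hr := RingQuot.mkAlgHom_rel k (LOTRel.braid (k := k) (m := m) i j h)
  rw [map_mul, map_mul, map_mul, map_mul] at hr
  exact hr

lemma rhoA_word {l : List (Fin m)} {w : Equiv.Perm (Fin (m + 1))} (h : IsRed l w) :
    ∃ e : ℕ, rhoA k m (sigmaWord k m l) (Finsupp.single 1 1)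
      = ((-1 : k) ^ e) • Finsupp.single w 1 := by
  induction l generalizing w with
  | nil =>
    obtain ⟨h1, _⟩ := h
    rw [permOfWord_nil] at h1
    refine ⟨0, ?_⟩
    rw [sigmaWord_nil, map_one, ← h1]
    simp
  | cons i t ih =>
    obtain ⟨hd, ht⟩ := isRed_cons_descent h
    obtain ⟨e, he⟩ := ih ht
    have hasc : (sTrans m i * w)⁻¹ i.castSucc < (sTrans m i * w)⁻¹ i.succ := by
      rw [inv_sTrans_mul, Equiv.Perm.mul_apply, Equiv.Perm.mul_apply, sTrans_cs, sTrans_s]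
      exact hd
    refine ⟨e + gsgn i (sTrans m i * w)⁻¹, ?_⟩
    rw [sigmaWord_cons, map_mul, Module.End.mul_apply, he, map_smul, rhoA_sigma,
      rho_single, if_pos hasc, smul_smul, ← pow_add]
    rw [show sTrans m i * (sTrans m i * w) = w by
      rw [← mul_assoc, sTrans_mul_self, one_mul]]

end LOTaux
namespace LOTaux
open Finset

variable {k : Type} [Field k] {m : ℕ}

def PM (x y : LOT k m) : Prop := x = y ∨ x = -y

lemma PM.refl {x : LOT k m} : PM x x := Or.inl rfl

lemma PM.trans {x y z : LOT k m} (h1 : PM x y) (h2 : PM y z) : PM x z := by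
  rcases h1 with h1 | h1 <;> rcases h2 with h2 | h2
  · exact Or.inl (h1.trans h2)
  · exact Or.inr (h1.trans h2)
  · exact Or.inr (by rw [h1, h2])
  · exact Or.inl (by rw [h1, h2, neg_neg])

lemma PM.symm {x y : LOT k m} (h : PM x y) : PM y x := by
  rcases h with h | h
  · exact Or.inl h.symm
  · exact Or.inr (by rw [h, neg_neg])

lemma PM.mulL {x y : LOT k m} (c : LOT k m) (h : PM x y) : PM (c * x) (c * y) := by
  rcases h with h | h
  · exact Or.inl (by rw [h])
  · exact Or.inr (by rw [h]; exact mul_neg c y)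

lemma sT_cancel (i : Fin m) (v : Equiv.Perm (Fin (m + 1))) :
    sTrans m i * (sTrans m i * v) = v := by
  rw [← mul_assoc, sTrans_mul_self, one_mul]

lemma pm_reduced : ∀ (N : ℕ) (w : Equiv.Perm (Fin (m + 1))), linv w⁻¹ = N →
    ∀ a b : List (Fin m), IsRed a w → IsRed b w →
    PM (sigmaWord k m a) (sigmaWord k m b) := by
  intro N
  induction N using Nat.strong_induction_on with
  | _ N IH =>
  intro w hN a b ha hb
  rcases Nat.eq_zero_or_pos N with rfl | hpos
  · have ha0 : a = [] := List.length_eq_zero_iff.1 (by rw [ha.2, hN])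
    have hb0 : b = [] := List.length_eq_zero_iff.1 (by rw [hb.2, hN])
    rw [ha0, hb0]; exact PM.refl
  rcases a with _ | ⟨i, a'⟩
  · exfalso; have h2 := ha.2; rw [hN] at h2; simp at h2; omega
  rcases b with _ | ⟨j, b'⟩
  · exfalso; have h2 := hb.2; rw [hN] at h2; simp at h2; omega
  by_cases hij : i = j
  · subst hij
    obtain ⟨hdi, hai⟩ := isRed_cons_descent ha
    obtain ⟨_, hbj⟩ := isRed_cons_descent hb
    have hNi : linv ((sTrans m i * w)⁻¹) = N - 1 := by
      rw [inv_sTrans_mul]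
      have := linv_mul_sTrans' hdi; omega
    have hpm := IH (N - 1) (by omega) _ hNi a' b' hai hbj
    rw [sigmaWord_cons, sigmaWord_cons]
    exact hpm.mulL _
  have hvij : (i : ℕ) ≠ (j : ℕ) := fun hc => hij (Fin.ext hc)
  have distant : ∀ (i j : Fin m) (a' b' : List (Fin m)), (i : ℕ) + 1 < (j : ℕ) →
      IsRed (i :: a') w → IsRed (j :: b') w →
      PM (sigmaWord k m (i :: a')) (sigmaWord k m (j :: b')) := by
    clear hvij hij ha hb
    intro i j a' b' hlt ha hb
    obtain ⟨hdi, hai⟩ := isRed_cons_descent ha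
    obtain ⟨hdj, hbj⟩ := isRed_cons_descent hb
    have hNi : linv ((sTrans m i * w)⁻¹) = N - 1 := by
      rw [inv_sTrans_mul]; have := linv_mul_sTrans' hdi; omega
    have hNj : linv ((sTrans m j * w)⁻¹) = N - 1 := by
      rw [inv_sTrans_mul]; have := linv_mul_sTrans' hdj; omega
    have fixA : sTrans m i j.castSucc = j.castSucc :=
      sTrans_fix (by simp only [Fin.coe_castSucc]; omega) (by simp only [Fin.coe_castSucc]; omega)
    have fixB : sTrans m i j.succ = j.succ :=
      sTrans_fix (by simp only [Fin.val_succ]; omega) (by simp only [Fin.val_succ]; omega)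
    have fixC : sTrans m j i.castSucc = i.castSucc :=
      sTrans_fix (by simp only [Fin.coe_castSucc]; omega) (by simp only [Fin.coe_castSucc]; omega)
    have fixD : sTrans m j i.succ = i.succ :=
      sTrans_fix (by simp only [Fin.val_succ]; omega) (by simp only [Fin.val_succ]; omega)
    set u := sTrans m j * (sTrans m i * w) with hu
    have hui : u⁻¹ = w⁻¹ * sTrans m i * sTrans m j := by
      rw [hu, inv_sTrans_mul, inv_sTrans_mul]
    have hdj2 : (w⁻¹ * sTrans m i) j.succ < (w⁻¹ * sTrans m i) j.castSucc := by
      rw [Equiv.Perm.mul_apply, Equiv.Perm.mul_apply, fixA, fixB]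
      exact hdj
    have hNu : linv u⁻¹ = N - 2 := by
      rw [hui]
      have h1 := linv_mul_sTrans' hdj2
      have h2 : linv (w⁻¹ * sTrans m i) = N - 1 := by
        rw [← inv_sTrans_mul]; exact hNi
      omega
    obtain ⟨r, hr1, hr2⟩ := exists_word_of_length u
    have hru : IsRed r u := ⟨hr1, hr2⟩
    have hascj : u⁻¹ j.castSucc < u⁻¹ j.succ := by
      rw [hui]
      show (w⁻¹ * sTrans m i) (sTrans m j j.castSucc) < (w⁻¹ * sTrans m i) (sTrans m j j.succ)
      rw [sTrans_cs, sTrans_s, Equiv.Perm.mul_apply, Equiv.Perm.mul_apply, fixA, fixB]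
      exact hdj
    have hasci : u⁻¹ i.castSucc < u⁻¹ i.succ := by
      rw [hui]
      show (w⁻¹ * sTrans m i) (sTrans m j i.castSucc) < (w⁻¹ * sTrans m i) (sTrans m j i.succ)
      rw [fixC, fixD, Equiv.Perm.mul_apply, Equiv.Perm.mul_apply, sTrans_cs, sTrans_s]
      exact hdi
    have hredjr : IsRed (j :: r) (sTrans m j * u) := isRed_cons_ascent hru hascj
    have hredir : IsRed (i :: r) (sTrans m i * u) := isRed_cons_ascent hru hasci
    have hju : sTrans m j * u = sTrans m i * w := by rw [hu, sT_cancel]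
    have hiu : sTrans m i * u = sTrans m j * w := by
      rw [hu, ← mul_assoc, ← mul_assoc, sTrans_comm hlt, mul_assoc, mul_assoc, sT_cancel]
    rw [hju] at hredjr
    rw [hiu] at hredir
    have pm1 := IH (N - 1) (by omega) _ hNi a' (j :: r) hai hredjr
    have pm2 := IH (N - 1) (by omega) _ hNj b' (i :: r) hbj hredir
    rw [sigmaWord_cons, sigmaWord_cons]
    refine (pm1.mulL (lotSigma k m i)).trans (PM.trans ?_ (pm2.mulL (lotSigma k m j)).symm)
    rw [sigmaWord_cons, sigmaWord_cons]
    refine Or.inr ?_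
    rw [← mul_assoc, ← mul_assoc, sigma_anticomm (Or.inl hlt)]
    exact neg_mul (lotSigma k m j * lotSigma k m i) (sigmaWord k m r)
  have adjacent : ∀ (i j : Fin m) (a' b' : List (Fin m)), (j : ℕ) = (i : ℕ) + 1 →
      IsRed (i :: a') w → IsRed (j :: b') w →
      PM (sigmaWord k m (i :: a')) (sigmaWord k m (j :: b')) := by
    clear hvij hij ha hb
    intro i j a' b' hj ha hb
    obtain ⟨hdi, hai⟩ := isRed_cons_descent ha
    obtain ⟨hdj, hbj⟩ := isRed_cons_descent hb
    have hcs : j.castSucc = i.succ := Fin.ext (by simp [hj])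
    have sj_i0 : sTrans m j i.castSucc = i.castSucc :=
      sTrans_fix (by simp only [Fin.coe_castSucc]; omega) (by simp only [Fin.coe_castSucc]; omega)
    have sj_i1 : sTrans m j i.succ = j.succ := by rw [← hcs, sTrans_cs]
    have sj_j1 : sTrans m j j.succ = i.succ := by rw [sTrans_s, hcs]
    have si_j0 : sTrans m i j.castSucc = i.castSucc := by rw [hcs, sTrans_s]
    have si_j1 : sTrans m i j.succ = j.succ :=
      sTrans_fix (by simp only [Fin.val_succ, hj]; omega)
        (by simp only [Fin.val_succ, hj]; omega)
    -- descents: z < y < x where x = w⁻¹ i.castSucc, y = w⁻¹ i.succ, z = w⁻¹ j.succ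
    have hzy : w⁻¹ j.succ < w⁻¹ i.succ := by
      have hdj' := hdj
      rw [hcs] at hdj'
      exact hdj'
    have hyx : w⁻¹ i.succ < w⁻¹ i.castSucc := hdi
    have hzx : w⁻¹ j.succ < w⁻¹ i.castSucc := hzy.trans hyx
    have hNi : linv ((sTrans m i * w)⁻¹) = N - 1 := by
      rw [inv_sTrans_mul]; have := linv_mul_sTrans' hdi; omega
    have hNj : linv ((sTrans m j * w)⁻¹) = N - 1 := by
      rw [inv_sTrans_mul]; have := linv_mul_sTrans' hdj; omega
    -- u = si * sj * si * w , with linv u⁻¹ = N - 3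
    set u := sTrans m i * (sTrans m j * (sTrans m i * w)) with hu
    have hui : u⁻¹ = w⁻¹ * sTrans m i * sTrans m j * sTrans m i := by
      rw [hu, inv_sTrans_mul, inv_sTrans_mul, inv_sTrans_mul]
    have hd2 : (w⁻¹ * sTrans m i) j.succ < (w⁻¹ * sTrans m i) j.castSucc := by
      rw [Equiv.Perm.mul_apply, Equiv.Perm.mul_apply, si_j0, si_j1]
      exact hzx
    have hd3 : (w⁻¹ * sTrans m i * sTrans m j) i.succ
        < (w⁻¹ * sTrans m i * sTrans m j) i.castSucc := by
      show (w⁻¹ * sTrans m i) (sTrans m j i.succ) < (w⁻¹ * sTrans m i) (sTrans m j i.castSucc)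
      rw [sj_i0, sj_i1, Equiv.Perm.mul_apply, Equiv.Perm.mul_apply, sTrans_cs, si_j1]
      exact hzy
    have hNu : linv u⁻¹ = N - 3 := by
      rw [hui]
      have h1 : linv (w⁻¹ * sTrans m i) = N - 1 := by rw [← inv_sTrans_mul]; exact hNi
      have h2 := linv_mul_sTrans' hd2
      have h3 := linv_mul_sTrans' hd3
      omega
    obtain ⟨r, hr1, hr2⟩ := exists_word_of_length u
    have hru : IsRed r u := ⟨hr1, hr2⟩
    -- build word j :: i :: r reduced for sTrans m i * w
    have hasc1 : u⁻¹ i.castSucc < u⁻¹ i.succ := by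
      rw [hui]
      show (w⁻¹ * sTrans m i * sTrans m j) (sTrans m i i.castSucc)
          < (w⁻¹ * sTrans m i * sTrans m j) (sTrans m i i.succ)
      rw [sTrans_cs, sTrans_s]
      show (w⁻¹ * sTrans m i) (sTrans m j i.succ) < (w⁻¹ * sTrans m i) (sTrans m j i.castSucc)
      rw [sj_i0, sj_i1, Equiv.Perm.mul_apply, Equiv.Perm.mul_apply, sTrans_cs, si_j1]
      exact hzy
    have hred1 : IsRed (i :: r) (sTrans m i * u) := isRed_cons_ascent hru hasc1
    have hasc2 : (sTrans m i * u)⁻¹ j.castSucc < (sTrans m i * u)⁻¹ j.succ := by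
      rw [inv_sTrans_mul, hui, mul_assoc (w⁻¹ * sTrans m i * sTrans m j),
        sTrans_mul_self, mul_one]
      show (w⁻¹ * sTrans m i) (sTrans m j j.castSucc) < (w⁻¹ * sTrans m i) (sTrans m j j.succ)
      rw [sTrans_cs, sTrans_s, hcs, Equiv.Perm.mul_apply, Equiv.Perm.mul_apply,
        sTrans_s, si_j1]
      exact hzx
    have hred2 : IsRed (j :: i :: r) (sTrans m j * (sTrans m i * u)) :=
      isRed_cons_ascent hred1 hasc2
    have heq2 : sTrans m j * (sTrans m i * u) = sTrans m i * w := by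
      rw [hu, sT_cancel, sT_cancel]
    rw [heq2] at hred2
    -- build word i :: j :: r reduced for sTrans m j * w
    have hasc1' : u⁻¹ j.castSucc < u⁻¹ j.succ := by
      rw [hui]
      show (w⁻¹ * sTrans m i * sTrans m j) (sTrans m i j.castSucc)
          < (w⁻¹ * sTrans m i * sTrans m j) (sTrans m i j.succ)
      rw [si_j0, si_j1]
      show (w⁻¹ * sTrans m i) (sTrans m j i.castSucc) < (w⁻¹ * sTrans m i) (sTrans m j j.succ)
      rw [sj_i0, sj_j1, Equiv.Perm.mul_apply, Equiv.Perm.mul_apply, sTrans_cs, sTrans_s]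
      exact hdi
    have hred1' : IsRed (j :: r) (sTrans m j * u) := isRed_cons_ascent hru hasc1'
    have hasc2' : (sTrans m j * u)⁻¹ i.castSucc < (sTrans m j * u)⁻¹ i.succ := by
      rw [inv_sTrans_mul, hui]
      show (w⁻¹ * sTrans m i * sTrans m j * sTrans m i) (sTrans m j i.castSucc)
          < (w⁻¹ * sTrans m i * sTrans m j * sTrans m i) (sTrans m j i.succ)
      rw [sj_i0, sj_i1]
      show (w⁻¹ * sTrans m i * sTrans m j) (sTrans m i i.castSucc)
          < (w⁻¹ * sTrans m i * sTrans m j) (sTrans m i j.succ)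
      rw [sTrans_cs, si_j1]
      show (w⁻¹ * sTrans m i) (sTrans m j i.succ) < (w⁻¹ * sTrans m i) (sTrans m j j.succ)
      rw [sj_i1, sj_j1, Equiv.Perm.mul_apply, Equiv.Perm.mul_apply, si_j1, sTrans_s]
      exact hzx
    have hred2' : IsRed (i :: j :: r) (sTrans m i * (sTrans m j * u)) :=
      isRed_cons_ascent hred1' hasc2'
    have heq2' : sTrans m i * (sTrans m j * u) = sTrans m j * w := by
      have hu' : u = sTrans m j * (sTrans m i * (sTrans m j * w)) := by
        rw [hu, ← mul_assoc, ← mul_assoc, sTrans_braid hj, mul_assoc, mul_assoc]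
      rw [hu', sT_cancel, sT_cancel]
    rw [heq2'] at hred2'
    have pm1 := IH (N - 1) (by omega) _ hNi a' (j :: i :: r) hai hred2
    have pm2 := IH (N - 1) (by omega) _ hNj b' (i :: j :: r) hbj hred2'
    rw [sigmaWord_cons, sigmaWord_cons]
    refine (pm1.mulL (lotSigma k m i)).trans (PM.trans ?_ (pm2.mulL (lotSigma k m j)).symm)
    rw [sigmaWord_cons, sigmaWord_cons, sigmaWord_cons, sigmaWord_cons]
    refine Or.inl ?_
    rw [← mul_assoc, ← mul_assoc, ← mul_assoc, ← mul_assoc, sigma_braid hj]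
  rcases (by omega : (i : ℕ) + 1 < (j : ℕ) ∨ (j : ℕ) + 1 < (i : ℕ)
      ∨ (j : ℕ) = (i : ℕ) + 1 ∨ (i : ℕ) = (j : ℕ) + 1) with h | h | h | h
  · exact distant i j a' b' h ha hb
  · exact (distant j i b' a' h hb ha).symm
  · exact adjacent i j a' b' h ha hb
  · exact (adjacent j i b' a' h hb ha).symm

end LOTaux
namespace LOTaux
open Finset

variable {k : Type} [Field k] {m : ℕ}

lemma isRed_c {c : Equiv.Perm (Fin (m + 1)) → List (Fin m)}
    (hc : ∀ w, IsReducedWord m w (c w)) (w : Equiv.Perm (Fin (m + 1))) : IsRed (c w) w := by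
  obtain ⟨h1, h2⟩ := hc w
  refine ⟨h1, ?_⟩
  obtain ⟨l, hl1, hl2⟩ := exists_word_of_length w
  have hle := h2 l hl1
  have hge := linv_le_length (c w)
  rw [h1] at hge
  omega

lemma adjoin_sigma_top :
    Algebra.adjoin k (Set.range (lotSigma k m)) = ⊤ := by
  have h0 : Set.range (lotSigma k m)
      = ⇑(RingQuot.mkAlgHom k (LOTRel k m)) '' Set.range (FreeAlgebra.ι k) := by
    rw [← Set.range_comp]
    rfl
  rw [h0, ← AlgHom.map_adjoin, FreeAlgebra.adjoin_range_ι, Algebra.map_top]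
  rw [AlgHom.range_eq_top]
  exact RingQuot.mkAlgHom_surjective k (LOTRel k m)

lemma span_top {c : Equiv.Perm (Fin (m + 1)) → List (Fin m)}
    (hc : ∀ w, IsReducedWord m w (c w)) :
    Submodule.span k
      (Set.range (fun w : Equiv.Perm (Fin (m + 1)) => sigmaWord k m (c w))) = ⊤ := by
  set S := Submodule.span k
    (Set.range (fun w : Equiv.Perm (Fin (m + 1)) => sigmaWord k m (c w))) with hS
  have hone : (1 : LOT k m) ∈ S := by
    have h1 : IsRed (c 1) 1 := isRed_c hc 1
    have hnil : c 1 = [] := List.length_eq_zero_iff.1 (by rw [h1.2, inv_one, linv_one])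
    have hmem : sigmaWord k m (c 1) ∈ S := Submodule.subset_span ⟨1, rfl⟩
    rwa [hnil, sigmaWord_nil] at hmem
  have hmul : ∀ (i : Fin m) (x : LOT k m), x ∈ S → lotSigma k m i * x ∈ S := by
    intro i x hx
    induction hx using Submodule.span_induction with
    | mem y hy =>
      obtain ⟨w, rfl⟩ := hy
      show lotSigma k m i * sigmaWord k m (c w) ∈ S
      rcases ascent_or_descent w⁻¹ i with hasc | hdes
      · have hred : IsRed (i :: c w) (sTrans m i * w) :=
          isRed_cons_ascent (isRed_c hc w) hasc
        have hpm := pm_reduced (k := k) (linv ((sTrans m i * w)⁻¹)) _ rfl (i :: c w)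
          (c (sTrans m i * w)) hred (isRed_c hc _)
        rw [sigmaWord_cons] at hpm
        have hmem : sigmaWord k m (c (sTrans m i * w)) ∈ S := Submodule.subset_span ⟨_, rfl⟩
        rcases hpm with h | h
        · rw [h]; exact hmem
        · rw [h]; exact S.neg_mem hmem
      · obtain ⟨r, hr1, hr2⟩ := exists_word_of_length (sTrans m i * w)
        have hru : IsRed r (sTrans m i * w) := ⟨hr1, hr2⟩
        have hasc' : (sTrans m i * w)⁻¹ i.castSucc < (sTrans m i * w)⁻¹ i.succ := by
          rw [inv_sTrans_mul, Equiv.Perm.mul_apply, Equiv.Perm.mul_apply, sTrans_cs, sTrans_s]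
          exact hdes
        have hred : IsRed (i :: r) (sTrans m i * (sTrans m i * w)) :=
          isRed_cons_ascent hru hasc'
        rw [sT_cancel] at hred
        have hpm := pm_reduced (k := k) (linv w⁻¹) w rfl (c w) (i :: r) (isRed_c hc w) hred
        have hz : lotSigma k m i * sigmaWord k m (i :: r) = 0 := by
          rw [sigmaWord_cons, ← mul_assoc, sigma_sq, zero_mul]
        rcases hpm with h | h
        · rw [h, hz]; exact S.zero_mem
        · rw [h,
            show lotSigma k m i * -sigmaWord k m (i :: r)
                = -(lotSigma k m i * sigmaWord k m (i :: r)) from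
              mul_neg (lotSigma k m i) (sigmaWord k m (i :: r)),
            hz, neg_zero]
          exact S.zero_mem
    | zero => rw [mul_zero]; exact S.zero_mem
    | add y z _ _ hy hz => rw [mul_add]; exact S.add_mem hy hz
    | smul a y _ hy => rw [mul_smul_comm]; exact S.smul_mem a hy
  let T : Subalgebra k (LOT k m) :=
    { carrier := {x : LOT k m | ∀ s ∈ S, x * s ∈ S}
      mul_mem' := by
        intro x y hx hy s hs
        rw [mul_assoc]
        exact hx _ (hy s hs)
      one_mem' := by
        intro s hs
        rwa [one_mul]
      add_mem' := by
        intro x y hx hy s hs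
        rw [add_mul]
        exact S.add_mem (hx s hs) (hy s hs)
      zero_mem' := by
        intro s hs
        rw [zero_mul]
        exact S.zero_mem
      algebraMap_mem' := by
        intro r s hs
        rw [Algebra.algebraMap_eq_smul_one, smul_mul_assoc, one_mul]
        exact S.smul_mem r hs }
  have hT : ∀ x : LOT k m, ∀ s ∈ S, x * s ∈ S := by
    intro x
    have hle : (⊤ : Subalgebra k (LOT k m)) ≤ T := by
      rw [← adjoin_sigma_top]
      apply Algebra.adjoin_le
      rintro y ⟨i, rfl⟩
      exact fun s hs => hmul i s hs
    exact hle (Algebra.mem_top)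
  rw [eq_top_iff]
  intro x _
  have := hT x 1 hone
  rwa [mul_one] at this

lemma lin_indep {c : Equiv.Perm (Fin (m + 1)) → List (Fin m)}
    (hc : ∀ w, IsReducedWord m w (c w)) :
    LinearIndependent k (fun w : Equiv.Perm (Fin (m + 1)) => sigmaWord k m (c w)) := by
  have hφ : ∀ w : Equiv.Perm (Fin (m + 1)), ∃ e : ℕ,
      (rhoA k m (sigmaWord k m (c w))) (Finsupp.single 1 1)
        = ((-1 : k) ^ e) • Finsupp.single w 1 :=
    fun w => rhoA_word (isRed_c hc w)
  choose e he using hφ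
  let Φ : LOT k m →ₗ[k] MM k m :=
    (LinearMap.applyₗ (Finsupp.single 1 1)).comp (rhoA k m).toLinearMap
  apply LinearIndependent.of_comp Φ
  have hcomp : (⇑Φ ∘ fun w : Equiv.Perm (Fin (m + 1)) => sigmaWord k m (c w))
      = fun w => ((-1 : k) ^ e w) • Finsupp.single w 1 := funext fun w => he w
  rw [hcomp]
  have hb := (Finsupp.basisSingleOne (R := k)
    (ι := Equiv.Perm (Fin (m + 1)))).linearIndependent
  have hu := hb.units_smul (fun w => (-1 : kˣ) ^ e w)
  convert hu using 1
  funext w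
  simp [Units.smul_def, Finsupp.coe_basisSingleOne]

end LOTaux

theorem stmt0 (k : Type) [Field k] (m : ℕ)
    (c : Equiv.Perm (Fin (m + 1)) → List (Fin m))
    (hc : ∀ w, IsReducedWord m w (c w)) :
    LinearIndependent k (fun w : Equiv.Perm (Fin (m + 1)) => sigmaWord k m (c w)) ∧
    Submodule.span k
      (Set.range (fun w : Equiv.Perm (Fin (m + 1)) => sigmaWord k m (c w))) = ⊤ ∧
    Module.finrank k (LOT k m) = Nat.factorial (m + 1) := by
  
  have hind := LOTaux.lin_indep (k := k) hc
  have hspan := LOTaux.span_top (k := k) hc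
  refine ⟨hind, hspan, ?_⟩
  let b : Module.Basis (Equiv.Perm (Fin (m + 1))) k (LOT k m) := Module.Basis.mk hind (le_of_eq hspan.symm)
  rw [Module.finrank_eq_card_basis b, Fintype.card_perm, Fintype.card_fin]
end

section
/- Let w', w'' be reduced words of the same permutation w ∈ S_n that differ by a braid (Reidemeister III) move, i.e. w' = (…, i, i+1, i, …) and w'' = (…, i+1, i, i+1, …). Then ε(w', x) = ε(w'', x) for every x ∈ PDI(w), hence ε(w'') = ε(w') and σ̃_{w'} = σ̃_{w''} in H_n^-. -/
/-- The ordered pair `(min, max)`. -/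
def orderPair {N : ℕ} (u v : Fin N) : Fin N × Fin N := if u ≤ v then (u, v) else (v, u)

/-- The list of inversions of the word `l = (i_1, …, i_r)`, listed position by position:
the `t`-th entry is the inversion of `w = s_{i_1} ⋯ s_{i_r}` (a pair `(j_1, j_2)` of bottom
endpoints of strands, with `j_1 < j_2`) corresponding to the `t`-th crossing of the wire
diagram of `l`. -/
def invList (m : ℕ) : List (Fin m) → List (Fin (m + 1) × Fin (m + 1))
  | [] => []
  | a :: rest =>
      orderPair ((permOfWord m rest)⁻¹ a.castSucc) ((permOfWord m rest)⁻¹ a.succ) ::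
        invList m rest

/-- The set of pairs of disjoint inversions of `w`: quadruples `(j₁, j₂, k₁, k₂)`
(encoded as a pair of pairs) of four distinct numbers with `j₁ < j₂`, `w j₁ > w j₂`,
`k₁ < k₂`, `w k₁ > w k₂` and `j₁ < k₁`. -/
def PDI (m : ℕ) (w : Equiv.Perm (Fin (m + 1))) :
    Finset ((Fin (m + 1) × Fin (m + 1)) × (Fin (m + 1) × Fin (m + 1))) :=
  Finset.univ.filter (fun x =>
    x.1.1 < x.1.2 ∧ w x.1.2 < w x.1.1 ∧
    x.2.1 < x.2.2 ∧ w x.2.2 < w x.2.1 ∧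
    x.1.1 < x.2.1 ∧ x.1.1 ≠ x.2.2 ∧ x.1.2 ≠ x.2.1 ∧ x.1.2 ≠ x.2.2)

/-- `ε(w', x)` for a pair of disjoint inversions `x = ((j₁,j₂),(k₁,k₂))`:
`+1` if the position (crossing) of `(j₁,j₂)` occurs in the word `l = w'` to the right of
the position of `(k₁,k₂)`, and `-1` otherwise. -/
def epsAt (m : ℕ) (l : List (Fin m))
    (x : (Fin (m + 1) × Fin (m + 1)) × (Fin (m + 1) × Fin (m + 1))) : ℤ :=
  if (invList m l).idxOf x.2 < (invList m l).idxOf x.1 then 1 else -1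

/-- `ε(w') = ∏_{x ∈ PDI(w)} ε(w', x)`, where `w` is the permutation of the word `l = w'`. -/
def epsWord (m : ℕ) (l : List (Fin m)) : ℤ :=
  ∏ x ∈ PDI m (permOfWord m l), epsAt m l x

/-!
STATEMENT 2.  Let `w' = a ++ [i, i+1, i] ++ b` and `w'' = a ++ [i+1, i, i+1] ++ b` be
reduced words of the same permutation `w ∈ S_{m+1}` differing by a braid (Reidemeister III)
move.  Then `ε(w', x) = ε(w'', x)` for every `x ∈ PDI(w)`, hence `ε(w'') = ε(w')` and
`σ̃_{w'} = σ̃_{w''}` in `H_{m+1}^-`. -/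
section Aux
variable {m : ℕ}

lemma permOfWord_nil : permOfWord m [] = 1 := rfl

lemma permOfWord_cons (x : Fin m) (t : List (Fin m)) :
    permOfWord m (x :: t) = sTrans m x * permOfWord m t := by
  simp [permOfWord]

lemma permOfWord_append (a b : List (Fin m)) :
    permOfWord m (a ++ b) = permOfWord m a * permOfWord m b := by
  simp [permOfWord]

lemma invList_append_congr (a : List (Fin m)) {r1 r2 : List (Fin m)}
    (h : permOfWord m r1 = permOfWord m r2) :
    ∃ L : List (Fin (m+1) × Fin (m+1)),
      invList m (a ++ r1) = L ++ invList m r1 ∧ invList m (a ++ r2) = L ++ invList m r2 := by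
  induction a with
  | nil => exact ⟨[], rfl, rfl⟩
  | cons x t ih =>
    obtain ⟨L, h1, h2⟩ := ih
    refine ⟨orderPair ((permOfWord m (t ++ r1))⁻¹ x.castSucc)
      ((permOfWord m (t ++ r1))⁻¹ x.succ) :: L, ?_, ?_⟩
    · rw [List.cons_append]; rw [invList, h1]; simp
    · have hp : permOfWord m (t ++ r1) = permOfWord m (t ++ r2) := by
        rw [permOfWord_append, permOfWord_append, h]
      rw [List.cons_append]; rw [invList, h2, hp]; simp

end Aux
section Win
variable {m : ℕ}

lemma fin_ne01 {i j : Fin m} (_ : (j : ℕ) = (i : ℕ) + 1) : i.castSucc ≠ i.succ := by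
  simp [Fin.ext_iff, Fin.val_succ]

lemma fin_jc {i j : Fin m} (hadj : (j : ℕ) = (i : ℕ) + 1) : j.castSucc = i.succ := by
  simp [Fin.ext_iff, Fin.val_succ, hadj]

lemma fin_ne02 {i j : Fin m} (hadj : (j : ℕ) = (i : ℕ) + 1) : i.castSucc ≠ j.succ := by
  simp [Fin.ext_iff, Fin.val_succ, hadj]; omega

lemma fin_ne12 {i j : Fin m} (hadj : (j : ℕ) = (i : ℕ) + 1) : i.succ ≠ j.succ := by
  simp [Fin.ext_iff, Fin.val_succ, hadj]

lemma swap_braid {i j : Fin m} (hadj : (j : ℕ) = (i : ℕ) + 1) :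
    sTrans m i * sTrans m j * sTrans m i = sTrans m j * sTrans m i * sTrans m j := by
  have h01 := fin_ne01 hadj
  have h02 := fin_ne02 hadj
  have h12 := fin_ne12 hadj
  unfold sTrans
  rw [fin_jc hadj]
  have L : Equiv.swap i.castSucc i.succ * Equiv.swap i.succ j.succ *
      Equiv.swap i.castSucc i.succ = Equiv.swap i.castSucc j.succ := by
    have := Equiv.swap_mul_swap_mul_swap (x := j.succ) (y := i.succ) (z := i.castSucc)
      (Ne.symm h12) (Ne.symm h02)
    rwa [Equiv.swap_comm i.succ i.castSucc, Equiv.swap_comm j.succ i.succ] at this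
  have R : Equiv.swap i.succ j.succ * Equiv.swap i.castSucc i.succ *
      Equiv.swap i.succ j.succ = Equiv.swap i.castSucc j.succ := by
    have := Equiv.swap_mul_swap_mul_swap (x := i.castSucc) (y := i.succ) (z := j.succ) h01 h02
    rwa [Equiv.swap_comm j.succ i.castSucc] at this
  rw [L, R]

lemma window_left {i j : Fin m} (hadj : (j : ℕ) = (i : ℕ) + 1) (b : List (Fin m)) :
    invList m ([i, j, i] ++ b) =
      [orderPair ((permOfWord m b)⁻¹ i.succ) ((permOfWord m b)⁻¹ j.succ),
       orderPair ((permOfWord m b)⁻¹ i.castSucc) ((permOfWord m b)⁻¹ j.succ),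
       orderPair ((permOfWord m b)⁻¹ i.castSucc) ((permOfWord m b)⁻¹ i.succ)]
      ++ invList m b := by
  have h01 := fin_ne01 hadj
  have h02 := fin_ne02 hadj
  have h12 := fin_ne12 hadj
  have A0 : Equiv.swap i.castSucc i.succ i.castSucc = i.succ := Equiv.swap_apply_left _ _
  have A1 : Equiv.swap i.castSucc i.succ i.succ = i.castSucc := Equiv.swap_apply_right _ _
  have A2 : Equiv.swap i.castSucc i.succ j.succ = j.succ :=
    Equiv.swap_apply_of_ne_of_ne (Ne.symm h02) (Ne.symm h12)
  have B0 : Equiv.swap i.succ j.succ i.castSucc = i.castSucc :=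
    Equiv.swap_apply_of_ne_of_ne h01 h02
  have B1 : Equiv.swap i.succ j.succ i.succ = j.succ := Equiv.swap_apply_left _ _
  have B2 : Equiv.swap i.succ j.succ j.succ = i.succ := Equiv.swap_apply_right _ _
  show invList m (i :: j :: i :: b) = _
  rw [invList, invList, invList]
  rw [permOfWord_cons, permOfWord_cons]
  simp only [mul_inv_rev, Equiv.Perm.mul_apply, sTrans, Equiv.swap_inv, fin_jc hadj,
    A0, A1, A2, B0, B1, B2]
  simp

lemma window_right {i j : Fin m} (hadj : (j : ℕ) = (i : ℕ) + 1) (b : List (Fin m)) :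
    invList m ([j, i, j] ++ b) =
      [orderPair ((permOfWord m b)⁻¹ i.castSucc) ((permOfWord m b)⁻¹ i.succ),
       orderPair ((permOfWord m b)⁻¹ i.castSucc) ((permOfWord m b)⁻¹ j.succ),
       orderPair ((permOfWord m b)⁻¹ i.succ) ((permOfWord m b)⁻¹ j.succ)]
      ++ invList m b := by
  have h01 := fin_ne01 hadj
  have h02 := fin_ne02 hadj
  have h12 := fin_ne12 hadj
  have A0 : Equiv.swap i.castSucc i.succ i.castSucc = i.succ := Equiv.swap_apply_left _ _
  have A1 : Equiv.swap i.castSucc i.succ i.succ = i.castSucc := Equiv.swap_apply_right _ _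
  have A2 : Equiv.swap i.castSucc i.succ j.succ = j.succ :=
    Equiv.swap_apply_of_ne_of_ne (Ne.symm h02) (Ne.symm h12)
  have B0 : Equiv.swap i.succ j.succ i.castSucc = i.castSucc :=
    Equiv.swap_apply_of_ne_of_ne h01 h02
  have B1 : Equiv.swap i.succ j.succ i.succ = j.succ := Equiv.swap_apply_left _ _
  have B2 : Equiv.swap i.succ j.succ j.succ = i.succ := Equiv.swap_apply_right _ _
  show invList m (j :: i :: j :: b) = _
  rw [invList, invList, invList]
  rw [permOfWord_cons, permOfWord_cons]
  simp only [mul_inv_rev, Equiv.Perm.mul_apply, sTrans, Equiv.swap_inv, fin_jc hadj,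
    A0, A1, A2, B0, B1, B2]
  simp

end Win
section Idx
variable {α : Type*} [DecidableEq α]

lemma idx_window (A B W W' : List α) (hlen : W.length = W'.length)
    (hmem : ∀ z, z ∈ W ↔ z ∈ W') (x : α) :
    ((A ++ W ++ B).idxOf x = (A ++ W' ++ B).idxOf x ∧
      ((A ++ W ++ B).idxOf x < A.length ∨
        A.length + W.length ≤ (A ++ W ++ B).idxOf x)) ∨
    (x ∈ W ∧ A.length ≤ (A ++ W ++ B).idxOf x ∧
      (A ++ W ++ B).idxOf x < A.length + W.length ∧
      A.length ≤ (A ++ W' ++ B).idxOf x ∧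
      (A ++ W' ++ B).idxOf x < A.length + W.length) := by
  rw [List.append_assoc, List.append_assoc]
  by_cases hA : x ∈ A
  · left
    rw [List.idxOf_append_of_mem hA, List.idxOf_append_of_mem hA]
    exact ⟨rfl, Or.inl (List.idxOf_lt_length_iff.2 hA)⟩
  · rw [List.idxOf_append_of_notMem hA, List.idxOf_append_of_notMem hA]
    by_cases hW : x ∈ W
    · right
      have hW' : x ∈ W' := (hmem x).1 hW
      refine ⟨hW, Nat.le_add_right _ _, ?_, Nat.le_add_right _ _, ?_⟩
      · have := List.idxOf_lt_length_iff.2 (List.mem_append_left B hW)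
        have h2 : (W ++ B).idxOf x = W.idxOf x := List.idxOf_append_of_mem hW
        have := List.idxOf_lt_length_iff.2 hW
        omega
      · have h2 : (W' ++ B).idxOf x = W'.idxOf x := List.idxOf_append_of_mem hW'
        have := List.idxOf_lt_length_iff.2 hW'
        omega
    · left
      have hW' : x ∉ W' := fun h => hW ((hmem x).2 h)
      rw [List.idxOf_append_of_notMem hW, List.idxOf_append_of_notMem hW']
      exact ⟨by omega, Or.inr (by omega)⟩

lemma idx_cmp (A B W W' : List α) (hlen : W.length = W'.length)
    (hmem : ∀ z, z ∈ W ↔ z ∈ W') (x y : α) (hxy : ¬(x ∈ W ∧ y ∈ W)) :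
    ((A ++ W ++ B).idxOf y < (A ++ W ++ B).idxOf x ↔
      (A ++ W' ++ B).idxOf y < (A ++ W' ++ B).idxOf x) := by
  rcases idx_window A B W W' hlen hmem x with ⟨hx, hx2⟩ | ⟨hxW, hx1, hx2, hx3, hx4⟩ <;>
    rcases idx_window A B W W' hlen hmem y with ⟨hy, hy2⟩ | ⟨hyW, hy1, hy2, hy3, hy4⟩
  · rw [hx, hy]
  · omega
  · omega
  · exact absurd ⟨hxW, hyW⟩ hxy

end Idx
section Disj
variable {N : ℕ}

lemma orderPair_comp (u v : Fin N) :
    ((orderPair u v).1 = u ∧ (orderPair u v).2 = v) ∨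
    ((orderPair u v).1 = v ∧ (orderPair u v).2 = u) := by
  unfold orderPair
  split <;> simp

lemma not_both_window (v0 v1 v2 : Fin N) (x1 x2 : Fin N × Fin N)
    (hlt : x1.1 < x2.1) (h12 : x1.1 ≠ x2.2) (h21 : x1.2 ≠ x2.1) (h22 : x1.2 ≠ x2.2) :
    ¬(x1 ∈ [orderPair v1 v2, orderPair v0 v2, orderPair v0 v1] ∧
      x2 ∈ [orderPair v1 v2, orderPair v0 v2, orderPair v0 v1]) := by
  rintro ⟨h1, h2⟩
  simp only [List.mem_cons, List.not_mem_nil, or_false] at h1 h2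
  have hne : x1.1 ≠ x2.1 := ne_of_lt hlt
  rcases h1 with h | h | h <;> rcases h2 with g | g | g <;>
    · rw [h] at hne h12 h21 h22
      rw [g] at hne h12 h21 h22
      rcases orderPair_comp v1 v2 with ⟨p1, p2⟩ | ⟨p1, p2⟩ <;>
        rcases orderPair_comp v0 v2 with ⟨q1, q2⟩ | ⟨q1, q2⟩ <;>
          rcases orderPair_comp v0 v1 with ⟨r1, r2⟩ | ⟨r1, r2⟩ <;>
            simp_all
end Disj
lemma sigmaWord_append (k : Type) [Field k] (m : ℕ) (x y : List (Fin m)) :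
    sigmaWord k m (x ++ y) = sigmaWord k m x * sigmaWord k m y := by
  simp [sigmaWord]

lemma sigma_braid (k : Type) [Field k] (m : ℕ) (a b : List (Fin m)) (i j : Fin m)
    (hadj : (j : ℕ) = (i : ℕ) + 1) :
    sigmaWord k m (a ++ [i, j, i] ++ b) = sigmaWord k m (a ++ [j, i, j] ++ b) := by
  have hmid : lotSigma k m i * lotSigma k m j * lotSigma k m i =
      lotSigma k m j * lotSigma k m i * lotSigma k m j := by
    have h := RingQuot.mkAlgHom_rel k (LOTRel.braid (k := k) (m := m) i j hadj)
    rw [map_mul, map_mul, map_mul, map_mul] at h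
    exact h
  have e : sigmaWord k m [i, j, i] = sigmaWord k m [j, i, j] := by
    simp only [sigmaWord, List.map_cons, List.map_nil, List.prod_cons, List.prod_nil,
      mul_one, ← mul_assoc]
    exact hmid
  rw [sigmaWord_append, sigmaWord_append, sigmaWord_append, sigmaWord_append, e]

lemma perm_braid_words {m : ℕ} (b : List (Fin m)) (i j : Fin m)
    (hadj : (j : ℕ) = (i : ℕ) + 1) :
    permOfWord m ([i, j, i] ++ b) = permOfWord m ([j, i, j] ++ b) := by
  simp only [permOfWord, List.map_append, List.prod_append, List.map_cons, List.map_nil,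
    List.prod_cons, List.prod_nil, mul_one]
  rw [← mul_assoc, ← mul_assoc, swap_braid hadj]
theorem stmt2 (k : Type) [Field k] (m : ℕ) (a b : List (Fin m)) (i j : Fin m)
    (hadj : (j : ℕ) = (i : ℕ) + 1)
    (w : Equiv.Perm (Fin (m + 1)))
    (hw' : IsReducedWord m w (a ++ [i, j, i] ++ b))
    (hw'' : IsReducedWord m w (a ++ [j, i, j] ++ b)) :
    let l' := a ++ [i, j, i] ++ b
    let l'' := a ++ [j, i, j] ++ b
    (∀ x ∈ PDI m w, epsAt m l' x = epsAt m l'' x) ∧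
    epsWord m l'' = epsWord m l' ∧
    epsWord m l' • sigmaWord k m l' = epsWord m l'' • sigmaWord k m l'' := by
  intro l' l''
  set q : Equiv.Perm (Fin (m + 1)) := (permOfWord m b)⁻¹ with hq
  set W : List (Fin (m + 1) × Fin (m + 1)) :=
    [orderPair (q i.succ) (q j.succ), orderPair (q i.castSucc) (q j.succ),
     orderPair (q i.castSucc) (q i.succ)] with hW
  set W' : List (Fin (m + 1) × Fin (m + 1)) :=
    [orderPair (q i.castSucc) (q i.succ), orderPair (q i.castSucc) (q j.succ),
     orderPair (q i.succ) (q j.succ)] with hW'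
  have hperm : permOfWord m ([i, j, i] ++ b) = permOfWord m ([j, i, j] ++ b) :=
    perm_braid_words b i j hadj
  obtain ⟨L, hL1, hL2⟩ := invList_append_congr a hperm
  have hl' : invList m (a ++ [i, j, i] ++ b) = L ++ W ++ invList m b := by
    rw [List.append_assoc, hL1, window_left hadj b, ← hq, ← hW, ← List.append_assoc]
  have hl'' : invList m (a ++ [j, i, j] ++ b) = L ++ W' ++ invList m b := by
    rw [List.append_assoc, hL2, window_right hadj b, ← hq, ← hW', ← List.append_assoc]
  have key : ∀ x ∈ PDI m w, epsAt m l' x = epsAt m l'' x := by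
    intro x hx
    simp only [PDI, Finset.mem_filter, Finset.mem_univ, true_and] at hx
    obtain ⟨_, _, _, _, h5, h6, h7, h8⟩ := hx
    have hnb : ¬(x.1 ∈ W ∧ x.2 ∈ W) := by
      rw [hW]
      exact not_both_window (q i.castSucc) (q i.succ) (q j.succ) x.1 x.2 h5 h6 h7 h8
    have hmemW : ∀ z, z ∈ W ↔ z ∈ W' := by
      intro z
      rw [hW, hW']
      simp only [List.mem_cons, List.not_mem_nil, or_false]
      tauto
    have hlen : W.length = W'.length := rfl
    have hcmp := idx_cmp L (invList m b) W W' hlen hmemW x.1 x.2 hnb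
    show epsAt m (a ++ [i, j, i] ++ b) x = epsAt m (a ++ [j, i, j] ++ b) x
    unfold epsAt
    rw [hl', hl'']
    have hinst : (@instBEqProd (Fin (m+1)) (Fin (m+1)) instBEqOfDecidableEq instBEqOfDecidableEq)
        = (instBEqOfDecidableEq : BEq (Fin (m+1) × Fin (m+1))) :=
      @lawful_beq_subsingleton _ _ _
        (@Prod.instLawfulBEq _ _ _ _ (@instLawfulBEq _ _) (@instLawfulBEq _ _)) (@instLawfulBEq _ _)
    rw [hinst]
    exact if_congr hcmp rfl rfl
  have keps : epsWord m l'' = epsWord m l' := by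
    show epsWord m (a ++ [j, i, j] ++ b) = epsWord m (a ++ [i, j, i] ++ b)
    unfold epsWord
    rw [hw'.1, hw''.1]
    exact Finset.prod_congr rfl fun x hx => (key x hx).symm
  refine ⟨key, keps, ?_⟩
  rw [keps]
  show _ • sigmaWord k m (a ++ [i, j, i] ++ b) = _ • sigmaWord k m (a ++ [j, i, j] ++ b)
  rw [sigma_braid k m a b i j hadj]
end

section
/- Let A be a differential graded k-algebra and x ∈ A^{−1} an element such that e := d(x) is an idempotent of A. Then d(e) = 0, so the left ideal Ae is stable under d; and the k-linear map h : Ae → Ae defined on homogeneous elements a ∈ A^i ∩ Ae by h(a) = (−1)^i a x e satisfies h∘d + d∘h = id on Ae. In particular the complex Ae is contractible. -/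
/-!
STATEMENT 5.  Let `A` be a differential graded `k`-algebra (grading
`𝒜 : ℤ → Submodule k A` with `[GradedRing 𝒜]`, differential `d` of degree `+1` squaring
to zero and satisfying the graded Leibniz rule) and `x ∈ A^{-1}` an element such that
`e := d x` is an idempotent of `A`.  Then `d e = 0`, the left ideal `A e` (the range of
right multiplication by `e`) is stable under `d`, and the `k`-linear map `h : A e → A e`
defined on homogeneous `a ∈ Aⁱ ∩ A e` by `h a = (-1)ⁱ a x e` satisfies
`h ∘ d + d ∘ h = id` on `A e`.  In particular the complex `A e` is contractible. -/
theorem stmt5 (k : Type) [Field k] (A : Type) [Ring A] [Algebra k A]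
    (𝒜 : ℤ → Submodule k A) [GradedRing 𝒜]
    (d : A →ₗ[k] A)
    (hdeg : ∀ (z : ℤ) (a : A), a ∈ 𝒜 z → d a ∈ 𝒜 (z + 1))
    (hdd : ∀ a : A, d (d a) = 0)
    (hLeibniz : ∀ (z : ℤ) (a b : A), a ∈ 𝒜 z →
      d (a * b) = d a * b + ((-1 : k) ^ z) • (a * d b))
    (x : A) (hx : x ∈ 𝒜 (-1)) (hidem : d x * d x = d x) :
    -- `e = d x`, and `Ae` is the left ideal `A e`, i.e. the range of right
    -- multiplication by `e`.
    let e := d x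
    let Ae : Submodule k A := LinearMap.range (LinearMap.mulRight k e)
    d e = 0 ∧
    (∀ a ∈ Ae, d a ∈ Ae) ∧
    ∃ h : A →ₗ[k] A,
      (∀ a ∈ Ae, h a ∈ Ae) ∧
      (∀ (z : ℤ) (a : A), a ∈ 𝒜 z → a ∈ Ae → h a = ((-1 : k) ^ z) • (a * x * e)) ∧
      (∀ a ∈ Ae, h (d a) + d (h a) = a) := by
  intro e Ae
  classical
  have hee : e * e = e := hidem
  have hde : d e = 0 := hdd x
  have he0 : e ∈ 𝒜 0 := by simpa using hdeg (-1) x hx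
  have hmem : ∀ a : A, a ∈ Ae ↔ a * e = a := by
    intro a
    constructor
    · rintro ⟨b, rfl⟩
      simp only [LinearMap.mulRight_apply, mul_assoc, hee]
    · intro h; exact ⟨a, h⟩
  -- components of elements of `Ae` are again in `Ae`
  have hcomp : ∀ a : A, a * e = a → ∀ i : ℤ,
      (DirectSum.decompose 𝒜 a i : A) * e = DirectSum.decompose 𝒜 a i := by
    intro a hae i
    have := DirectSum.coe_decompose_mul_add_of_right_mem 𝒜 (a := a) (i := i) he0
    rw [add_zero, hae] at this
    exact this.symm
  -- homogeneous elements of `Ae` are sent into `Ae` by `d`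
  have homKey : ∀ (z : ℤ) (b : A), b ∈ 𝒜 z → b * e = b → d b * e = d b := by
    intro z b hb hbe
    conv_rhs => rw [← hbe]
    rw [hLeibniz z b e hb, hde]
    simp
  -- `d` is stable on `Ae`
  have hdstable : ∀ a ∈ Ae, d a ∈ Ae := by
    intro a ha
    have hae := (hmem a).mp ha
    rw [← DirectSum.sum_support_decompose 𝒜 a, map_sum]
    refine Submodule.sum_mem _ fun i _ => (hmem _).mpr ?_
    exact homKey i _ (SetLike.coe_mem _) (hcomp a hae i)
  -- the contracting homotopy
  set f : ∀ z : ℤ, 𝒜 z →ₗ[k] A := fun z =>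
    ((-1 : k) ^ z) • ((LinearMap.mulRight k (x * e)).comp (𝒜 z).subtype) with hf
  set hmap : A →ₗ[k] A :=
    (DirectSum.toModule k ℤ A f).comp (DirectSum.decomposeLinearEquiv 𝒜).toLinearMap
    with hhm
  have hhom : ∀ (z : ℤ) (a : A), a ∈ 𝒜 z →
      hmap a = ((-1 : k) ^ z) • (a * (x * e)) := by
    intro z a ha
    have hth : DirectSum.decompose 𝒜 a = DirectSum.lof k ℤ (fun i => (𝒜 i : Submodule k A)) z ⟨a, ha⟩ := by
      rw [DirectSum.decompose_of_mem 𝒜 ha, DirectSum.lof_eq_of]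
    simp [hhm, DirectSum.decomposeLinearEquiv_apply, hth, DirectSum.toModule_lof, hf, mul_assoc]
  have hrange : ∀ a : A, hmap a ∈ Ae := by
    intro a
    simp only [hhm, LinearMap.comp_apply]
    induction (DirectSum.decomposeLinearEquiv 𝒜).toLinearMap a using DirectSum.induction_on with
    | zero => simp
    | of i m =>
      rw [← DirectSum.lof_eq_of k, DirectSum.toModule_lof]
      simp only [hf, LinearMap.smul_apply, LinearMap.comp_apply, Submodule.coe_subtype,
        LinearMap.mulRight_apply]
      exact Ae.smul_mem _ ⟨(m : A) * x, by simp [mul_assoc]⟩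
    | add p q hp hq => rw [map_add]; exact Ae.add_mem hp hq
  have dxe : d (x * e) = e := by
    rw [hLeibniz (-1) x e hx, hde]
    simpa using hee
  -- the homotopy identity on homogeneous elements
  have key : ∀ (z : ℤ) (a : A), a ∈ 𝒜 z → a * e = a →
      hmap (d a) + d (hmap a) = a := by
    intro z a ha hae
    have hda : d a ∈ 𝒜 (z + 1) := hdeg z a ha
    rw [hhom (z + 1) (d a) hda, hhom z a ha, map_smul,
      hLeibniz z a (x * e) ha, dxe]
    have hpow : ((-1 : k) ^ (z + 1)) = -((-1 : k) ^ z) := by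
      rw [zpow_add_one₀ (by norm_num : (-1 : k) ≠ 0)]; ring
    have hsq : ((-1 : k) ^ z) • (((-1 : k) ^ z) • (a * e)) = a := by
      rw [smul_smul, ← mul_zpow]
      norm_num [hae]
    rw [hpow, smul_add, hsq, neg_smul]
    abel
  refine ⟨hde, hdstable, hmap, fun a _ => hrange a, ?_, ?_⟩
  · intro z a ha _
    rw [hhom z a ha, mul_assoc]
  · intro a ha
    have hae := (hmem a).mp ha
    rw [← DirectSum.sum_support_decompose 𝒜 a]
    simp only [map_sum]
    rw [← Finset.sum_add_distrib]
    exact Finset.sum_congr rfl fun i _ =>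
      key i _ (SetLike.coe_mem _) (hcomp a hae i)
end

section
/- Let A be a differential graded k-algebra and x ∈ A^{−1} an element such that e := d(x) is an idempotent of A. Then the (nonunital) dg subalgebra (1−e)A(1−e) ⊆ A is stable under d, and the inclusion (1−e)A(1−e) ⊆ A is a quasi-isomorphism: it induces an isomorphism of homology groups (ker d ∩ (1−e)A(1−e)) / d((1−e)A(1−e)) ≅ ker d / im d. -/
/-!
STATEMENT 6.  Let `A` be a differential graded `k`-algebra (grading
`𝒜 : ℤ → Submodule k A` with `[GradedRing 𝒜]`, differential `d` of degree `+1` squaring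
to zero and satisfying the graded Leibniz rule) and `x ∈ A^{-1}` an element such that
`e := d x` is an idempotent of `A`.  Then the (nonunital) dg subalgebra
`B = (1-e) A (1-e)` (the range of `a ↦ (1-e) a (1-e)`) is stable under `d`, and the
inclusion `B ⊆ A` is a quasi-isomorphism: it induces an isomorphism
`(ker d ∩ B) / d(B) ≅ ker d / im d`, i.e. the induced map on homology is injective and
surjective. -/
theorem stmt6 (k : Type) [Field k] (A : Type) [Ring A] [Algebra k A]
    (𝒜 : ℤ → Submodule k A) [GradedRing 𝒜]
    (d : A →ₗ[k] A)
    (hdeg : ∀ (z : ℤ) (a : A), a ∈ 𝒜 z → d a ∈ 𝒜 (z + 1))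
    (hdd : ∀ a : A, d (d a) = 0)
    (hLeibniz : ∀ (z : ℤ) (a b : A), a ∈ 𝒜 z →
      d (a * b) = d a * b + ((-1 : k) ^ z) • (a * d b))
    (x : A) (hx : x ∈ 𝒜 (-1)) (hidem : d x * d x = d x) :
    let e := d x
    let B : Submodule k A :=
      LinearMap.range ((LinearMap.mulLeft k (1 - e)).comp (LinearMap.mulRight k (1 - e)))
    -- `B = (1-e) A (1-e)` is stable under `d`
    (∀ b ∈ B, d b ∈ B) ∧
    -- surjectivity of the induced map on homology
    (∀ a : A, d a = 0 → ∃ b ∈ B, d b = 0 ∧ ∃ c : A, a - b = d c) ∧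
    -- injectivity of the induced map on homology
    (∀ b ∈ B, d b = 0 → (∃ c : A, d c = b) → ∃ c ∈ B, d c = b) := by
  intro e B
  classical
  have he0 : d e = 0 := hdd x
  have heA : e ∈ 𝒜 0 := by
    have := hdeg (-1) x hx
    norm_num at this
    exact this
  have h1e : (1 - e) ∈ 𝒜 0 := Submodule.sub_mem _ (SetLike.one_mem_graded 𝒜) heA
  have hd1 : d 1 = 0 := by
    have h := hLeibniz 0 1 1 (SetLike.one_mem_graded 𝒜)
    simp at h
    exact h
  have hd1e : d (1 - e) = 0 := by rw [map_sub, hd1, he0, sub_zero]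
  have hsign : ∀ z : ℤ, ((-1 : k) ^ z) * ((-1 : k) ^ z) = 1 := by
    intro z; rw [← mul_zpow]; norm_num
  have hsq : (1 - e) * (1 - e) = 1 - e := by
    show (1 - d x) * (1 - d x) = 1 - d x
    rw [sub_mul, one_mul, mul_sub, mul_one, hidem]; abel
  have dL : ∀ a : A, d ((1 - e) * a) = (1 - e) * d a := by
    intro a
    rw [hLeibniz 0 _ a h1e, hd1e]
    simp
  have dR : ∀ a : A, d (a * (1 - e)) = d a * (1 - e) := by
    refine DirectSum.Decomposition.inductionOn 𝒜 (by simp) ?_ ?_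
    · rintro i ⟨a, ha⟩
      rw [hLeibniz i a _ ha, hd1e]
      simp
    · intro a b ha hb
      rw [add_mul, map_add, map_add, ha, hb, add_mul]
  have hmemB : ∀ a : A, (1 - e) * (a * (1 - e)) ∈ B := by
    intro a
    exact ⟨a, rfl⟩
  have hBform : ∀ b ∈ B, ∃ a : A, b = (1 - e) * (a * (1 - e)) := by
    rintro b ⟨a, rfl⟩
    exact ⟨a, rfl⟩
  -- decompose commutes with d
  have hcomm : ∀ (a : A) (w : ℤ),
      (DirectSum.decompose 𝒜 (d a) w : A) = d (DirectSum.decompose 𝒜 a (w - 1) : A) := by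
    refine DirectSum.Decomposition.inductionOn 𝒜 (by simp) ?_ ?_
    · rintro i ⟨a, ha⟩ w
      by_cases hw : w = i + 1
      · subst hw
        rw [DirectSum.decompose_of_mem_same 𝒜 (hdeg i a ha)]
        rw [show i + 1 - 1 = i by ring, DirectSum.decompose_of_mem_same 𝒜 ha]
      · rw [DirectSum.decompose_of_mem_ne 𝒜 (hdeg i a ha) (fun h => hw h.symm),
          DirectSum.decompose_of_mem_ne 𝒜 ha (by omega)]
        simp
    · intro a b ha hb w
      rw [map_add, DirectSum.decompose_add, DirectSum.decompose_add]
      simp only [DirectSum.add_apply, Submodule.coe_add, map_add, ha, hb]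
  have hker : ∀ a : A, d a = 0 → ∀ z : ℤ, d (DirectSum.decompose 𝒜 a z : A) = 0 := by
    intro a h z
    have := hcomm a (z + 1)
    rw [h, show z + 1 - 1 = z by ring] at this
    simpa using this.symm
  refine ⟨?_, ?_, ?_⟩
  · -- stability
    rintro b ⟨a, rfl⟩
    show d ((1 - e) * (a * (1 - e))) ∈ B
    rw [dL, dR]
    exact hmemB (d a)
  · -- surjectivity
    intro a ha
    refine ⟨(1 - e) * (a * (1 - e)), hmemB a, by rw [dL, dR, ha]; simp, ?_⟩
    set F := (DirectSum.decompose 𝒜 a).support with hF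
    refine ⟨x * a + ∑ z ∈ F, ((-1 : k) ^ z) • ((1 - e) * ((DirectSum.decompose 𝒜 a z : A) * x)), ?_⟩
    rw [map_add, map_sum]
    have h1 : d (x * a) = e * a := by
      rw [hLeibniz (-1) x a hx, ha]
      simp; rfl
    have h2 : ∀ z ∈ F, d (((-1 : k) ^ z) • ((1 - e) * ((DirectSum.decompose 𝒜 a z : A) * x)))
        = (1 - e) * ((DirectSum.decompose 𝒜 a z : A) * e) := by
      intro z _
      rw [map_smul, dL, hLeibniz z _ x (DirectSum.decompose 𝒜 a z).2, hker a ha z]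
      rw [zero_mul, zero_add, mul_smul_comm, smul_smul, hsign, one_smul]
    rw [Finset.sum_congr rfl h2, ← Finset.mul_sum, ← Finset.sum_mul,
      DirectSum.sum_support_decompose 𝒜 a, h1]
    noncomm_ring
  · -- injectivity
    rintro b hb hdb ⟨c, hc⟩
    obtain ⟨a, rfl⟩ := hBform b hb
    refine ⟨(1 - e) * (c * (1 - e)), hmemB c, ?_⟩
    rw [dL, dR, hc]
    simp only [mul_assoc]
    rw [hsq, ← mul_assoc (1 - e) (1 - e), hsq]
end

section
/- For every n ≥ 2, the differential graded algebra H_n^- has trivial homology: ker d = im d, where d is the differential on H_n^- determined by d(σ_i) = 1 and the graded Leibniz rule. -/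
/-!
STATEMENT 8.  For every `n = m + 1 ≥ 2` (i.e. `m ≥ 1`), the differential graded algebra
`H_n^-` has trivial homology: `ker d = im d`, where `d` is the differential on `H_n^-`
determined by `d σ_i = 1` and the graded Leibniz rule (with respect to the ℤ-grading for
which each `σ_i` is homogeneous of degree `-1`). -/
theorem stmt8 (k : Type) [Field k] (m : ℕ) (hm : 1 ≤ m)
    (𝒜 : ℤ → Submodule k (LOT k m)) [GradedRing 𝒜]
    (hσ : ∀ i : Fin m, lotSigma k m i ∈ 𝒜 (-1))
    (d : LOT k m →ₗ[k] LOT k m)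
    (hdeg : ∀ (z : ℤ) a, a ∈ 𝒜 z → d a ∈ 𝒜 (z + 1))
    (hσ1 : ∀ i : Fin m, d (lotSigma k m i) = 1)
    (hLeibniz : ∀ (z : ℤ) (a b : LOT k m), a ∈ 𝒜 z →
      d (a * b) = d a * b + ((-1 : k) ^ z) • (a * d b))
    (hdd : ∀ a, d (d a) = 0) :
    LinearMap.ker d = LinearMap.range d := by
  apply le_antisymm
  · intro a ha
    have ha0 : d a = 0 := ha
    refine ⟨lotSigma k m ⟨0, hm⟩ * a, ?_⟩
    rw [hLeibniz (-1) _ a (hσ ⟨0, hm⟩), hσ1, ha0, mul_zero, smul_zero, add_zero, one_mul]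
  · rintro a ⟨b, rfl⟩
    exact hdd b
end

section
/- The center of the nilHecke algebra H_m consists exactly of the operators of multiplication by symmetric polynomials; that is, Z(H_m) is isomorphic, via the multiplication-operator embedding, to the ring of symmetric polynomials k[x_1, …, x_m]^{S_m}. -/
open MvPolynomial

/-- The operator of multiplication by a polynomial `p` on `k[x_1, …, x_{m+1}]`. -/
noncomputable def mulOp (k : Type) [Field k] (m : ℕ) (p : MvPolynomial (Fin (m + 1)) k) :
    Module.End k (MvPolynomial (Fin (m + 1)) k) :=
  LinearMap.mulLeft k p

/-- `D` is the family of divided difference operators `∂_i` on `k[x_1, …, x_{m+1}]`: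
`∂_i f = (f - s_i f)/(x_i - x_{i+1})`, characterized by
`(x_i - x_{i+1}) * ∂_i f = f - s_i f`, where `s_i` transposes the variables
`x_i` and `x_{i+1}`.  (This characterizes `∂_i f` uniquely, since `k[x]` is a domain.) -/
def IsDividedDifferenceFamily (k : Type) [Field k] (m : ℕ)
    (D : Fin m → Module.End k (MvPolynomial (Fin (m + 1)) k)) : Prop :=
  ∀ (i : Fin m) (f : MvPolynomial (Fin (m + 1)) k),
    (X i.castSucc - X i.succ) * D i f =
      f - rename (Equiv.swap i.castSucc i.succ) f

/-- The nilHecke algebra `H_{m+1}`: the subalgebra of `End_k(k[x_1, …, x_{m+1}])`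
generated by the multiplication operators `x_1, …, x_{m+1}` and the divided difference
operators `∂_1, …, ∂_m`. -/
noncomputable def nilHecke (k : Type) [Field k] (m : ℕ)
    (D : Fin m → Module.End k (MvPolynomial (Fin (m + 1)) k)) :
    Subalgebra k (Module.End k (MvPolynomial (Fin (m + 1)) k)) :=
  Algebra.adjoin k
    ((Set.range fun j : Fin (m + 1) => mulOp k m (X j)) ∪ Set.range D)

lemma mulOp_eq_lmul (k : Type) [Field k] (m : ℕ) (p : MvPolynomial (Fin (m + 1)) k) :
    mulOp k m p = Algebra.lmul k (MvPolynomial (Fin (m + 1)) k) p := by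
  exact LinearMap.ext fun f => rfl

lemma mulOp_mem (k : Type) [Field k] (m : ℕ)
    (D : Fin m → Module.End k (MvPolynomial (Fin (m + 1)) k))
    (p : MvPolynomial (Fin (m + 1)) k) : mulOp k m p ∈ nilHecke k m D := by
  have hp : p ∈ Algebra.adjoin k (Set.range (X : Fin (m+1) → MvPolynomial (Fin (m+1)) k)) := by
    rw [MvPolynomial.adjoin_range_X]; trivial
  have : mulOp k m p ∈ (Algebra.adjoin k
      (Set.range (X : Fin (m+1) → MvPolynomial (Fin (m+1)) k))).map
      (Algebra.lmul k (MvPolynomial (Fin (m + 1)) k)) := by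
    rw [mulOp_eq_lmul]; exact Subalgebra.mem_map.2 ⟨p, hp, rfl⟩
  rw [AlgHom.map_adjoin] at this
  refine Algebra.adjoin_mono ?_ this
  rintro _ ⟨_, ⟨j, rfl⟩, rfl⟩
  exact Or.inl ⟨j, (mulOp_eq_lmul k m (X j)).symm⟩

lemma X_sub_ne (k : Type) [Field k] (m : ℕ) (i : Fin m) :
    (X i.castSucc - X i.succ : MvPolynomial (Fin (m + 1)) k) ≠ 0 := by
  rw [sub_ne_zero]
  intro h
  exact (Fin.castSucc_lt_succ : i.castSucc < i.succ).ne (MvPolynomial.X_injective h)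

/-!
STATEMENT 10.  The center of the nilHecke algebra `H_{m+1}` consists exactly of the
operators of multiplication by symmetric polynomials: every multiplication operator by a
symmetric polynomial lies in `H_{m+1}`, and an element `T ∈ H_{m+1}` is central in
`H_{m+1}` if and only if `T` is multiplication by a symmetric polynomial.  (In particular
`Z(H_{m+1})` is isomorphic, via the multiplication-operator embedding, to the ring of
symmetric polynomials `k[x_1, …, x_{m+1}]^{S_{m+1}}`.) -/
theorem stmt10 (k : Type) [Field k] (m : ℕ)
    (D : Fin m → Module.End k (MvPolynomial (Fin (m + 1)) k))
    (hD : IsDividedDifferenceFamily k m D) :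
    (∀ p : MvPolynomial (Fin (m + 1)) k, p.IsSymmetric → mulOp k m p ∈ nilHecke k m D) ∧
    (∀ T ∈ nilHecke k m D,
      ((∀ S ∈ nilHecke k m D, T * S = S * T) ↔
        ∃ p : MvPolynomial (Fin (m + 1)) k, p.IsSymmetric ∧ T = mulOp k m p)) := by
  set R := MvPolynomial (Fin (m + 1)) k
  have key : ∀ (i : Fin m) (p : R), rename (Equiv.swap i.castSucc i.succ) p = p →
      D i * mulOp k m p = mulOp k m p * D i := by
    intro i p hp
    refine LinearMap.ext fun f => ?_
    have h1 := hD i (p * f)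
    have h2 := hD i f
    have hm : rename (Equiv.swap i.castSucc i.succ) (p * f)
        = p * rename (Equiv.swap i.castSucc i.succ) f := by rw [map_mul, hp]
    rw [hm, ← mul_sub, ← h2, show p * ((X i.castSucc - X i.succ) * D i f)
        = (X i.castSucc - X i.succ) * (p * D i f) by ring] at h1
    have := mul_left_cancel₀ (X_sub_ne k m i) h1
    simpa [mulOp, LinearMap.mulLeft_apply, Module.End.mul_apply] using this
  refine ⟨fun p _ => mulOp_mem k m D p, fun T hT => ⟨fun hc => ?_, ?_⟩⟩
  · have hXmem : ∀ j : Fin (m+1), mulOp k m (X j) ∈ nilHecke k m D :=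
      fun j => Algebra.subset_adjoin (Or.inl ⟨j, rfl⟩)
    have hcomm : ∀ f : R, T * mulOp k m f = mulOp k m f * T := by
      intro f
      have hf : f ∈ Algebra.adjoin k (Set.range (X : Fin (m+1) → R)) := by
        rw [MvPolynomial.adjoin_range_X]; trivial
      induction hf using Algebra.adjoin_induction with
      | mem g hg =>
        obtain ⟨j, rfl⟩ := hg
        exact hc _ (hXmem j)
      | algebraMap r =>
        rw [mulOp_eq_lmul, (Algebra.lmul k R).commutes r]
        exact (Algebra.commutes r T).symm
      | add g h _ _ ihg ihh =>
        simp only [mulOp_eq_lmul, map_add] at *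
        rw [mul_add, add_mul, ihg, ihh]
      | mul g h _ _ ihg ihh =>
        simp only [mulOp_eq_lmul, map_mul] at *
        rw [← mul_assoc, ihg, mul_assoc, ihh, mul_assoc]
    set p : R := T 1 with hpdef
    have hTp : T = mulOp k m p := by
      refine LinearMap.ext fun f => ?_
      have := congrArg (fun S : Module.End k R => S 1) (hcomm f)
      simp only [Module.End.mul_apply, mulOp, LinearMap.mulLeft_apply, mul_one] at this
      simpa [mulOp, LinearMap.mulLeft_apply, mul_comm] using this
    have hswap : ∀ i : Fin m, rename (Equiv.swap i.castSucc i.succ) p = p := by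
      intro i
      have hDi : D i ∈ nilHecke k m D := Algebra.subset_adjoin (Or.inr ⟨i, rfl⟩)
      have hcd := hc _ hDi
      rw [hTp] at hcd
      have hf : ∀ f : R, p * D i f = D i (p * f) := by
        intro f
        have := congrArg (fun S : Module.End k R => S f) hcd
        simpa [Module.End.mul_apply, mulOp, LinearMap.mulLeft_apply] using this
      set σ := Equiv.swap i.castSucc i.succ
      have h3 : p * ((1:R) - rename σ 1) = p * 1 - rename σ p * rename σ 1 :=
        calc p * ((1:R) - rename σ 1)
            = p * ((X i.castSucc - X i.succ) * D i 1) := by rw [hD i 1]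
          _ = (X i.castSucc - X i.succ) * (p * D i 1) := by ring
          _ = (X i.castSucc - X i.succ) * D i (p * 1) := by rw [hf]
          _ = p * 1 - rename σ (p * 1) := hD i (p * 1)
          _ = p * 1 - rename σ p * rename σ 1 := by rw [map_mul]
      rw [map_one, sub_self, mul_zero, mul_one, mul_one] at h3
      linear_combination h3
    refine ⟨p, ?_, hTp⟩
    intro e
    have he : e ∈ Submonoid.closure
        (Set.range fun i : Fin m => Equiv.swap i.castSucc i.succ) := by
      rw [Equiv.Perm.mclosure_swap_castSucc_succ]; trivial
    induction he using Submonoid.closure_induction with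
    | mem g hg => obtain ⟨i, rfl⟩ := hg; exact hswap i
    | one => simp
    | mul g h _ _ ihg ihh =>
      rw [show ⇑(g * h) = ⇑g ∘ ⇑h from rfl, ← rename_rename, ihh, ihg]
  · rintro ⟨p, hsym, rfl⟩
    intro S hS
    induction hS using Algebra.adjoin_induction with
    | mem g hg =>
      rcases hg with ⟨j, rfl⟩ | ⟨i, rfl⟩
      · show mulOp k m p * mulOp k m (X j) = mulOp k m (X j) * mulOp k m p
        rw [mulOp_eq_lmul, mulOp_eq_lmul, ← map_mul, ← map_mul, mul_comm]
      · exact (key i p (hsym _)).symm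
    | algebraMap r => exact (Algebra.commutes r _).symm
    | add g h _ _ ihg ihh => rw [mul_add, add_mul, ihg, ihh]
    | mul g h _ _ ihg ihh => rw [← mul_assoc, ihg, mul_assoc, ihh, ← mul_assoc]
end

section
/- The k-algebra e_m H_m e_m (with unit e_m) is isomorphic to the ring of symmetric polynomials k[x_1, …, x_m]^{S_m}, where e_m = ∂_{w_0} ∘ (multiplication by x_1^{m−1} x_2^{m−2} ⋯ x_{m−1}) is the idempotent of H_m associated to a fixed reduced word (i_1, …, i_N) of the longest element w_0 ∈ S_m, ∂_{w_0} = ∂_{i_1} ∘ ⋯ ∘ ∂_{i_N}, N = m(m−1)/2. -/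
set_option synthInstance.maxHeartbeats 1000000

open MvPolynomial

set_option maxHeartbeats 4000000

namespace Stmt14Aux

open Equiv Finset


open Equiv Finset

variable {n : ℕ}

def invSet (w : Equiv.Perm (Fin n)) : Finset (Fin n × Fin n) :=
  Finset.univ.filter fun p => p.1 < p.2 ∧ w p.2 < w p.1

def invNum (w : Equiv.Perm (Fin n)) : ℕ := (invSet w).card

def pairsSet (n : ℕ) : Finset (Fin n × Fin n) := Finset.univ.filter fun p => p.1 < p.2

lemma mem_invSet {w : Equiv.Perm (Fin n)} {p : Fin n × Fin n} :
    p ∈ invSet w ↔ p.1 < p.2 ∧ w p.2 < w p.1 := by simp [invSet]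

lemma invSet_subset (w : Equiv.Perm (Fin n)) : invSet w ⊆ pairsSet n := by
  intro p hp
  simp only [pairsSet, Finset.mem_filter, Finset.mem_univ, true_and]
  exact (mem_invSet.mp hp).1

lemma invNum_le (w : Equiv.Perm (Fin n)) : invNum w ≤ (pairsSet n).card :=
  Finset.card_le_card (invSet_subset w)

lemma card_pairsSet : (pairsSet n).card = n * (n - 1) / 2 := by
  have h1 : (pairsSet n).card = ∑ p : Fin n × Fin n, if p.1 < p.2 then 1 else 0 := by
    rw [pairsSet, Finset.card_filter]
  rw [h1, Fintype.sum_prod_type]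
  have h2 : ∀ a : Fin n, (∑ b : Fin n, if a < b then 1 else 0) = (n - 1 - (a : ℕ)) := by
    intro a
    have : (∑ b : Fin n, if a < b then 1 else 0) = (Finset.univ.filter fun b => a < b).card :=
      (Finset.card_filter _ _).symm
    rw [this]
    have : (Finset.univ.filter fun b => a < b) = Finset.Ioi a := by
      ext b; simp
    rw [this, Fin.card_Ioi]
  simp only [h2]
  rw [Fin.sum_univ_eq_sum_range (fun i => n - 1 - i) n]
  rw [Finset.sum_range_reflect (fun i => i) n, ← Finset.sum_range_id]

lemma invNum_one : invNum (1 : Equiv.Perm (Fin n)) = 0 := by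
  rw [invNum, Finset.card_eq_zero, Finset.eq_empty_iff_forall_notMem]
  intro p hp
  obtain ⟨h1, h2⟩ := mem_invSet.mp hp
  simp only [Equiv.Perm.one_apply] at h2
  exact absurd h1 (not_lt.mpr h2.le)

lemma invSet_revPerm : invSet (Fin.revPerm : Equiv.Perm (Fin n)) = pairsSet n := by
  ext p
  simp only [mem_invSet, pairsSet, Finset.mem_filter, Finset.mem_univ, true_and,
    Fin.revPerm_apply, Fin.rev_lt_rev, and_self]

lemma invNum_revPerm : invNum (Fin.revPerm : Equiv.Perm (Fin n)) = (pairsSet n).card := by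
  rw [invNum, invSet_revPerm]

lemma eq_revPerm_of_invNum (w : Equiv.Perm (Fin n)) (h : invNum w = (pairsSet n).card) :
    w = Fin.revPerm := by
  have hset : invSet w = pairsSet n :=
    Finset.eq_of_subset_of_card_le (invSet_subset w) (le_of_eq h.symm)
  have hanti : ∀ p q : Fin n, p < q → w q < w p := by
    intro p q hpq
    have hm : (p, q) ∈ invSet w := by
      rw [hset]
      simp only [pairsSet, Finset.mem_filter, Finset.mem_univ, true_and]
      exact hpq
    exact (mem_invSet.mp hm).2
  have hmono : StrictMono (⇑w ∘ ⇑(Fin.revPerm : Equiv.Perm (Fin n))) := by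
    intro x y hxy
    exact hanti _ _ ((Fin.rev_lt_rev).mpr hxy)
  have hrange : Set.range (⇑w ∘ ⇑(Fin.revPerm : Equiv.Perm (Fin n))) = Set.range (id : Fin n → Fin n) := by
    rw [Set.range_id, Set.range_comp, Equiv.range_eq_univ, Set.image_univ, Equiv.range_eq_univ]
  have hid : ⇑w ∘ ⇑(Fin.revPerm : Equiv.Perm (Fin n)) = id := by
    have inst : WellFoundedLT (Fin n) := inferInstance
    exact (@StrictMono.range_inj (Fin n) (Fin n) _ _ inst _ _ hmono strictMono_id).mp hrange
  refine Equiv.ext fun x => ?_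
  have h2 := congrFun hid x.rev
  simp only [Function.comp_apply, Fin.revPerm_apply, Fin.rev_rev, id_eq] at h2
  simp only [Fin.revPerm_apply]
  exact h2

lemma swap_lt_swap_iff {a b u v : Fin n} (hab : (a : ℕ) + 1 = b) (huv : u < v) :
    Equiv.swap a b v < Equiv.swap a b u ↔ u = a ∧ v = b := by
  have hne : a ≠ b := by
    intro h; rw [h] at hab; omega
  by_cases hua : u = a
  · subst hua
    by_cases hvb : v = b
    · subst hvb
      rw [Equiv.swap_apply_left, Equiv.swap_apply_right]
      simp only [and_self, iff_true]
      exact huv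
    · have hvu : v ≠ u := (ne_of_gt huv)
      have hv : (v : ℕ) > (u : ℕ) + 1 := by
        have h1 : (v : ℕ) > (u : ℕ) := huv
        have h2 : (v : ℕ) ≠ (u : ℕ) + 1 := by
          intro h; apply hvb; apply Fin.ext; omega
        omega
      rw [Equiv.swap_apply_left, Equiv.swap_apply_of_ne_of_ne hvu hvb]
      constructor
      · intro h; exfalso; rw [Fin.lt_def] at h; omega
      · rintro ⟨-, h⟩; exact absurd h hvb
  · by_cases hub : u = b
    · subst hub
      have hva : v ≠ a := by
        intro h; subst h; rw [Fin.lt_def] at huv; omega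
      have hvb : v ≠ u := (ne_of_gt huv)
      rw [Equiv.swap_apply_right, Equiv.swap_apply_of_ne_of_ne hva hvb]
      constructor
      · intro h; exfalso; rw [Fin.lt_def] at h; rw [Fin.lt_def] at huv; omega
      · rintro ⟨h, -⟩; exact absurd h hua
    · by_cases hva : v = a
      · subst hva
        rw [Equiv.swap_apply_left, Equiv.swap_apply_of_ne_of_ne hua hub]
        constructor
        · intro h; exfalso; rw [Fin.lt_def] at h huv; omega
        · rintro ⟨h, -⟩; exact absurd h hua
      · by_cases hvb : v = b
        · subst hvb
          have hub' : (u : ℕ) < a := by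
            rw [Fin.lt_def] at huv
            have : (u : ℕ) ≠ (a : ℕ) := fun h => hua (Fin.ext h)
            omega
          rw [Equiv.swap_apply_right, Equiv.swap_apply_of_ne_of_ne hua hub]
          constructor
          · intro h; exfalso; rw [Fin.lt_def] at h; omega
          · rintro ⟨h, -⟩; exact absurd h hua
        · rw [Equiv.swap_apply_of_ne_of_ne hua hub, Equiv.swap_apply_of_ne_of_ne hva hvb]
          constructor
          · intro h; exact absurd huv (not_lt.mpr h.le)
          · rintro ⟨h, -⟩; exact absurd h hua

lemma invSet_swap_mul_of_lt {a b : Fin n} (hab : (a : ℕ) + 1 = b) (w : Equiv.Perm (Fin n))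
    (h : w.symm a < w.symm b) :
    invSet (Equiv.swap a b * w) = insert (w.symm a, w.symm b) (invSet w) := by
  have hltab : a < b := by
    rw [Fin.lt_def]; omega
  ext p
  obtain ⟨p1, p2⟩ := p
  simp only [mem_invSet, Finset.mem_insert, Prod.mk.injEq, Equiv.Perm.mul_apply]
  constructor
  · rintro ⟨h1, h2⟩
    rcases lt_trichotomy (w p1) (w p2) with hlt | heq | hgt
    · obtain ⟨ha, hb⟩ := (swap_lt_swap_iff hab hlt).mp h2
      left
      constructor
      · rw [← ha, Equiv.symm_apply_apply]
      · rw [← hb, Equiv.symm_apply_apply]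
    · exact absurd (w.injective heq) (ne_of_lt h1)
    · right; exact ⟨h1, hgt⟩
  · rintro (⟨rfl, rfl⟩ | ⟨h1, h2⟩)
    · refine ⟨h, ?_⟩
      rw [Equiv.apply_symm_apply, Equiv.apply_symm_apply, Equiv.swap_apply_left,
        Equiv.swap_apply_right]
      exact hltab
    · refine ⟨h1, ?_⟩
      have hne : Equiv.swap a b (w p2) ≠ Equiv.swap a b (w p1) := by
        intro hEq
        have := (Equiv.injective (Equiv.swap a b)) hEq
        exact absurd (w.injective this) (ne_of_gt h1)
      have hnot : ¬ (Equiv.swap a b (w p1) < Equiv.swap a b (w p2)) := by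
        intro hcon
        obtain ⟨ha, hb⟩ := (swap_lt_swap_iff hab h2).mp hcon
        have hp2 : p2 = w.symm a := by rw [← ha, Equiv.symm_apply_apply]
        have hp1 : p1 = w.symm b := by rw [← hb, Equiv.symm_apply_apply]
        rw [hp1, hp2] at h1
        exact absurd h (not_lt.mpr h1.le)
      exact lt_of_le_of_ne (not_lt.mp hnot) hne

lemma invSet_swap_mul_of_gt {a b : Fin n} (hab : (a : ℕ) + 1 = b) (w : Equiv.Perm (Fin n))
    (h : w.symm b < w.symm a) :
    invSet (Equiv.swap a b * w) = (invSet w).erase (w.symm b, w.symm a) := by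
  have hltab : a < b := by rw [Fin.lt_def]; omega
  ext p
  obtain ⟨p1, p2⟩ := p
  simp only [mem_invSet, Finset.mem_erase, Prod.mk.injEq, Equiv.Perm.mul_apply, ne_eq, not_and]
  constructor
  · rintro ⟨h1, h2⟩
    rcases lt_trichotomy (w p1) (w p2) with hlt | heq | hgt
    · obtain ⟨ha, hb⟩ := (swap_lt_swap_iff hab hlt).mp h2
      exfalso
      have hp1 : p1 = w.symm a := by rw [← ha, Equiv.symm_apply_apply]
      have hp2 : p2 = w.symm b := by rw [← hb, Equiv.symm_apply_apply]
      rw [hp1, hp2] at h1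
      exact absurd h (not_lt.mpr h1.le)
    · exact absurd (w.injective heq) (ne_of_lt h1)
    · refine ⟨?_, h1, hgt⟩
      intro hp1 hp2
      rw [hp1, hp2] at h2
      rw [Equiv.apply_symm_apply, Equiv.apply_symm_apply, Equiv.swap_apply_left,
        Equiv.swap_apply_right] at h2
      exact absurd hltab (not_lt.mpr h2.le)
  · rintro ⟨hne, h1, h2⟩
    refine ⟨h1, ?_⟩
    have hne2 : Equiv.swap a b (w p2) ≠ Equiv.swap a b (w p1) := by
      intro hEq
      have := (Equiv.injective (Equiv.swap a b)) hEq
      exact absurd (w.injective this) (ne_of_gt h1)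
    have hnot : ¬ (Equiv.swap a b (w p1) < Equiv.swap a b (w p2)) := by
      intro hcon
      obtain ⟨ha, hb⟩ := (swap_lt_swap_iff hab h2).mp hcon
      have hp2 : p2 = w.symm a := by rw [← ha, Equiv.symm_apply_apply]
      have hp1 : p1 = w.symm b := by rw [← hb, Equiv.symm_apply_apply]
      exact hne hp1 hp2
    exact lt_of_le_of_ne (not_lt.mp hnot) hne2

lemma invNum_swap_mul_of_lt {a b : Fin n} (hab : (a : ℕ) + 1 = b) (w : Equiv.Perm (Fin n))
    (h : w.symm a < w.symm b) :
    invNum (Equiv.swap a b * w) = invNum w + 1 := by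
  rw [invNum, invNum, invSet_swap_mul_of_lt hab w h]
  rw [Finset.card_insert_of_notMem]
  intro hmem
  obtain ⟨-, h2⟩ := mem_invSet.mp hmem
  simp only [Equiv.apply_symm_apply] at h2
  rw [Fin.lt_def] at h2
  omega

lemma invNum_swap_mul_of_gt {a b : Fin n} (hab : (a : ℕ) + 1 = b) (w : Equiv.Perm (Fin n))
    (h : w.symm b < w.symm a) :
    invNum (Equiv.swap a b * w) + 1 = invNum w := by
  rw [invNum, invNum, invSet_swap_mul_of_gt hab w h]
  rw [Finset.card_erase_add_one]
  rw [mem_invSet]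
  refine ⟨h, ?_⟩
  simp only [Equiv.apply_symm_apply]
  rw [Fin.lt_def]
  omega



open Equiv Finset

variable {n : ℕ}

variable {m : ℕ}

/-- the `i`-th simple transposition in `S_{m+1}` -/
def sw (i : Fin m) : Equiv.Perm (Fin (m + 1)) := Equiv.swap i.castSucc i.succ

lemma sw_hab (i : Fin m) : ((i.castSucc : Fin (m + 1)) : ℕ) + 1 = ((i.succ : Fin (m + 1)) : ℕ) := by
  simp

lemma sw_symm (i : Fin m) : (sw i).symm = sw i := Equiv.symm_swap _ _

lemma sw_apply_castSucc (i : Fin m) : sw i i.castSucc = i.succ := Equiv.swap_apply_left _ _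

lemma sw_apply_succ (i : Fin m) : sw i i.succ = i.castSucc := Equiv.swap_apply_right _ _

lemma sw_apply_of_ne (i : Fin m) (t : Fin (m + 1)) (h1 : (t : ℕ) ≠ (i : ℕ))
    (h2 : (t : ℕ) ≠ (i : ℕ) + 1) : sw i t = t := by
  apply Equiv.swap_apply_of_ne_of_ne
  · intro h; apply h1; rw [h]; simp
  · intro h; apply h2; rw [h]; simp

lemma sw_mul_sw_mul (i : Fin m) (w : Equiv.Perm (Fin (m + 1))) : sw i * (sw i * w) = w := by
  rw [← mul_assoc, sw, Equiv.swap_mul_self, one_mul]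

lemma mul_symm_apply (σ w : Equiv.Perm (Fin (m + 1))) (t : Fin (m + 1)) :
    (σ * w).symm t = w.symm (σ.symm t) := rfl

def wordProd (l : List (Fin m)) : Equiv.Perm (Fin (m + 1)) := (l.map sw).prod

@[simp] lemma wordProd_nil : wordProd ([] : List (Fin m)) = 1 := rfl

@[simp] lemma wordProd_cons (i : Fin m) (l : List (Fin m)) :
    wordProd (i :: l) = sw i * wordProd l := by
  simp [wordProd]

/-- descent -/
def Des (i : Fin m) (w : Equiv.Perm (Fin (m + 1))) : Prop :=
  w.symm i.succ < w.symm i.castSucc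

lemma invNum_sw_mul_of_des {i : Fin m} {w : Equiv.Perm (Fin (m + 1))} (h : Des i w) :
    invNum (sw i * w) + 1 = invNum w :=
  invNum_swap_mul_of_gt (sw_hab i) w h

lemma invNum_sw_mul_of_not_des {i : Fin m} {w : Equiv.Perm (Fin (m + 1))} (h : ¬ Des i w) :
    invNum (sw i * w) = invNum w + 1 := by
  apply invNum_swap_mul_of_lt (sw_hab i) w
  have hne : w.symm i.castSucc ≠ w.symm i.succ :=
    w.symm.injective.ne (Fin.castSucc_lt_succ : i.castSucc < i.succ).ne
  exact lt_of_le_of_ne (not_lt.mp h) hne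

def Red (l : List (Fin m)) : Prop := invNum (wordProd l) = l.length

lemma red_nil : Red ([] : List (Fin m)) := by
  rw [Red, wordProd_nil, invNum_one]; rfl

lemma invNum_wordProd_le (l : List (Fin m)) : invNum (wordProd l) ≤ l.length := by
  induction l with
  | nil => rw [wordProd_nil, invNum_one]; exact Nat.zero_le _
  | cons i t ih =>
    rw [wordProd_cons, List.length_cons]
    by_cases h : Des i (wordProd t)
    · have := invNum_sw_mul_of_des h; omega
    · have := invNum_sw_mul_of_not_des h; omega

lemma red_cons_iff {i : Fin m} {t : List (Fin m)} :
    Red (i :: t) ↔ Red t ∧ ¬ Des i (wordProd t) := by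
  have hle := invNum_wordProd_le t
  constructor
  · intro h
    rw [Red, wordProd_cons, List.length_cons] at h
    by_cases hd : Des i (wordProd t)
    · have := invNum_sw_mul_of_des hd; omega
    · have := invNum_sw_mul_of_not_des hd
      exact ⟨by rw [Red]; omega, hd⟩
  · rintro ⟨h1, h2⟩
    have := invNum_sw_mul_of_not_des h2
    rw [Red] at h1
    rw [Red, wordProd_cons, List.length_cons]
    omega

lemma des_head {i : Fin m} {t : List (Fin m)} (h : Red (i :: t)) :
    Des i (wordProd (i :: t)) := by
  obtain ⟨h1, h2⟩ := red_cons_iff.mp h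
  by_contra hd
  have e1 := invNum_sw_mul_of_not_des h2
  have e2 := invNum_sw_mul_of_not_des hd
  rw [wordProd_cons, sw_mul_sw_mul] at e2
  omega

lemma exists_descent (w : Equiv.Perm (Fin (m + 1))) (hw : w ≠ 1) : ∃ i : Fin m, Des i w := by
  by_contra hcon
  push_neg at hcon
  have hmono : StrictMono (⇑w.symm) := by
    rw [Fin.strictMono_iff_lt_succ]
    intro i
    have hne : w.symm i.castSucc ≠ w.symm i.succ :=
      w.symm.injective.ne (Fin.castSucc_lt_succ : i.castSucc < i.succ).ne
    exact lt_of_le_of_ne (not_lt.mp (hcon i)) hne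
  have hrange : Set.range (⇑w.symm) = Set.range (id : Fin (m + 1) → Fin (m + 1)) := by
    rw [Set.range_id, Equiv.range_eq_univ]
  have hid : ⇑w.symm = id := by
    have inst : WellFoundedLT (Fin (m + 1)) := inferInstance
    exact (@StrictMono.range_inj (Fin (m + 1)) (Fin (m + 1)) _ _ inst _ _ hmono
      strictMono_id).mp hrange
  apply hw
  have : w.symm = 1 := Equiv.ext fun x => congrFun hid x
  calc w = (w.symm).symm := rfl
  _ = (1 : Equiv.Perm (Fin (m+1))).symm := by rw [this]
  _ = 1 := rfl

lemma exists_red : ∀ (N : ℕ) (w : Equiv.Perm (Fin (m + 1))), invNum w = N →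
    ∃ l : List (Fin m), wordProd l = w ∧ l.length = N := by
  intro N
  induction N using Nat.strong_induction_on with
  | _ N IH =>
  intro w hw
  by_cases h1 : w = 1
  · refine ⟨[], ?_, ?_⟩
    · rw [wordProd_nil, h1]
    · rw [← hw, h1, invNum_one]; rfl
  · obtain ⟨i, hi⟩ := exists_descent w h1
    have hstep := invNum_sw_mul_of_des hi
    obtain ⟨l, hl, hlen⟩ := IH (invNum (sw i * w)) (by omega) _ rfl
    refine ⟨i :: l, ?_, ?_⟩
    · rw [wordProd_cons, hl, sw_mul_sw_mul]
    · rw [List.length_cons, hlen]; omega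

lemma swap_braid {x y z : Fin (m + 1)} (hxy : x ≠ y) (hxz : x ≠ z) (hyz : y ≠ z) :
    Equiv.swap x y * (Equiv.swap y z * Equiv.swap x y) =
      Equiv.swap y z * (Equiv.swap x y * Equiv.swap y z) := by
  have h1 : Equiv.swap y z * Equiv.swap x y * Equiv.swap y z = Equiv.swap z x :=
    Equiv.swap_mul_swap_mul_swap hxy hxz
  have h2 := Equiv.swap_mul_swap_mul_swap (Ne.symm hyz) (Ne.symm hxz)
  rw [Equiv.swap_comm y x, Equiv.swap_comm z y] at h2
  rw [← mul_assoc, ← mul_assoc, h2, h1, Equiv.swap_comm]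

lemma sw_braid {i j : Fin m} (hij : (i : ℕ) + 1 = (j : ℕ)) :
    sw i * (sw j * sw i) = sw j * (sw i * sw j) := by
  have hyy : (i.succ : Fin (m + 1)) = j.castSucc := by
    apply Fin.ext; simp [← hij]
  have h1 : (i.castSucc : Fin (m+1)) ≠ i.succ := (Fin.castSucc_lt_succ : i.castSucc < i.succ).ne
  have h2 : (i.castSucc : Fin (m+1)) ≠ j.succ := by
    intro h
    have := congrArg (fun t : Fin (m+1) => (t : ℕ)) h
    simp at this; omega
  have h3 : (i.succ : Fin (m+1)) ≠ j.succ := by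
    intro h
    have := congrArg (fun t : Fin (m+1) => (t : ℕ)) h
    simp at this; omega
  rw [sw, sw, ← hyy]
  exact swap_braid h1 h2 h3

lemma swap_disjoint_comm {x y c d : Fin (m + 1)} (h1 : x ≠ c) (h2 : x ≠ d) (h3 : y ≠ c)
    (h4 : y ≠ d) : Equiv.swap x y * Equiv.swap c d = Equiv.swap c d * Equiv.swap x y := by
  refine Equiv.ext fun t => ?_
  simp only [Equiv.Perm.mul_apply]
  rcases eq_or_ne t x with rfl | htx
  · simp only [Equiv.swap_apply_of_ne_of_ne h1 h2, Equiv.swap_apply_left,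
      Equiv.swap_apply_of_ne_of_ne h3 h4]
  rcases eq_or_ne t y with rfl | hty
  · simp only [Equiv.swap_apply_of_ne_of_ne h3 h4, Equiv.swap_apply_right,
      Equiv.swap_apply_of_ne_of_ne h1 h2]
  rcases eq_or_ne t c with rfl | htc
  · simp only [Equiv.swap_apply_of_ne_of_ne htx hty, Equiv.swap_apply_left,
      Equiv.swap_apply_of_ne_of_ne (Ne.symm h1) (Ne.symm h3),
      Equiv.swap_apply_of_ne_of_ne (Ne.symm h2) (Ne.symm h4)]
  rcases eq_or_ne t d with rfl | htd
  · simp only [Equiv.swap_apply_of_ne_of_ne htx hty, Equiv.swap_apply_right,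
      Equiv.swap_apply_of_ne_of_ne (Ne.symm h2) (Ne.symm h4),
      Equiv.swap_apply_of_ne_of_ne (Ne.symm h1) (Ne.symm h3)]
  · simp only [Equiv.swap_apply_of_ne_of_ne htx hty, Equiv.swap_apply_of_ne_of_ne htc htd]

lemma sw_comm {i j : Fin m} (hij : (i : ℕ) + 2 ≤ (j : ℕ)) : sw i * sw j = sw j * sw i := by
  have hc := Fin.is_lt j
  apply swap_disjoint_comm <;>
    · intro h
      have := congrArg (fun t : Fin (m+1) => (t : ℕ)) h
      simp at this; omega


lemma des_iff {i : Fin m} {w : Equiv.Perm (Fin (m + 1))} :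
    Des i w ↔ w.symm i.succ < w.symm i.castSucc := Iff.rfl

theorem wd {M : Type} [Monoid M] (DD : Fin m → M)
    (hbraid : ∀ i j : Fin m, (i : ℕ) + 1 = (j : ℕ) →
      DD i * DD j * DD i = DD j * DD i * DD j)
    (hcomm : ∀ i j : Fin m, (i : ℕ) + 2 ≤ (j : ℕ) → DD i * DD j = DD j * DD i) :
    ∀ (N : ℕ) (l l' : List (Fin m)), l.length = N → Red l → Red l' →
      wordProd l = wordProd l' → (l.map DD).prod = (l'.map DD).prod := by
  intro N
  induction N using Nat.strong_induction_on with
  | _ N IH =>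
  intro l l' hlen hl hl' hw
  have hlen' : l'.length = N := by
    rw [Red] at hl hl'
    rw [← hl', ← hw, hl, hlen]
  cases l with
  | nil =>
    cases l' with
    | nil => rfl
    | cons j t' => simp only [List.length_nil, List.length_cons] at hlen hlen'; omega
  | cons i t =>
  cases l' with
  | nil => simp only [List.length_nil, List.length_cons] at hlen hlen'; omega
  | cons j t' =>
  have hNt : t.length + 1 = N := by simpa using hlen
  have hNt' : t'.length + 1 = N := by simpa using hlen'
  by_cases hij : i = j
  · subst hij
    obtain ⟨hredt, -⟩ := red_cons_iff.mp hl
    obtain ⟨hredt', -⟩ := red_cons_iff.mp hl'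
    have hwt : wordProd t = wordProd t' := by
      have h2 := hw
      rw [wordProd_cons, wordProd_cons] at h2
      exact mul_left_cancel h2
    have := IH t.length (by omega) t t' rfl hredt hredt' hwt
    simp only [List.map_cons, List.prod_cons, this]
  · have key : ∀ (a c : Fin m) (s s' : List (Fin m)), (a : ℕ) < (c : ℕ) →
        s.length + 1 = N → s'.length + 1 = N → Red (a :: s) → Red (c :: s') →
        wordProd (a :: s) = wordProd (c :: s') →
        ((a :: s).map DD).prod = ((c :: s').map DD).prod := by
      intro a c s s' hac hNs hNs' hs hs' hws
      obtain ⟨hreds, -⟩ := red_cons_iff.mp hs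
      obtain ⟨hreds', -⟩ := red_cons_iff.mp hs'
      set w := wordProd (a :: s) with hwdef
      have hinvw : invNum w = N := by
        have := hs; rw [Red] at this; rw [this, List.length_cons, hNs]
      have hda : Des a w := des_head hs
      have hdc : Des c w := by rw [hws]; exact des_head hs'
      have hwa : wordProd s = sw a * w := by
        rw [hwdef, wordProd_cons, sw_mul_sw_mul]
      have e0 := invNum_sw_mul_of_des hda
      have hc1 : (c : ℕ) < m := Fin.is_lt c
      rcases (by omega : (a : ℕ) + 1 = (c : ℕ) ∨ (a : ℕ) + 2 ≤ (c : ℕ)) with hadj | hsep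
      · -- adjacent case
        have hyy : (a.succ : Fin (m + 1)) = c.castSucc := by
          apply Fin.ext; simp [hadj]
        have A1 : sw a (c.succ : Fin (m + 1)) = c.succ := by
          apply sw_apply_of_ne <;> simp <;> omega
        have A2 : sw a (c.castSucc : Fin (m + 1)) = a.castSucc := by
          rw [← hyy, sw_apply_succ]
        have A3 : sw c (a.succ : Fin (m + 1)) = c.succ := by
          rw [hyy, sw_apply_castSucc]
        have A4 : sw c (a.castSucc : Fin (m + 1)) = a.castSucc := by
          apply sw_apply_of_ne <;> simp <;> omega
        have hzx : w.symm c.succ < w.symm a.castSucc := by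
          have h1 : w.symm c.succ < w.symm c.castSucc := hdc
          rw [← hyy] at h1
          exact h1.trans hda
        have hd1 : Des c (sw a * w) := by
          rw [des_iff, mul_symm_apply, mul_symm_apply, sw_symm, A1, A2]
          exact hzx
        have hd2 : Des a (sw c * (sw a * w)) := by
          rw [des_iff]
          simp only [mul_symm_apply, sw_symm]
          rw [A3, A4, A1, sw_apply_castSucc]
          have h1 : w.symm c.succ < w.symm c.castSucc := hdc
          rw [← hyy] at h1
          exact h1
        have e1 := invNum_sw_mul_of_des hd1
        have e2 := invNum_sw_mul_of_des hd2
        set u := sw a * (sw c * (sw a * w)) with hu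
        obtain ⟨r, hr, hrlen⟩ := exists_red (invNum u) u rfl
        have hπ1 : wordProd (c :: a :: r) = sw a * w := by
          rw [wordProd_cons, wordProd_cons, hr, hu, sw_mul_sw_mul, sw_mul_sw_mul]
        have hred1 : Red (c :: a :: r) := by
          rw [Red, hπ1, List.length_cons, List.length_cons, hrlen]
          omega
        have hteq := IH s.length (by omega) s (c :: a :: r) rfl hreds hred1
          (hwa.trans hπ1.symm)
        have hd1' : Des a (sw c * w) := by
          rw [des_iff, mul_symm_apply, mul_symm_apply, sw_symm, A3, A4]
          exact hzx
        have hd2' : Des c (sw a * (sw c * w)) := by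
          rw [des_iff]
          simp only [mul_symm_apply, sw_symm]
          rw [A1, A2, sw_apply_succ, A4]
          rw [← hyy]
          exact hda
        have e0' := invNum_sw_mul_of_des hdc
        have e1' := invNum_sw_mul_of_des hd1'
        have e2' := invNum_sw_mul_of_des hd2'
        have hbg : sw c * (sw a * (sw c * w)) = u := by
          rw [hu]
          simp only [← mul_assoc]
          have hb := sw_braid hadj
          simp only [← mul_assoc] at hb
          rw [hb]
        have hwc : wordProd s' = sw c * w := by
          rw [hws, wordProd_cons, sw_mul_sw_mul]
        have hπ2 : wordProd (a :: c :: r) = sw c * w := by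
          rw [wordProd_cons, wordProd_cons, hr, ← hbg, sw_mul_sw_mul, sw_mul_sw_mul]
        have hinv2 := congrArg invNum hbg
        have hred2 : Red (a :: c :: r) := by
          rw [Red, hπ2, List.length_cons, List.length_cons, hrlen]
          omega
        have hteq' := IH s'.length (by omega) s' (a :: c :: r) rfl hreds' hred2
          (hwc.trans hπ2.symm)
        simp only [List.map_cons, List.prod_cons] at hteq hteq' ⊢
        rw [hteq, hteq']
        simp only [← mul_assoc]
        rw [hbraid a c hadj]
      · -- separated case
        have B1 : sw a (c.succ : Fin (m + 1)) = c.succ := by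
          apply sw_apply_of_ne <;> simp <;> omega
        have B2 : sw a (c.castSucc : Fin (m + 1)) = c.castSucc := by
          apply sw_apply_of_ne <;> simp <;> omega
        have B3 : sw c (a.succ : Fin (m + 1)) = a.succ := by
          apply sw_apply_of_ne <;> simp <;> omega
        have B4 : sw c (a.castSucc : Fin (m + 1)) = a.castSucc := by
          apply sw_apply_of_ne <;> simp <;> omega
        have hd1 : Des c (sw a * w) := by
          rw [des_iff, mul_symm_apply, mul_symm_apply, sw_symm, B1, B2]
          exact hdc
        have e1 := invNum_sw_mul_of_des hd1
        set u := sw c * (sw a * w) with hu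
        obtain ⟨r, hr, hrlen⟩ := exists_red (invNum u) u rfl
        have hπ1 : wordProd (c :: r) = sw a * w := by
          rw [wordProd_cons, hr, hu, sw_mul_sw_mul]
        have hred1 : Red (c :: r) := by
          rw [Red, hπ1, List.length_cons, hrlen]
          omega
        have hteq := IH s.length (by omega) s (c :: r) rfl hreds hred1 (hwa.trans hπ1.symm)
        have hd1' : Des a (sw c * w) := by
          rw [des_iff, mul_symm_apply, mul_symm_apply, sw_symm, B3, B4]
          exact hda
        have e0' := invNum_sw_mul_of_des hdc
        have e1' := invNum_sw_mul_of_des hd1'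
        have hcg : sw a * (sw c * w) = u := by
          rw [hu, ← mul_assoc, ← mul_assoc, sw_comm hsep]
        have hwc : wordProd s' = sw c * w := by
          rw [hws, wordProd_cons, sw_mul_sw_mul]
        have hπ2 : wordProd (a :: r) = sw c * w := by
          rw [wordProd_cons, hr, ← hcg, sw_mul_sw_mul]
        have hinv2 := congrArg invNum hcg
        have hred2 : Red (a :: r) := by
          rw [Red, hπ2, List.length_cons, hrlen]
          omega
        have hteq' := IH s'.length (by omega) s' (a :: r) rfl hreds' hred2
          (hwc.trans hπ2.symm)
        simp only [List.map_cons, List.prod_cons] at hteq hteq' ⊢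
        rw [hteq, hteq']
        simp only [← mul_assoc]
        rw [hcomm a c hsep]
    rcases Nat.lt_or_ge (i : ℕ) (j : ℕ) with h | h
    · exact key i j t t' h hNt hNt' hl hl' hw
    · have hne : (i : ℕ) ≠ (j : ℕ) := fun hh => hij (Fin.ext hh)
      have hlt : (j : ℕ) < (i : ℕ) := by omega
      exact (key j i t' t hlt hNt' hNt hl' hl hw.symm).symm

theorem word_zero {M : Type} [Ring M] (DD : Fin m → M)
    (hbraid : ∀ i j : Fin m, (i : ℕ) + 1 = (j : ℕ) →
      DD i * DD j * DD i = DD j * DD i * DD j)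
    (hcomm : ∀ i j : Fin m, (i : ℕ) + 2 ≤ (j : ℕ) → DD i * DD j = DD j * DD i)
    (hsq : ∀ i, DD i * DD i = 0) :
    ∀ l : List (Fin m), ¬ Red l → (l.map DD).prod = 0 := by
  intro l
  induction l with
  | nil => intro h; exact absurd red_nil h
  | cons i t ih =>
    intro h
    by_cases hrt : Red t
    · by_cases hd : Des i (wordProd t)
      · have e := invNum_sw_mul_of_des hd
        obtain ⟨r, hr, hrlen⟩ := exists_red (invNum (sw i * wordProd t)) _ rfl
        have hπ : wordProd (i :: r) = wordProd t := by
          rw [wordProd_cons, hr, sw_mul_sw_mul]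
        have hredir : Red (i :: r) := by
          rw [Red, hπ, List.length_cons, hrlen]
          rw [Red] at hrt
          omega
        have hteq := wd DD hbraid hcomm t.length t (i :: r) rfl hrt hredir hπ.symm
        simp only [List.map_cons, List.prod_cons] at hteq ⊢
        rw [hteq, ← mul_assoc, hsq i, zero_mul]
      · exact absurd (red_cons_iff.mpr ⟨hrt, hd⟩) h
    · simp only [List.map_cons, List.prod_cons, ih hrt, mul_zero]



section Poly

variable {k : Type} [Field k] {m : ℕ}
  (D : Fin m → Module.End k (MvPolynomial (Fin (m + 1)) k))
  (hD : IsDividedDifferenceFamily k m D)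

lemma X_sub_ne {a b : Fin (m + 1)} (h : a ≠ b) :
    (X a - X b : MvPolynomial (Fin (m + 1)) k) ≠ 0 :=
  sub_ne_zero.mpr fun hh => h (X_injective hh)

lemma castSucc_ne_succ (i : Fin m) : (i.castSucc : Fin (m + 1)) ≠ i.succ :=
  (Fin.castSucc_lt_succ : i.castSucc < i.succ).ne

lemma swap_comp_self {a b : Fin (m + 1)} :
    (⇑(Equiv.swap a b) ∘ ⇑(Equiv.swap a b)) = id :=
  funext fun x => Equiv.swap_apply_self _ _ _

include hD

lemma D_invariant (i : Fin m) (f : MvPolynomial (Fin (m + 1)) k) :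
    rename (⇑(Equiv.swap i.castSucc i.succ)) (D i f) = D i f := by
  apply mul_left_cancel₀ (X_sub_ne (k := k) (castSucc_ne_succ i))
  have h := hD i f
  have h2 := congrArg (rename (⇑(Equiv.swap i.castSucc i.succ))) h
  simp only [map_mul, map_sub, rename_X, Equiv.swap_apply_left, Equiv.swap_apply_right] at h2
  rw [rename_rename, swap_comp_self, rename_id, AlgHom.id_apply] at h2
  linear_combination -h2 - h

lemma D_sq (i : Fin m) : D i * D i = 0 := by
  apply LinearMap.ext; intro f
  rw [Module.End.mul_apply, LinearMap.zero_apply]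
  apply mul_left_cancel₀ (X_sub_ne (k := k) (castSucc_ne_succ i))
  rw [mul_zero, hD i (D i f), D_invariant D hD i f, sub_self]

lemma D_braid (i j : Fin m) (hij : (i : ℕ) + 1 = (j : ℕ)) :
    D i * D j * D i = D j * D i * D j := by
  have hyy : (i.succ : Fin (m + 1)) = j.castSucc := Fin.ext (by simp [← hij])
  have hc1 : (j : ℕ) < m := Fin.is_lt j
  have hxy : (i.castSucc : Fin (m + 1)) ≠ i.succ := castSucc_ne_succ i
  have hxz : (i.castSucc : Fin (m + 1)) ≠ j.succ := by
    intro h; have := congrArg (fun t : Fin (m + 1) => (t : ℕ)) h; simp at this; omega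
  have hyz : (i.succ : Fin (m + 1)) ≠ j.succ := by
    intro h; have := congrArg (fun t : Fin (m + 1) => (t : ℕ)) h; simp at this; omega
  -- abbreviations
  set x : Fin (m + 1) := i.castSucc with hx
  set y : Fin (m + 1) := i.succ with hy
  set z : Fin (m + 1) := j.succ with hz
  have hDj : ∀ g : MvPolynomial (Fin (m + 1)) k,
      (X y - X z) * D j g = g - rename (⇑(Equiv.swap y z)) g := by
    intro g; have := hD j g; rw [← hyy] at this; exact this
  have hDjinv : ∀ g : MvPolynomial (Fin (m + 1)) k,
      rename (⇑(Equiv.swap y z)) (D j g) = D j g := by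
    intro g; have := D_invariant D hD j g; rw [← hyy] at this; exact this
  -- swap values
  have sxy_y : Equiv.swap x y y = x := Equiv.swap_apply_right _ _
  have sxy_x : Equiv.swap x y x = y := Equiv.swap_apply_left _ _
  have sxy_z : Equiv.swap x y z = z :=
    Equiv.swap_apply_of_ne_of_ne (Ne.symm hxz) (Ne.symm hyz)
  have syz_y : Equiv.swap y z y = z := Equiv.swap_apply_left _ _
  have syz_z : Equiv.swap y z z = y := Equiv.swap_apply_right _ _
  have syz_x : Equiv.swap y z x = x :=
    Equiv.swap_apply_of_ne_of_ne hxy hxz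
  have hDi : ∀ g : MvPolynomial (Fin (m + 1)) k,
      (X x - X y) * D i g = g - rename (⇑(Equiv.swap x y)) g := fun g => hD i g
  have hDiinv : ∀ g : MvPolynomial (Fin (m + 1)) k,
      rename (⇑(Equiv.swap x y)) (D i g) = D i g := fun g => D_invariant D hD i g
  apply LinearMap.ext; intro f
  simp only [Module.End.mul_apply]
  apply mul_left_cancel₀ (X_sub_ne (k := k) hxz)
  apply mul_left_cancel₀ (X_sub_ne (k := k) hyz)
  apply mul_left_cancel₀ (X_sub_ne (k := k) hxy)
  have h1 := hDi (D j (D i f))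
  have h2 := hDj (D i f)
  have h3 := congrArg (rename (⇑(Equiv.swap x y))) h2
  simp only [map_mul, map_sub, rename_X, sxy_x, sxy_y, sxy_z,
    hDiinv f] at h3
  have h4 := hDi f
  have h5 := congrArg (rename (⇑(Equiv.swap y z))) h4
  simp only [map_mul, map_sub, rename_X, syz_x, syz_y, syz_z] at h5
  have h6 := congrArg (rename (⇑(Equiv.swap x y))) h5
  simp only [map_mul, map_sub, rename_X, sxy_x, sxy_y, sxy_z] at h6
  have h1' := hDj (D i (D j f))
  have h2' := hDi (D j f)
  have h3' := congrArg (rename (⇑(Equiv.swap y z))) h2'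
  simp only [map_mul, map_sub, rename_X, syz_x, syz_y, syz_z, hDjinv f] at h3'
  have h4' := hDj f
  have h5' := congrArg (rename (⇑(Equiv.swap x y))) h4'
  simp only [map_mul, map_sub, rename_X, sxy_x, sxy_y, sxy_z] at h5'
  have h6' := congrArg (rename (⇑(Equiv.swap y z))) h5'
  simp only [map_mul, map_sub, rename_X, syz_x, syz_y, syz_z] at h6'
  have heq : rename (⇑(Equiv.swap x y)) (rename (⇑(Equiv.swap y z))
      (rename (⇑(Equiv.swap x y)) f)) =
      rename (⇑(Equiv.swap y z)) (rename (⇑(Equiv.swap x y))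
      (rename (⇑(Equiv.swap y z)) f)) := by
    rw [rename_rename, rename_rename, rename_rename, rename_rename]
    have hb := swap_braid (m := m) hxy hxz hyz
    have hb2 := congrArg (fun e : Equiv.Perm (Fin (m + 1)) => ⇑e) hb
    simp only [Equiv.Perm.coe_mul] at hb2
    rw [← Function.comp_assoc, ← Function.comp_assoc] at hb2
    rw [hb2]
  linear_combination ((X y - X z) * (X x - X z)) * h1 + (X x - X z) * h2 -
    (X y - X z) * h3 + h4 - h5 + h6 - ((X x - X y) * (X x - X z)) * h1' -
    (X x - X z) * h2' + (X x - X y) * h3' - h4' + h5' - h6' - heq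

lemma D_comm (i j : Fin m) (hij : (i : ℕ) + 2 ≤ (j : ℕ)) :
    D i * D j = D j * D i := by
  have hc1 : (j : ℕ) < m := Fin.is_lt j
  have hxy : (i.castSucc : Fin (m + 1)) ≠ i.succ := castSucc_ne_succ i
  have hcd : (j.castSucc : Fin (m + 1)) ≠ j.succ := castSucc_ne_succ j
  have hne : ∀ (s t : Fin (m + 1)), (s : ℕ) ≠ (t : ℕ) → s ≠ t := by
    intro s t h hh; exact h (congrArg _ hh)
  have hxc : (i.castSucc : Fin (m + 1)) ≠ j.castSucc := by
    apply hne; simp; omega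
  have hxd : (i.castSucc : Fin (m + 1)) ≠ j.succ := by
    apply hne; simp; omega
  have hyc : (i.succ : Fin (m + 1)) ≠ j.castSucc := by
    apply hne; simp; omega
  have hyd : (i.succ : Fin (m + 1)) ≠ j.succ := by
    apply hne; simp; omega
  set x : Fin (m + 1) := i.castSucc
  set y : Fin (m + 1) := i.succ
  set c : Fin (m + 1) := j.castSucc
  set d : Fin (m + 1) := j.succ
  have sxy_c : Equiv.swap x y c = c := Equiv.swap_apply_of_ne_of_ne (Ne.symm hxc) (Ne.symm hyc)
  have sxy_d : Equiv.swap x y d = d := Equiv.swap_apply_of_ne_of_ne (Ne.symm hxd) (Ne.symm hyd)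
  have scd_x : Equiv.swap c d x = x := Equiv.swap_apply_of_ne_of_ne hxc hxd
  have scd_y : Equiv.swap c d y = y := Equiv.swap_apply_of_ne_of_ne hyc hyd
  have hDi : ∀ g : MvPolynomial (Fin (m + 1)) k,
      (X x - X y) * D i g = g - rename (⇑(Equiv.swap x y)) g := fun g => hD i g
  have hDj : ∀ g : MvPolynomial (Fin (m + 1)) k,
      (X c - X d) * D j g = g - rename (⇑(Equiv.swap c d)) g := fun g => hD j g
  apply LinearMap.ext; intro f
  simp only [Module.End.mul_apply]
  apply mul_left_cancel₀ (X_sub_ne (k := k) hcd)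
  apply mul_left_cancel₀ (X_sub_ne (k := k) hxy)
  have h1 := hDi (D j f)
  have h2 := hDj f
  have h3 := congrArg (rename (⇑(Equiv.swap x y))) h2
  simp only [map_mul, map_sub, rename_X, sxy_c, sxy_d] at h3
  have h1' := hDj (D i f)
  have h2' := hDi f
  have h3' := congrArg (rename (⇑(Equiv.swap c d))) h2'
  simp only [map_mul, map_sub, rename_X, scd_x, scd_y] at h3'
  have heq : rename (⇑(Equiv.swap x y)) (rename (⇑(Equiv.swap c d)) f) =
      rename (⇑(Equiv.swap c d)) (rename (⇑(Equiv.swap x y)) f) := by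
    rw [rename_rename, rename_rename]
    have hb := swap_disjoint_comm (m := m) hxc hxd hyc hyd
    have hb2 := congrArg (fun e : Equiv.Perm (Fin (m + 1)) => ⇑e) hb
    simp only [Equiv.Perm.coe_mul] at hb2
    rw [hb2]
  linear_combination (X c - X d) * h1 + h2 - h3 - (X x - X y) * h1' - h2' + h3' + heq

lemma D_mul_invariant (i : Fin m) {h : MvPolynomial (Fin (m + 1)) k}
    (hinv : rename (⇑(Equiv.swap i.castSucc i.succ)) h = h)
    (f : MvPolynomial (Fin (m + 1)) k) : D i (h * f) = h * D i f := by
  apply mul_left_cancel₀ (X_sub_ne (k := k) (castSucc_ne_succ i))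
  have h1 := hD i (h * f)
  have h2 := hD i f
  have h3 : rename (⇑(Equiv.swap i.castSucc i.succ)) (h * f)
      = h * rename (⇑(Equiv.swap i.castSucc i.succ)) f := by
    rw [map_mul, hinv]
  linear_combination h1 - h * h2 - h3

lemma D_monomial (i : Fin m) (e : Fin (m + 1) → ℕ)
    (hstep : e i.castSucc = e i.succ + 1) :
    D i (∏ j, (X j : MvPolynomial (Fin (m + 1)) k) ^ e j) =
      ∏ j, (X j : MvPolynomial (Fin (m + 1)) k) ^
        (Function.update e i.castSucc (e i.succ)) j := by
  have hab : (i.castSucc : Fin (m + 1)) ≠ i.succ := castSucc_ne_succ i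
  apply mul_left_cancel₀ (X_sub_ne (k := k) hab)
  rw [hD i _]
  set a : Fin (m + 1) := i.castSucc
  set b : Fin (m + 1) := i.succ
  have hmemb : b ∈ Finset.univ.erase a := by
    rw [Finset.mem_erase]; exact ⟨Ne.symm hab, Finset.mem_univ b⟩
  have split : ∀ E : Fin (m + 1) → ℕ,
      (∏ j, (X j : MvPolynomial (Fin (m + 1)) k) ^ E j) =
      X a ^ E a * (X b ^ E b * ∏ j ∈ (Finset.univ.erase a).erase b, X j ^ E j) := by
    intro E
    rw [← Finset.mul_prod_erase Finset.univ _ (Finset.mem_univ a),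
      ← Finset.mul_prod_erase _ _ hmemb]
  -- rename of the monomial
  have hren : rename (⇑(Equiv.swap a b)) (∏ j, (X j : MvPolynomial (Fin (m + 1)) k) ^ e j)
      = ∏ j, (X j : MvPolynomial (Fin (m + 1)) k) ^ e (Equiv.swap a b j) := by
    rw [map_prod]
    simp only [map_pow, rename_X]
    calc (∏ j, (X (Equiv.swap a b j) : MvPolynomial (Fin (m + 1)) k) ^ e j)
        = ∏ j, ((X (Equiv.swap a b j) : MvPolynomial (Fin (m + 1)) k)
            ^ e (Equiv.swap a b (Equiv.swap a b j))) := by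
          apply Finset.prod_congr rfl
          intro j _
          rw [Equiv.swap_apply_self]
      _ = ∏ j, (X j : MvPolynomial (Fin (m + 1)) k) ^ e (Equiv.swap a b j) :=
          Equiv.prod_comp (Equiv.swap a b) fun t => (X t : MvPolynomial (Fin (m + 1)) k) ^ e (Equiv.swap a b t)
  rw [hren, split e, split (fun j => e (Equiv.swap a b j)), split (Function.update e a (e b))]
  have hrest : ∀ j ∈ (Finset.univ.erase a).erase b,
      e (Equiv.swap a b j) = e j ∧ Function.update e a (e b) j = e j := by
    intro j hj
    rw [Finset.mem_erase, Finset.mem_erase] at hj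
    obtain ⟨hjb, hja, -⟩ := hj
    constructor
    · rw [Equiv.swap_apply_of_ne_of_ne hja hjb]
    · rw [Function.update_of_ne hja]
  have hP1 : (∏ j ∈ (Finset.univ.erase a).erase b,
      (X j : MvPolynomial (Fin (m + 1)) k) ^ e (Equiv.swap a b j)) =
      ∏ j ∈ (Finset.univ.erase a).erase b, X j ^ e j :=
    Finset.prod_congr rfl fun j hj => by rw [(hrest j hj).1]
  have hP2 : (∏ j ∈ (Finset.univ.erase a).erase b,
      (X j : MvPolynomial (Fin (m + 1)) k) ^ (Function.update e a (e b)) j) =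
      ∏ j ∈ (Finset.univ.erase a).erase b, X j ^ e j :=
    Finset.prod_congr rfl fun j hj => by rw [(hrest j hj).2]
  rw [hP1, hP2]
  rw [Equiv.swap_apply_left, Equiv.swap_apply_right]
  rw [Function.update_self, Function.update_of_ne (Ne.symm hab)]
  rw [hstep]
  ring




end Poly


section Word

variable {k : Type} [Field k] {m : ℕ}
  (D : Fin m → Module.End k (MvPolynomial (Fin (m + 1)) k))
  (hD : IsDividedDifferenceFamily k m D)

def blk (t : ℕ) (h : t ≤ m) : List (Fin m) :=
  (List.range t).reverse.pmap (fun s hs => (⟨s, hs⟩ : Fin m))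
    (fun s hs => lt_of_lt_of_le (List.mem_range.mp (List.mem_reverse.mp hs)) h)

lemma blk_zero (h : (0 : ℕ) ≤ m) : blk 0 h = [] := rfl

lemma blk_cons (t : ℕ) (h : t + 1 ≤ m) :
    blk (t + 1) h = (⟨t, h⟩ : Fin m) :: blk t (Nat.le_of_succ_le h) := by
  simp only [blk, List.range_succ, List.reverse_append, List.reverse_singleton,
    List.singleton_append, List.pmap]

lemma blk_length (t : ℕ) (h : t ≤ m) : (blk t h).length = t := by
  simp [blk]

def stairWord : (r : ℕ) → r ≤ m → List (Fin m)
  | 0, _ => []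
  | (r + 1), h => stairWord r (Nat.le_of_succ_le h) ++ blk (r + 1) h

lemma stairWord_succ (r : ℕ) (h : r + 1 ≤ m) :
    stairWord (r + 1) h = stairWord r (Nat.le_of_succ_le h) ++ blk (r + 1) h := rfl

lemma stairWord_length : ∀ (r : ℕ) (h : r ≤ m),
    2 * (stairWord (m := m) r h).length = r * (r + 1) := by
  intro r
  induction r with
  | zero => intro h; rfl
  | succ r ih =>
    intro h
    rw [stairWord_succ, List.length_append, blk_length]
    have := ih (Nat.le_of_succ_le h)
    ring_nf
    ring_nf at this
    omega

include hD in
lemma blk_eval (r : ℕ) (hr : r ≤ m) : ∀ (t : ℕ) (ht : t ≤ r),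
    (((blk t (ht.trans hr)).map D).prod)
      (∏ j : Fin (m + 1), (X j : MvPolynomial (Fin (m + 1)) k) ^ (r - (j : ℕ))) =
    ∏ j : Fin (m + 1), (X j : MvPolynomial (Fin (m + 1)) k) ^
      (if (j : ℕ) < t then r - 1 - (j : ℕ) else r - (j : ℕ)) := by
  intro t
  induction t with
  | zero =>
    intro ht
    rw [blk_zero]
    simp only [List.map_nil, List.prod_nil, Module.End.one_apply, Nat.not_lt_zero, if_false]
  | succ t ih =>
    intro ht
    have ht' : t ≤ r := Nat.le_of_succ_le ht
    have htm : t + 1 ≤ m := ht.trans hr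
    have hcons : blk (t + 1) (ht.trans hr) = (⟨t, htm⟩ : Fin m) :: blk t (ht'.trans hr) :=
      blk_cons t htm
    rw [hcons, List.map_cons, List.prod_cons, Module.End.mul_apply, ih ht']
    have hcast : ((Fin.castSucc ⟨t, htm⟩ : Fin (m + 1)) : ℕ) = t := rfl
    have hsucc : ((Fin.succ ⟨t, htm⟩ : Fin (m + 1)) : ℕ) = t + 1 := rfl
    have hstep : (fun j : Fin (m + 1) => if (j : ℕ) < t then r - 1 - (j : ℕ) else r - (j : ℕ))
        (Fin.castSucc ⟨t, htm⟩) =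
        (fun j : Fin (m + 1) => if (j : ℕ) < t then r - 1 - (j : ℕ) else r - (j : ℕ))
        (Fin.succ ⟨t, htm⟩) + 1 := by
      simp only [hcast, hsucc]
      rw [if_neg (lt_irrefl t), if_neg (by omega)]
      omega
    rw [D_monomial D hD ⟨t, htm⟩ _ hstep]
    have hfun : Function.update
        (fun j : Fin (m + 1) => if (j : ℕ) < t then r - 1 - (j : ℕ) else r - (j : ℕ))
        (Fin.castSucc ⟨t, htm⟩)
        ((fun j : Fin (m + 1) => if (j : ℕ) < t then r - 1 - (j : ℕ) else r - (j : ℕ))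
          (Fin.succ ⟨t, htm⟩)) =
        fun j : Fin (m + 1) => if (j : ℕ) < t + 1 then r - 1 - (j : ℕ) else r - (j : ℕ) := by
      funext j
      simp only [Function.update_apply, Fin.ext_iff, hcast, hsucc]
      split_ifs <;> omega
    refine Finset.prod_congr rfl fun j _ => ?_
    simp only [hfun]

include hD in
lemma stairWord_eval : ∀ (r : ℕ) (h : r ≤ m),
    (((stairWord r h).map D).prod)
      (∏ j : Fin (m + 1), (X j : MvPolynomial (Fin (m + 1)) k) ^ (r - (j : ℕ))) = 1 := by
  intro r
  induction r with
  | zero =>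
    intro h
    simp only [stairWord, List.map_nil, List.prod_nil, Module.End.one_apply, Nat.zero_sub,
      pow_zero, Finset.prod_const_one]
  | succ r ih =>
    intro h
    rw [stairWord_succ, List.map_append, List.prod_append, Module.End.mul_apply]
    have hblk : (((blk (r + 1) h).map D).prod)
        (∏ j : Fin (m + 1), (X j : MvPolynomial (Fin (m + 1)) k) ^ (r + 1 - (j : ℕ))) =
        ∏ j : Fin (m + 1), (X j : MvPolynomial (Fin (m + 1)) k) ^
          (if (j : ℕ) < r + 1 then r + 1 - 1 - (j : ℕ) else r + 1 - (j : ℕ)) :=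
      blk_eval D hD (r + 1) h (r + 1) le_rfl
    rw [hblk]
    have hE : (∏ j : Fin (m + 1), (X j : MvPolynomial (Fin (m + 1)) k) ^
        (if (j : ℕ) < r + 1 then r + 1 - 1 - (j : ℕ) else r + 1 - (j : ℕ))) =
        ∏ j : Fin (m + 1), (X j : MvPolynomial (Fin (m + 1)) k) ^ (r - (j : ℕ)) := by
      apply Finset.prod_congr rfl
      intro j _
      congr 1
      split_ifs <;> omega
    rw [hE]
    exact ih (Nat.le_of_succ_le h)


include hD in
lemma stairWord_exists :
    ∃ l₀ : List (Fin m), 2 * l₀.length = m * (m + 1) ∧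
      ((l₀.map D).prod) (∏ j : Fin (m + 1),
        (X j : MvPolynomial (Fin (m + 1)) k) ^ (m - (j : ℕ))) = 1 :=
  ⟨stairWord m le_rfl, stairWord_length m le_rfl, stairWord_eval D hD m le_rfl⟩

end Word
section Main

variable {k : Type} [Field k] {m : ℕ}
  (D : Fin m → Module.End k (MvPolynomial (Fin (m + 1)) k))
  (hD : IsDividedDifferenceFamily k m D)

/-- symmetric w.r.t. all adjacent transpositions -/
def SymPoly (h : MvPolynomial (Fin (m + 1)) k) : Prop :=
  ∀ i : Fin m, rename (⇑(Equiv.swap i.castSucc i.succ)) h = h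

lemma isSymmetric_of_symPoly {h : MvPolynomial (Fin (m + 1)) k} (hs : SymPoly h) :
    h.IsSymmetric := by
  intro v
  obtain ⟨l, hl, -⟩ := exists_red (invNum v) v rfl
  rw [← hl]
  clear hl
  induction l with
  | nil =>
    show rename (⇑(wordProd [])) h = h
    have : wordProd ([] : List (Fin m)) = 1 := rfl
    rw [this]
    show rename (⇑(Equiv.refl (Fin (m+1)))) h = h
    simp [rename_id]
  | cons i t ih =>
    show rename (⇑(wordProd (i :: t))) h = h
    rw [wordProd_cons]
    have hco : (⇑(sw i * wordProd t) : Fin (m+1) → Fin (m+1)) = ⇑(sw i) ∘ ⇑(wordProd t) :=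
      Equiv.Perm.coe_mul _ _
    rw [hco, ← rename_rename, ih]
    exact hs i

lemma symPoly_of_isSymmetric {h : MvPolynomial (Fin (m + 1)) k} (hs : h.IsSymmetric) :
    SymPoly h := fun i => hs (Equiv.swap i.castSucc i.succ)

lemma mulOp_apply (p f : MvPolynomial (Fin (m + 1)) k) : mulOp k m p f = p * f := rfl

lemma mulOp_mul (p q : MvPolynomial (Fin (m + 1)) k) :
    mulOp k m (p * q) = mulOp k m p * mulOp k m q :=
  LinearMap.ext fun f => mul_assoc p q f

lemma mulOp_one : mulOp k m 1 = 1 := LinearMap.ext fun f => one_mul f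

lemma mulOp_mem (p : MvPolynomial (Fin (m + 1)) k) : mulOp k m p ∈ nilHecke k m D := by
  have hlm : mulOp k m p = Algebra.lmul k (MvPolynomial (Fin (m + 1)) k) p :=
    LinearMap.ext fun f => rfl
  rw [hlm]
  have hp : p ∈ Algebra.adjoin k (Set.range (X : Fin (m + 1) → MvPolynomial (Fin (m + 1)) k)) := by
    rw [MvPolynomial.adjoin_range_X]
    exact Algebra.mem_top
  have hmem : Algebra.lmul k (MvPolynomial (Fin (m + 1)) k) p ∈
      (Algebra.adjoin k (Set.range (X : Fin (m + 1) → MvPolynomial (Fin (m + 1)) k))).map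
        (Algebra.lmul k (MvPolynomial (Fin (m + 1)) k)) :=
    ⟨p, hp, rfl⟩
  rw [AlgHom.map_adjoin] at hmem
  refine Algebra.adjoin_mono ?_ hmem
  rintro T ⟨q, ⟨j, rfl⟩, rfl⟩
  left
  exact ⟨j, by exact (LinearMap.ext fun f => rfl : mulOp k m (X j) = _)⟩

include hD

lemma prodD_symm_mul (l' : List (Fin m)) {h : MvPolynomial (Fin (m + 1)) k}
    (hs : SymPoly h) (f : MvPolynomial (Fin (m + 1)) k) :
    ((l'.map D).prod) (h * f) = h * ((l'.map D).prod f) := by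
  induction l' with
  | nil => simp
  | cons i t ih =>
    rw [List.map_cons, List.prod_cons, Module.End.mul_apply, Module.End.mul_apply, ih,
      D_mul_invariant D hD i (hs i)]

theorem main (l : List (Fin m))
    (hlen : l.length = (m + 1) * m / 2)
    (hprod : (l.map fun i : Fin m => Equiv.swap i.castSucc i.succ).prod =
      (Fin.revPerm : Equiv.Perm (Fin (m + 1)))) :
    ∃ φ : ↥(MvPolynomial.symmetricSubalgebra (Fin (m + 1)) k) →ₗ[k]
        Module.End k (MvPolynomial (Fin (m + 1)) k),
      Function.Injective φ ∧
      (∀ p q, φ (p * q) = φ p * φ q) ∧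
      φ 1 = (l.map D).prod * mulOp k m (∏ j : Fin (m + 1), X j ^ (m - (j : ℕ))) ∧
      Set.range φ = {T | ∃ S ∈ nilHecke k m D,
        T = (l.map D).prod * mulOp k m (∏ j : Fin (m + 1), X j ^ (m - (j : ℕ))) * S *
          ((l.map D).prod * mulOp k m (∏ j : Fin (m + 1), X j ^ (m - (j : ℕ)))) } := by
  set xδ : MvPolynomial (Fin (m + 1)) k := ∏ j : Fin (m + 1), X j ^ (m - (j : ℕ)) with hxδ
  set e : Module.End k (MvPolynomial (Fin (m + 1)) k) := (l.map D).prod * mulOp k m xδ with he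
  have DB := D_braid D hD
  have DC := D_comm D hD
  have DS := D_sq D hD
  -- the given word is reduced
  have hwl : wordProd l = Fin.revPerm := hprod
  have hN : (pairsSet (m + 1)).card = (m + 1) * m / 2 := by
    rw [card_pairsSet]; simp
  have hredl : Red l := by
    rw [Red, hwl, invNum_revPerm, hN, hlen]
  -- the staircase word
  obtain ⟨l₀, hl₀len, hl₀eval⟩ := stairWord_exists D hD
  have hred₀ : Red l₀ := by
    by_contra hcon
    have := word_zero D DB DC DS l₀ hcon
    rw [this] at hl₀eval
    simp only [LinearMap.zero_apply] at hl₀eval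
    exact one_ne_zero hl₀eval.symm
  have hw₀ : wordProd l₀ = Fin.revPerm := by
    apply eq_revPerm_of_invNum
    rw [Red] at hred₀
    rw [hred₀, card_pairsSet]
    simp only [Nat.add_sub_cancel]
    rw [Nat.mul_comm m (m + 1)] at hl₀len
    omega
  have hDeq : (l.map D).prod = (l₀.map D).prod :=
    wd D DB DC l.length l l₀ rfl hredl hred₀ (by rw [hwl, hw₀])
  -- e 1 = 1
  have he1 : e 1 = 1 := by
    rw [he, Module.End.mul_apply, mulOp_apply, mul_one, hDeq]
    exact hl₀eval
  -- e is pointwise symmetric-linear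
  have heSym : ∀ {h : MvPolynomial (Fin (m + 1)) k}, SymPoly h →
      ∀ f, e (h * f) = h * e f := by
    intro h hs f
    rw [he, Module.End.mul_apply, Module.End.mul_apply, mulOp_apply, mulOp_apply]
    rw [show xδ * (h * f) = h * (xδ * f) by ring]
    exact prodD_symm_mul D hD l hs (xδ * f)
  -- image of e is symmetric
  have hesym : ∀ g, SymPoly (e g) := by
    intro g i
    have hnred : ¬ Red (i :: l) := by
      intro hcon
      rw [Red, List.length_cons, hlen] at hcon
      have h1 := invNum_le (wordProd (i :: l))
      rw [hN] at h1
      omega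
    have hz : ((i :: l).map D).prod = 0 := word_zero D DB DC DS _ hnred
    have hDi : D i (e g) = 0 := by
      rw [he, Module.End.mul_apply]
      have : D i (((l.map D).prod) ((mulOp k m xδ) g)) =
          (((i :: l).map D).prod) ((mulOp k m xδ) g) := by
        rw [List.map_cons, List.prod_cons, Module.End.mul_apply]
      rw [this, hz, LinearMap.zero_apply]
    have hchar := hD i (e g)
    rw [hDi, mul_zero] at hchar
    have := sub_eq_zero.mp hchar.symm
    exact this.symm
  -- e is idempotent
  have hee : e * e = e := by
    apply LinearMap.ext
    intro g
    rw [Module.End.mul_apply]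
    calc e (e g) = e (e g * 1) := by rw [mul_one]
    _ = e g * e 1 := heSym (hesym g) 1
    _ = e g := by rw [he1, mul_one]
  -- e commutes with symmetric multiplications
  have hecomm : ∀ {h : MvPolynomial (Fin (m + 1)) k}, SymPoly h →
      e * mulOp k m h = mulOp k m h * e := by
    intro h hs
    apply LinearMap.ext
    intro f
    rw [Module.End.mul_apply, Module.End.mul_apply, mulOp_apply, mulOp_apply]
    exact heSym hs f
  -- elements of nilHecke commute with symmetric multiplication pointwise
  have hnil : ∀ S ∈ nilHecke k m D, ∀ {h : MvPolynomial (Fin (m + 1)) k}, SymPoly h →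
      ∀ f, S (h * f) = h * S f := by
    intro S hS
    rw [nilHecke] at hS
    induction hS using Algebra.adjoin_induction with
    | mem T hT =>
      intro h hs f
      rcases hT with ⟨j, rfl⟩ | ⟨i, rfl⟩
      · rw [mulOp_apply, mulOp_apply]; ring
      · exact D_mul_invariant D hD i (hs i) f
    | algebraMap r =>
      intro h hs f
      rw [Module.algebraMap_end_apply, Module.algebraMap_end_apply, mul_smul_comm]
    | add S T hS hT ihS ihT =>
      intro h hs f
      rw [LinearMap.add_apply, LinearMap.add_apply, ihS hs f, ihT hs f, mul_add]
    | mul S T hS hT ihS ihT =>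
      intro h hs f
      rw [Module.End.mul_apply, Module.End.mul_apply, ihT hs f, ihS hs (T f)]
  -- the map φ
  refine ⟨{ toFun := fun p => mulOp k m (↑p) * e,
            map_add' := ?_, map_smul' := ?_ }, ?_, ?_, ?_, ?_⟩
  · intro p q
    show mulOp k m (↑(p + q)) * e = mulOp k m ↑p * e + mulOp k m ↑q * e
    have : mulOp k m (↑(p + q) : MvPolynomial (Fin (m + 1)) k) =
        mulOp k m ↑p + mulOp k m ↑q := by
      apply LinearMap.ext; intro f
      rw [LinearMap.add_apply, mulOp_apply, mulOp_apply, mulOp_apply]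
      push_cast
      ring
    rw [this, add_mul]
  · intro c p
    show mulOp k m (↑(c • p)) * e = (RingHom.id k) c • (mulOp k m ↑p * e)
    have : mulOp k m (↑(c • p) : MvPolynomial (Fin (m + 1)) k) = c • mulOp k m ↑p := by
      apply LinearMap.ext; intro f
      rw [LinearMap.smul_apply, mulOp_apply, mulOp_apply]
      push_cast
      rw [smul_mul_assoc]
    rw [this, RingHom.id_apply, smul_mul_assoc]
  · -- injective
    intro p q hpq
    have h1 := congrArg (fun T : Module.End k (MvPolynomial (Fin (m + 1)) k) => T 1) hpq
    simp only [LinearMap.coe_mk, AddHom.coe_mk, Module.End.mul_apply, he1, mulOp_apply,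
      mul_one] at h1
    exact Subtype.ext h1
  · -- multiplicative
    intro p q
    show mulOp k m (↑(p * q)) * e = (mulOp k m ↑p * e) * (mulOp k m ↑q * e)
    have hcoe : (↑(p * q) : MvPolynomial (Fin (m + 1)) k) = ↑p * ↑q := rfl
    rw [hcoe, mulOp_mul]
    have hq : SymPoly (↑q : MvPolynomial (Fin (m + 1)) k) :=
      symPoly_of_isSymmetric ((MvPolynomial.mem_symmetricSubalgebra _).mp q.2)
    calc mulOp k m ↑p * mulOp k m ↑q * e
        = mulOp k m ↑p * mulOp k m ↑q * (e * e) := by rw [hee]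
    _ = mulOp k m ↑p * (mulOp k m ↑q * e * e) := by simp only [mul_assoc]
    _ = mulOp k m ↑p * (e * mulOp k m ↑q * e) := by rw [hecomm hq]
    _ = mulOp k m ↑p * e * (mulOp k m ↑q * e) := by simp only [mul_assoc]
  · -- φ 1 = e
    show mulOp k m (↑(1 : ↥(MvPolynomial.symmetricSubalgebra (Fin (m + 1)) k))) * e = e
    have hcoe : (↑(1 : ↥(MvPolynomial.symmetricSubalgebra (Fin (m + 1)) k)) :
        MvPolynomial (Fin (m + 1)) k) = 1 := rfl
    rw [hcoe, mulOp_one, one_mul]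
  · -- range
    ext T
    simp only [Set.mem_range, Set.mem_setOf_eq]
    constructor
    · rintro ⟨p, rfl⟩
      refine ⟨mulOp k m ↑p, mulOp_mem D _, ?_⟩
      show mulOp k m ↑p * e = e * (mulOp k m ↑p) * e
      have hp : SymPoly (↑p : MvPolynomial (Fin (m + 1)) k) :=
        symPoly_of_isSymmetric ((MvPolynomial.mem_symmetricSubalgebra _).mp p.2)
      calc mulOp k m ↑p * e = mulOp k m ↑p * (e * e) := by rw [hee]
      _ = mulOp k m ↑p * e * e := (mul_assoc (mulOp k m ↑p) e e).symm
      _ = e * mulOp k m ↑p * e := by rw [← hecomm hp]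
    · rintro ⟨S, hS, rfl⟩
      set q : MvPolynomial (Fin (m + 1)) k := e (S 1) with hq
      have hqsym : SymPoly q := hesym (S 1)
      refine ⟨⟨q, (MvPolynomial.mem_symmetricSubalgebra _).mpr
        (isSymmetric_of_symPoly hqsym)⟩, ?_⟩
      show mulOp k m q * e = e * S * e
      apply LinearMap.ext
      intro g
      have hg : SymPoly (e g) := hesym g
      rw [Module.End.mul_apply, mulOp_apply]
      rw [Module.End.mul_apply, Module.End.mul_apply]
      calc (q : MvPolynomial (Fin (m + 1)) k) * e g = e g * q := by ring
      _ = e g * e (S 1) := by rw [hq]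
      _ = e (e g * S 1) := (heSym hg (S 1)).symm
      _ = e (S (e g * 1)) := by rw [hnil S hS hg 1]
      _ = e (S (e g)) := by rw [mul_one]
  done

end Main


end Stmt14Aux

/-!
STATEMENT 14.  With `e := ∂_{w₀} ∘ (multiplication by x_1^m x_2^{m-1} ⋯ x_m)` the
idempotent of the nilHecke algebra `H_{m+1}` associated to a fixed reduced word of the
longest element `w₀ ∈ S_{m+1}` (`N = (m+1)m/2` letters), the `k`-algebra `e H_{m+1} e`
(with unit `e`) is isomorphic to the ring of symmetric polynomials
`k[x_1, …, x_{m+1}]^{S_{m+1}}`: there is an injective `k`-linear multiplicative map `φ`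
from the symmetric polynomials to `End_k(k[x])` with `φ 1 = e` whose range is exactly
`e H_{m+1} e`. -/
theorem stmt14 (k : Type) [Field k] (m : ℕ)
    (D : Fin m → Module.End k (MvPolynomial (Fin (m + 1)) k))
    (hD : IsDividedDifferenceFamily k m D)
    (l : List (Fin m))
    (hlen : l.length = (m + 1) * m / 2)
    (hprod : (l.map fun i : Fin m => Equiv.swap i.castSucc i.succ).prod =
      (Fin.revPerm : Equiv.Perm (Fin (m + 1)))) :
    let e := (l.map D).prod * mulOp k m (∏ j : Fin (m + 1), X j ^ (m - (j : ℕ)))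
    ∃ φ : ↥(MvPolynomial.symmetricSubalgebra (Fin (m + 1)) k) →ₗ[k]
        Module.End k (MvPolynomial (Fin (m + 1)) k),
      Function.Injective φ ∧
      (∀ p q, φ (p * q) = φ p * φ q) ∧
      φ 1 = e ∧
      Set.range φ = {T | ∃ S ∈ nilHecke k m D, T = e * S * e} := by
  intro e
  exact Stmt14Aux.main D hD l hlen hprod
end

section
/- In U_q^+ = U_q^+(gl(1|2)), for all integers 0 < k < m the identity E_2^{(k)} E_1 E_2^{(m−k)} = [m−1 choose k] E_1 E_2^{(m)} + [m−1 choose k−1] E_2^{(m)} E_1 holds, where the coefficients are quantum binomials. -/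
/-- The ground field `ℚ(q)` of rational functions. -/
abbrev Fq : Type := RatFunc ℚ

/-- The variable `q ∈ ℚ(q)`. -/
noncomputable def qq : Fq := RatFunc.X

/-- The defining relations of `U_q^+(gl(1|2))`:
`E₁² = 0` and `(q + q⁻¹) E₂E₁E₂ = E₁E₂² + E₂²E₁`, where `E₁ = ι 0`, `E₂ = ι 1`. -/
inductive UqRel : FreeAlgebra Fq (Fin 2) → FreeAlgebra Fq (Fin 2) → Prop
  | oneSq : UqRel (FreeAlgebra.ι Fq 0 * FreeAlgebra.ι Fq 0) 0
  | serre : UqRel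
      ((qq + qq⁻¹) • (FreeAlgebra.ι Fq 1 * FreeAlgebra.ι Fq 0 * FreeAlgebra.ι Fq 1))
      (FreeAlgebra.ι Fq 0 * FreeAlgebra.ι Fq 1 * FreeAlgebra.ι Fq 1 +
        FreeAlgebra.ι Fq 1 * FreeAlgebra.ι Fq 1 * FreeAlgebra.ι Fq 0)

/-- The algebra `U_q^+ = U_q^+(gl(1|2))`. -/
abbrev Uq : Type := RingQuot UqRel

/-- The generator `E₁` (odd). -/
noncomputable def E₁ : Uq := RingQuot.mkAlgHom Fq UqRel (FreeAlgebra.ι Fq 0)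

/-- The generator `E₂` (even). -/
noncomputable def E₂ : Uq := RingQuot.mkAlgHom Fq UqRel (FreeAlgebra.ι Fq 1)

/-- The quantum integer `[j] = (q^j - q^{-j})/(q - q^{-1})`. -/
noncomputable def qInt (j : ℕ) : Fq := (qq ^ j - qq⁻¹ ^ j) / (qq - qq⁻¹)

/-- The quantum factorial `[j]! = [1][2]⋯[j]`. -/
noncomputable def qFact (j : ℕ) : Fq := ∏ t ∈ Finset.range j, qInt (t + 1)

/-- The quantum binomial `[a choose b] = [a]!/([b]![a-b]!)`. -/
noncomputable def qBinom (a b : ℕ) : Fq := qFact a / (qFact b * qFact (a - b))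

/-- The quantum divided power `E₂^{(j)} = E₂^j / [j]!`. -/
noncomputable def E₂pow (j : ℕ) : Uq := (qFact j)⁻¹ • E₂ ^ j

/-! ### Auxiliary scalar lemmas -/

lemma hqX : qq ≠ 0 := RatFunc.X_ne_zero

lemma qq_pow_ne_one {m : ℕ} (hm : m ≠ 0) : qq ^ m ≠ 1 := by
  intro h
  have hX : (Polynomial.X : Polynomial ℚ) ^ m = 1 := by
    apply IsFractionRing.injective (Polynomial ℚ) (RatFunc ℚ)
    simpa [qq, RatFunc.algebraMap_X, map_pow] using h
  have := congrArg (Polynomial.eval 0) hX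
  simp [zero_pow hm] at this

lemma hd : qq - qq⁻¹ ≠ 0 := by
  intro h
  rw [sub_eq_zero] at h
  have h2 : qq ^ 2 = 1 := by
    rw [pow_two]; nth_rewrite 1 [h]; exact inv_mul_cancel₀ hqX
  exact qq_pow_ne_one (by norm_num) h2

lemma qInt_ne_zero {m : ℕ} (hm : m ≠ 0) : qInt m ≠ 0 := by
  apply div_ne_zero _ hd
  intro h
  rw [sub_eq_zero] at h
  have h2 : qq ^ (m + m) = 1 := by
    rw [pow_add]; nth_rewrite 1 [h]
    rw [← mul_pow, inv_mul_cancel₀ hqX, one_pow]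
  exact qq_pow_ne_one (by omega) h2

lemma qFact_ne_zero (m : ℕ) : qFact m ≠ 0 := by
  unfold qFact
  exact Finset.prod_ne_zero_iff.mpr fun t _ => qInt_ne_zero (by omega)

lemma qFact_succ (m : ℕ) : qFact (m + 1) = qFact m * qInt (m + 1) :=
  Finset.prod_range_succ _ _

lemma qInt_one : qInt 1 = 1 := by
  unfold qInt; rw [pow_one, pow_one, div_self hd]

lemma qInt_zero : qInt 0 = 0 := by simp [qInt]

lemma qInt_two : qInt 2 = qq + qq⁻¹ := by
  unfold qInt
  rw [div_eq_iff hd]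
  ring_nf

lemma qIdent (a b : ℕ) :
    qInt (a + b) * qInt (b + 1) = qInt (a + b + 1) * qInt b + qInt a := by
  unfold qInt
  have huv : qq * qq⁻¹ = 1 := mul_inv_cancel₀ hqX
  have hBD : qq ^ b * qq⁻¹ ^ b = 1 := by rw [← mul_pow, huv, one_pow]
  have key : (qq^a*qq^b - qq⁻¹^a*qq⁻¹^b) * (qq^b*qq - qq⁻¹^b*qq⁻¹)
      = (qq^a*qq^b*qq - qq⁻¹^a*qq⁻¹^b*qq⁻¹) * (qq^b - qq⁻¹^b)
        + (qq^a - qq⁻¹^a) * (qq - qq⁻¹) := by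
    linear_combination (qq - qq⁻¹) * (qq^a - qq⁻¹^a) * hBD
  rw [div_mul_div_comm, div_mul_div_comm, div_add_div _ _ (mul_ne_zero hd hd) hd,
      div_eq_div_iff (mul_ne_zero hd hd) (mul_ne_zero (mul_ne_zero hd hd) hd)]
  simp only [pow_add, pow_succ]
  linear_combination (qq-qq⁻¹) * (qq - qq⁻¹) * (qq-qq⁻¹) * key

/-! ### Auxiliary algebra lemmas (generic over a field, since the `module` tactic
struggles with `RatFunc ℚ` instance synthesis) -/

section Generic

variable {K : Type} [Field K] {A : Type} [Ring A] [Algebra K A]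

/-- generic monomial `e₂^a e₁ e₂^b`. -/
def MG (e₁ e₂ : A) (a b : ℕ) : A := e₂^a * (e₁ * e₂^b)

variable (e₁ e₂ : A) (N : ℕ → K)

lemma MGr (a b : ℕ) : MG e₁ e₂ a b * e₂ = MG e₁ e₂ a (b + 1) := by
  simp [MG, mul_assoc, pow_succ]

lemma MGl (a b : ℕ) : e₂ * MG e₁ e₂ a b = MG e₁ e₂ (a + 1) b := by
  simp [MG, ← mul_assoc, ← pow_succ']

lemma smul_cancelK {c : K} (hc : c ≠ 0) {x y : A} (h : c • x = c • y) : x = y := by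
  have h2 := congrArg (c⁻¹ • ·) h
  simpa [smul_smul, inv_mul_cancel₀ hc] using h2

variable (hN0 : N 0 = 0) (hN1 : N 1 = 1)
  (hNz : ∀ m : ℕ, m ≠ 0 → N m ≠ 0)
  (hident : ∀ a b : ℕ, N (a + b) * N (b + 1) = N (a + b + 1) * N b + N a)
  (hrel : N 2 • MG e₁ e₂ 1 1 = MG e₁ e₂ 0 2 + MG e₁ e₂ 2 0)

include hN0 hN1 hNz hident hrel in
lemma genLR (n : ℕ) :
    (N (n+1) • MG e₁ e₂ 1 n = N n • MG e₁ e₂ 0 (n+1) + MG e₁ e₂ (n+1) 0) ∧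
    (N (n+1) • MG e₁ e₂ n 1 = MG e₁ e₂ 0 (n+1) + N n • MG e₁ e₂ (n+1) 0) := by
  induction n using Nat.twoStepInduction with
  | zero => simp [hN0, hN1, MG]
  | one => exact ⟨by simpa [hN1] using hrel, by simpa [hN1] using hrel⟩
  | more n _ ih2 =>
    obtain ⟨hL, hR⟩ := ih2
    have eqA : N (n+2) • MG e₁ e₂ 1 (n+2)
        = N (n+1) • MG e₁ e₂ 0 (n+3) + MG e₁ e₂ (n+2) 1 := by
      have h := congrArg (· * e₂) hL
      simp only [smul_mul_assoc, add_mul, MGr] at h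
      rw [show n+1+1 = n+2 by omega, show n+2+1 = n+3 by omega] at h
      exact h
    have eqB : N (n+2) • MG e₁ e₂ (n+2) 1
        = MG e₁ e₂ 1 (n+2) + N (n+1) • MG e₁ e₂ (n+3) 0 := by
      have h := congrArg (e₂ * ·) hR
      simp only [mul_smul_comm, mul_add, MGl] at h
      rw [show n+1+1 = n+2 by omega, show n+2+1 = n+3 by omega] at h
      exact h
    have hs : N (n+2) * N (n+2) = N (n+3) * N (n+1) + 1 := by
      have h := hident 1 (n+1)
      rw [show 1+(n+1)+1 = n+3 by omega, show 1+(n+1) = n+2 by omega, hN1] at h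
      exact h
    have hb : N (n+1) ≠ 0 := hNz _ (by omega)
    constructor
    · apply smul_cancelK hb
      linear_combination (norm := module) N (n+2) • eqA + eqB - hs • (MG e₁ e₂ 1 (n+2))
    · apply smul_cancelK hb
      linear_combination (norm := module) N (n+2) • eqB + eqA - hs • (MG e₁ e₂ (n+2) 1)

include hN0 hN1 hNz hident hrel in
lemma genP : ∀ j n, j ≤ n → N n • MG e₁ e₂ j (n-j)
    = N (n-j) • MG e₁ e₂ 0 n + N j • MG e₁ e₂ n 0 := by
  intro j
  induction j with
  | zero => intro n _; simp [hN0]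
  | succ j ih =>
    intro n hjn
    rcases eq_or_lt_of_le hjn with heq | hlt
    · subst heq
      simp [hN0]
    · obtain ⟨m, rfl⟩ : ∃ m, n = j + 2 + m := ⟨n - (j+2), by omega⟩
      have h1 := ih (j+1+m) (by omega)
      rw [show j+1+m-j = m+1 by omega] at h1
      have h2 : N (j+1+m) • MG e₁ e₂ (j+1) (m+1)
          = N (m+1) • MG e₁ e₂ 1 (j+1+m) + N j • MG e₁ e₂ (j+2+m) 0 := by
        have h := congrArg (e₂ * ·) h1
        simp only [mul_smul_comm, mul_add, MGl] at h
        rw [show 0+1 = 1 by omega, show j+1+m+1 = j+2+m by omega] at h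
        exact h
      have hL := (genLR e₁ e₂ N hN0 hN1 hNz hident hrel (j+1+m)).1
      rw [show j+1+m+1 = j+2+m by omega] at hL
      have hs : N (j+1+m) * N (j+1) = N (j+2+m) * N j + N (m+1) := by
        have h := hident (m+1) j
        rw [show m+1+j+1 = j+2+m by omega, show m+1+j = j+1+m by omega] at h
        exact h
      rw [show j+2+m-(j+1) = m+1 by omega]
      apply smul_cancelK (hNz (j+1+m) (by omega))
      linear_combination (norm := module) N (j+2+m) • h2 + N (m+1) • hL
        - hs • (MG e₁ e₂ (j+2+m) 0)

end Generic

lemma rel2 : (qq + qq⁻¹) • (E₂ * E₁ * E₂) = E₁ * E₂ * E₂ + E₂ * E₂ * E₁ := by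
  have h := RingQuot.mkAlgHom_rel Fq UqRel.serre
  simpa [E₁, E₂, map_mul, map_add, map_smul] using h

lemma rel2' : qInt 2 • MG E₁ E₂ 1 1 = MG E₁ E₂ 0 2 + MG E₁ E₂ 2 0 := by
  have h := rel2
  rw [← qInt_two] at h
  simp only [MG, pow_one, pow_zero, pow_two, one_mul, mul_one, mul_assoc] at h ⊢
  exact h

lemma Plem : ∀ j n, j ≤ n → qInt n • MG E₁ E₂ j (n-j)
    = qInt (n-j) • MG E₁ E₂ 0 n + qInt j • MG E₁ E₂ n 0 :=
  genP E₁ E₂ qInt qInt_zero qInt_one (fun _ h => qInt_ne_zero h) qIdent rel2'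

theorem stmt15 (n j : ℕ) (h0 : 0 < j) (hn : j < n) :
    E₂pow j * E₁ * E₂pow (n - j) =
      qBinom (n - 1) j • (E₁ * E₂pow n) + qBinom (n - 1) (j - 1) • (E₂pow n * E₁) := by
  obtain ⟨k, rfl⟩ : ∃ k, j = k + 1 := ⟨j - 1, by omega⟩
  obtain ⟨l, rfl⟩ : ∃ l, n = k + l + 2 := ⟨n - k - 2, by omega⟩
  have hP := Plem (k+1) (k+l+2) (by omega)
  rw [show k+l+2-(k+1) = l+1 by omega] at hP
  have hNZ : qInt (k+l+2) ≠ 0 := qInt_ne_zero (by omega)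
  have key : MG E₁ E₂ (k+1) (l+1) = (qInt (k+l+2))⁻¹ •
      (qInt (l+1) • MG E₁ E₂ 0 (k+l+2) + qInt (k+1) • MG E₁ E₂ (k+l+2) 0) := by
    rw [← hP, inv_smul_smul₀ hNZ]
  rw [show k+l+2-(k+1) = l+1 by omega, show k+l+2-1 = k+l+1 by omega,
      show k+1-1 = k by omega]
  unfold E₂pow qBinom
  rw [show k+l+1-(k+1) = l by omega, show k+l+1-k = l+1 by omega]
  have lhs_eq : (qFact (k+1))⁻¹ • E₂^(k+1) * E₁ * ((qFact (l+1))⁻¹ • E₂^(l+1))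
      = ((qFact (k+1))⁻¹ * (qFact (l+1))⁻¹) • MG E₁ E₂ (k+1) (l+1) := by
    simp only [MG, smul_mul_assoc, mul_smul_comm, smul_smul, mul_assoc]
    rw [mul_comm ((qFact (l+1))⁻¹) ((qFact (k+1))⁻¹)]
  have hA : E₁ * ((qFact (k+l+2))⁻¹ • E₂^(k+l+2))
      = (qFact (k+l+2))⁻¹ • MG E₁ E₂ 0 (k+l+2) := by
    simp [MG, mul_smul_comm]
  have hB : ((qFact (k+l+2))⁻¹ • E₂^(k+l+2)) * E₁
      = (qFact (k+l+2))⁻¹ • MG E₁ E₂ (k+l+2) 0 := by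
    simp [MG, smul_mul_assoc]
  rw [lhs_eq, hA, hB, key, smul_add, smul_smul, smul_smul, smul_add, smul_smul, smul_smul,
      smul_smul, smul_smul]
  have e1 : qFact (k+1) = qFact k * qInt (k+1) := qFact_succ k
  have e2 : qFact (l+1) = qFact l * qInt (l+1) := qFact_succ l
  have e3 : qFact (k+l+2) = qFact (k+l+1) * qInt (k+l+2) := qFact_succ (k+l+1)
  have hs1 : (qFact (k+1))⁻¹ * (qFact (l+1))⁻¹ * ((qInt (k+l+2))⁻¹ * qInt (l+1))
      = qFact (k+l+1) / (qFact (k+1) * qFact l) * (qFact (k+l+2))⁻¹ := by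
    rw [e1, e2, e3]
    have h1 := qFact_ne_zero k; have h2 := qFact_ne_zero l
    have h3 := qFact_ne_zero (k+l+1)
    have h4 := qInt_ne_zero (show k+1 ≠ 0 by omega)
    have h5 := qInt_ne_zero (show l+1 ≠ 0 by omega)
    field_simp
  have hs2 : (qFact (k+1))⁻¹ * (qFact (l+1))⁻¹ * ((qInt (k+l+2))⁻¹ * qInt (k+1))
      = qFact (k+l+1) / (qFact k * qFact (l+1)) * (qFact (k+l+2))⁻¹ := by
    rw [e1, e2, e3]
    have h1 := qFact_ne_zero k; have h2 := qFact_ne_zero l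
    have h3 := qFact_ne_zero (k+l+1)
    have h4 := qInt_ne_zero (show k+1 ≠ 0 by omega)
    have h5 := qInt_ne_zero (show l+1 ≠ 0 by omega)
    field_simp
  rw [hs1, hs2]
end
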